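/- arXiv:1209.1461 — 14 statements merged into one kernel-verified Lean document; each statement's English description precedes it below -/
import Mathlib

section
/- Let T be a bounded linear operator on a complex Banach space X. Then the following two conditions are equivalent: (T1) every complete norm ‖·‖₁ on X with respect to which T is bounded is equivalent to the original norm of X; (T2) whenever Y is a complex Banach space, S : Y → Y is a bounded linear operator, and G : X → Y is a (not necessarily continuous) invertible linear operator satisfying G∘T = S∘G, the operator G is bounded. -/
universe u

/-- `N` is a complete norm on the complex vector space `X`: it satisfies the norm axioms
and every `N`-Cauchy sequence `N`-converges. -/
structure IsCompleteNorm {X : Type*} [AddCommGroup X] [Module ℂ X] (N : X → ℝ) : Prop where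
  eq_zero_of_map_eq_zero : ∀ x : X, N x = 0 → x = 0
  map_smul : ∀ (c : ℂ) (x : X), N (c • x) = ‖c‖ * N x
  add_le : ∀ x y : X, N (x + y) ≤ N x + N y
  complete : ∀ u : ℕ → X,
    (∀ ε : ℝ, 0 < ε → ∃ n₀ : ℕ, ∀ m ≥ n₀, ∀ n ≥ n₀, N (u m - u n) < ε) →
    ∃ x : X, Filter.Tendsto (fun n => N (u n - x)) Filter.atTop (nhds 0)

section Aux

variable {X : Type u} [AddCommGroup X] [Module ℂ X] {N : X → ℝ}

lemma IsCompleteNorm.map_zero (hN : IsCompleteNorm N) : N 0 = 0 := by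
  have := hN.map_smul 0 0
  simpa using this

lemma IsCompleteNorm.map_neg (hN : IsCompleteNorm N) (x : X) : N (-x) = N x := by
  have := hN.map_smul (-1) x
  simpa using this

/-- Type synonym for `X` endowed with the norm `N`. -/
def NSp {X : Type u} [AddCommGroup X] [Module ℂ X] (N : X → ℝ) : Type u := X

instance : AddCommGroup (NSp N) := inferInstanceAs (AddCommGroup X)
instance : Module ℂ (NSp N) := inferInstanceAs (Module ℂ X)

/-- The linear equivalence between `X` and the synonym `NSp N`. -/
def NSp.equiv (N : X → ℝ) : X ≃ₗ[ℂ] NSp N := LinearEquiv.refl ℂ X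

@[reducible] noncomputable def nspNormedAddCommGroup (hN : IsCompleteNorm N) :
    NormedAddCommGroup (NSp N) :=
  AddGroupNorm.toNormedAddCommGroup
    { toFun := fun x => N ((NSp.equiv N).symm x)
      map_zero' := hN.map_zero
      add_le' := hN.add_le
      neg' := hN.map_neg
      eq_zero_of_map_eq_zero' := fun x hx => hN.eq_zero_of_map_eq_zero x hx }

lemma nsp_norm_eq (hN : IsCompleteNorm N) (x : X) :
    @norm (NSp N) (nspNormedAddCommGroup hN).toNorm (NSp.equiv N x) = N x := rfl

@[reducible] noncomputable def nspNormedSpace (hN : IsCompleteNorm N) :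
    @NormedSpace ℂ (NSp N) _ (nspNormedAddCommGroup hN).toSeminormedAddCommGroup := by
  letI := nspNormedAddCommGroup hN
  exact { toModule := inferInstanceAs (Module ℂ X), norm_smul_le := fun c x => le_of_eq (hN.map_smul c x) }

lemma nspCompleteSpace (hN : IsCompleteNorm N) :
    @CompleteSpace (NSp N) (nspNormedAddCommGroup hN).toUniformSpace := by
  letI := nspNormedAddCommGroup hN
  apply Metric.complete_of_cauchySeq_tendsto
  intro u hu
  have hc : ∀ ε : ℝ, 0 < ε → ∃ n₀ : ℕ, ∀ m ≥ n₀, ∀ n ≥ n₀,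
      N (((NSp.equiv N).symm (u m)) - ((NSp.equiv N).symm (u n))) < ε := by
    rw [Metric.cauchySeq_iff] at hu
    intro ε hε
    obtain ⟨n₀, h⟩ := hu ε hε
    exact ⟨n₀, fun m hm n hn => by have := h m hm n hn; rw [dist_eq_norm] at this; exact this⟩
  obtain ⟨x, hx⟩ := hN.complete (fun n => (NSp.equiv N).symm (u n)) hc
  refine ⟨NSp.equiv N x, ?_⟩
  rw [tendsto_iff_dist_tendsto_zero]
  convert hx using 2 with n
  exact dist_eq_norm _ _

end Aux

/-- Proposition 1.1: a bounded linear operator `T` on a complex Banach space `X`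
determines the topology of `X` (every complete norm making `T` bounded is equivalent
to the original norm) if and only if every (not necessarily continuous) linear
bijection `G : X → Y` onto a complex Banach space `Y` intertwining `T` with a bounded
operator `S` on `Y` is itself bounded. -/
theorem determinesTopology_iff_intertwiner_bounded
    {X : Type u} [NormedAddCommGroup X] [NormedSpace ℂ X] [CompleteSpace X]
    (T : X →L[ℂ] X) :
    (∀ N : X → ℝ, IsCompleteNorm N → (∃ C : ℝ, ∀ x : X, N (T x) ≤ C * N x) →
      ∃ c C : ℝ, 0 < c ∧ 0 < C ∧ ∀ x : X, c * ‖x‖ ≤ N x ∧ N x ≤ C * ‖x‖) ↔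
    (∀ (Y : Type u) [NormedAddCommGroup Y] [NormedSpace ℂ Y] [CompleteSpace Y]
      (S : Y →L[ℂ] Y) (G : X ≃ₗ[ℂ] Y),
      (∀ x : X, G (T x) = S (G x)) → ∃ C : ℝ, ∀ x : X, ‖G x‖ ≤ C * ‖x‖) := by
  constructor
  · -- (T1) → (T2)
    intro h1 Y _ _ _ S G hGT
    set N : X → ℝ := fun x => ‖G x‖ with hNdef
    have hN : IsCompleteNorm N := by
      constructor
      · intro x hx
        have : G x = 0 := norm_eq_zero.mp hx
        simpa using G.injective (by simpa using this)
      · intro c x; simp [hNdef, map_smul, norm_smul]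
      · intro x y; simp only [hNdef, map_add]; exact norm_add_le _ _
      · intro u hu
        have hc : CauchySeq (fun n => G (u n)) := by
          rw [Metric.cauchySeq_iff]
          intro ε hε
          obtain ⟨n₀, h⟩ := hu ε hε
          refine ⟨n₀, fun m hm n hn => ?_⟩
          have := h m hm n hn
          simpa [hNdef, dist_eq_norm, map_sub] using this
        obtain ⟨y, hy⟩ := cauchySeq_tendsto_of_complete hc
        refine ⟨G.symm y, ?_⟩
        have : Filter.Tendsto (fun n => dist (G (u n)) y) Filter.atTop (nhds 0) :=
          tendsto_iff_dist_tendsto_zero.mp hy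
        convert this using 2 with n
        simp [hNdef, map_sub, dist_eq_norm]
    have hT : ∃ C : ℝ, ∀ x : X, N (T x) ≤ C * N x := by
      refine ⟨‖S‖, fun x => ?_⟩
      simp only [hNdef, hGT]
      exact S.le_opNorm _
    obtain ⟨c, C, _, _, h⟩ := h1 N hN hT
    exact ⟨C, fun x => (h x).2⟩
  · -- (T2) → (T1)
    intro h2 N hN hTbd
    obtain ⟨C₀, hC₀⟩ := hTbd
    letI : NormedAddCommGroup (NSp N) := nspNormedAddCommGroup hN
    letI : NormedSpace ℂ (NSp N) := nspNormedSpace hN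
    haveI : CompleteSpace (NSp N) := nspCompleteSpace hN
    let G : X ≃ₗ[ℂ] NSp N := NSp.equiv N
    let Tl : NSp N →ₗ[ℂ] NSp N :=
      G.toLinearMap.comp (T.toLinearMap.comp G.symm.toLinearMap)
    have hTlb : ∀ x : NSp N, ‖Tl x‖ ≤ C₀ * ‖x‖ := fun x => hC₀ (G.symm x)
    let S : NSp N →L[ℂ] NSp N := LinearMap.mkContinuous Tl C₀ hTlb
    have hint : ∀ x : X, G (T x) = S (G x) := fun x => rfl
    obtain ⟨C₁, hC₁⟩ := h2 (NSp N) S G hint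
    -- `N x ≤ C₁ * ‖x‖`; now use the open mapping theorem for the reverse bound
    have hGcont : Continuous G := by
      apply AddMonoidHomClass.continuous_of_bound G.toLinearMap C₁
      exact hC₁
    let e : X ≃L[ℂ] NSp N := G.toContinuousLinearEquivOfContinuous hGcont
    have hrev : ∀ x : X, ‖x‖ ≤ ‖(e.symm : NSp N →L[ℂ] X)‖ * N x := by
      intro x
      have := (e.symm : NSp N →L[ℂ] X).le_opNorm (G x)
      rw [show (e.symm : NSp N →L[ℂ] X) (G x) = x from e.symm_apply_apply x] at this
      exact this
    set K : ℝ := ‖(e.symm : NSp N →L[ℂ] X)‖ with hK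
    have hKnn : 0 ≤ K := norm_nonneg _
    have hNnn : ∀ x : X, 0 ≤ N x := fun x => norm_nonneg (G x)
    refine ⟨(K + 1)⁻¹, max C₁ 1, by positivity, lt_max_of_lt_right one_pos, fun x => ?_⟩
    constructor
    · rw [inv_mul_le_iff₀ (by positivity)]
      calc ‖x‖ ≤ K * N x := hrev x
        _ ≤ (K + 1) * N x := by nlinarith [hNnn x]
    · calc N x ≤ C₁ * ‖x‖ := hC₁ x
        _ ≤ max C₁ 1 * ‖x‖ := by
            gcongr; exact le_max_left _ _
end

section
/- Let T be a bounded injective linear operator on a complex Banach space X such that (i) the intersection over all n ∈ ℕ of the closures of Tⁿ(X) equals {0}, and (ii) there exists n ∈ ℕ such that the closure of T^{n+1}(X) has finite codimension in the closure of Tⁿ(X). Then T determines the topology of X: every complete norm on X with respect to which T is bounded is equivalent to the original norm of X. -/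
open Filter Metric Topology

namespace DetTop

variable {E F : Type*} [NormedAddCommGroup E] [NormedSpace ℂ E]
  [NormedAddCommGroup F] [NormedSpace ℂ F]


/-- Generic recursion lemma: choose a sequence where each choice may depend on an
accumulated real quantity of the previous choices. -/
lemma seq_rec_aux {α : Type*} (P : ℕ → ℝ → α → Prop) (g : ℕ → α → ℝ)
    (h : ∀ m S, ∃ a, P m S a) :
    ∃ x : ℕ → α, ∀ m, P m (∑ k ∈ Finset.range m, g k (x k)) (x m) := by
  classical
  let f : ℕ → α × ℝ := fun n => Nat.rec ((h 0 0).choose, 0)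
    (fun m p => ((h (m + 1) (p.2 + g m p.1)).choose, p.2 + g m p.1)) n
  have hfs : ∀ m, f (m + 1) =
      ((h (m + 1) ((f m).2 + g m (f m).1)).choose, (f m).2 + g m (f m).1) := fun m => rfl
  have hsum : ∀ m, (f m).2 = ∑ k ∈ Finset.range m, g k ((f k).1) := by
    intro m
    induction m with
    | zero => simp [f]
    | succ m ih => rw [hfs m, Finset.sum_range_succ, ← ih]
  refine ⟨fun m => (f m).1, ?_⟩
  intro m
  cases m with
  | zero => rw [Finset.sum_range_zero]; exact (h 0 0).choose_spec
  | succ m =>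
      have hspec := (h (m + 1) ((f m).2 + g m (f m).1)).choose_spec
      have : (∑ k ∈ Finset.range (m + 1), g k ((f k).1)) = (f m).2 + g m (f m).1 := by
        rw [Finset.sum_range_succ, ← hsum m]
      rw [this]
      show P (m + 1) _ (f (m+1)).1
      rw [hfs m]
      exact hspec



lemma infDist_coe_nonempty (V : Submodule ℂ F) : (V : Set F).Nonempty := ⟨0, V.zero_mem⟩

lemma infDist_add_le (V : Submodule ℂ F) (a b : F) :
    infDist (a + b) (V : Set F) ≤ infDist a V + infDist b V := by
  refine le_of_forall_pos_le_add fun δ hδ => ?_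
  obtain ⟨p, hp, hpd⟩ := (infDist_lt_iff (infDist_coe_nonempty V)).1
    (show infDist a (V : Set F) < infDist a (V : Set F) + δ / 2 by linarith)
  obtain ⟨q, hq, hqd⟩ := (infDist_lt_iff (infDist_coe_nonempty V)).1
    (show infDist b (V : Set F) < infDist b (V : Set F) + δ / 2 by linarith)
  have hmem : p + q ∈ (V : Set F) := V.add_mem hp hq
  have : infDist (a + b) (V : Set F) ≤ dist (a + b) (p + q) :=
    infDist_le_dist_of_mem hmem
  have hdist : dist (a + b) (p + q) ≤ dist a p + dist b q := by
    simp only [dist_eq_norm]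
    calc ‖a + b - (p + q)‖ = ‖(a - p) + (b - q)‖ := by
          congr 1; abel
      _ ≤ ‖a - p‖ + ‖b - q‖ := norm_add_le _ _
  linarith [hpd, hqd, this, hdist]

lemma infDist_neg_eq (V : Submodule ℂ F) (a : F) :
    infDist (-a) (V : Set F) = infDist a V := by
  have key : ∀ x : F, infDist (-x) (V : Set F) ≤ infDist x V := by
    intro x
    refine le_of_forall_pos_le_add fun δ hδ => ?_
    obtain ⟨p, hp, hpd⟩ := (infDist_lt_iff (infDist_coe_nonempty V)).1
      (show infDist x (V : Set F) < infDist x (V : Set F) + δ by linarith)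
    have : infDist (-x) (V : Set F) ≤ dist (-x) (-p) :=
      infDist_le_dist_of_mem (V.neg_mem hp)
    rw [dist_neg_neg] at this
    linarith
  have h2 := key (-a)
  rw [neg_neg] at h2
  exact le_antisymm (key a) h2

lemma infDist_sub_le (V : Submodule ℂ F) (a b : F) :
    infDist a (V : Set F) - infDist b V ≤ infDist (a + b) V := by
  have := infDist_add_le V (a + b) (-b)
  rw [add_neg_cancel_right, infDist_neg_eq] at this
  linarith

lemma le_infDist_smul (V : Submodule ℂ F) (y : F) (c : ℂ) (hc : c ≠ 0) :
    ‖c‖ * infDist y (V : Set F) ≤ infDist (c • y) V := by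
  by_contra hlt
  push_neg at hlt
  obtain ⟨p, hp, hpd⟩ := (infDist_lt_iff (infDist_coe_nonempty V)).1 hlt
  have hmem : c⁻¹ • p ∈ (V : Set F) := V.smul_mem _ hp
  have h1 : infDist y (V : Set F) ≤ dist y (c⁻¹ • p) := infDist_le_dist_of_mem hmem
  have h2 : dist (c • y) p = ‖c‖ * dist y (c⁻¹ • p) := by
    rw [dist_eq_norm, dist_eq_norm, ← norm_smul, smul_sub, smul_inv_smul₀ hc]
  have hc0 : (0 : ℝ) < ‖c‖ := norm_pos_iff.2 hc
  rw [h2] at hpd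
  nlinarith





/-- The separating subspace of the (possibly discontinuous) linear identification `ι : E ≃ F`:
all `y ∈ F` that can be approximated by `ι u` with `u` small in `E`. -/
def sep (ι : E ≃ₗ[ℂ] F) : Submodule ℂ F where
  carrier := {y | ∀ ε : ℝ, 0 < ε → ∃ u : E, ‖u‖ < ε ∧ ‖ι u - y‖ < ε}
  zero_mem' := by
    intro ε hε
    exact ⟨0, by simpa using hε, by simpa using hε⟩
  add_mem' := by
    intro y z hy hz ε hε
    obtain ⟨u, hu1, hu2⟩ := hy (ε / 2) (by linarith)
    obtain ⟨v, hv1, hv2⟩ := hz (ε / 2) (by linarith)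
    refine ⟨u + v, ?_, ?_⟩
    · calc ‖u + v‖ ≤ ‖u‖ + ‖v‖ := norm_add_le _ _
        _ < ε := by linarith
    · have : ι (u + v) - (y + z) = (ι u - y) + (ι v - z) := by
        rw [map_add]; abel
      rw [this]
      calc ‖(ι u - y) + (ι v - z)‖ ≤ ‖ι u - y‖ + ‖ι v - z‖ := norm_add_le _ _
        _ < ε := by linarith
  smul_mem' := by
    intro c y hy ε hε
    rcases eq_or_ne c 0 with rfl | hc
    · exact ⟨0, by simpa using hε, by simpa using hε⟩
    · have hc0 : (0 : ℝ) < ‖c‖ := norm_pos_iff.2 hc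
      have hεc : 0 < min ε (ε / ‖c‖) := lt_min hε (by positivity)
      obtain ⟨u, hu1, hu2⟩ := hy _ hεc
      refine ⟨c • u, ?_, ?_⟩
      · rw [norm_smul]
        calc ‖c‖ * ‖u‖ < ‖c‖ * (ε / ‖c‖) := by
              have := lt_of_lt_of_le hu1 (min_le_right _ _)
              exact (mul_lt_mul_iff_right₀ hc0).2 this
          _ = ε := by
              rw [← mul_div_assoc, mul_comm, mul_div_assoc, div_self (ne_of_gt hc0), mul_one]
      · have : ι (c • u) - c • y = c • (ι u - y) := by
          rw [map_smul, smul_sub]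
        rw [this, norm_smul]
        calc ‖c‖ * ‖ι u - y‖ < ‖c‖ * (ε / ‖c‖) := by
              have := lt_of_lt_of_le hu2 (min_le_right _ _)
              exact (mul_lt_mul_iff_right₀ hc0).2 this
          _ = ε := by
              rw [← mul_div_assoc, mul_comm, mul_div_assoc, div_self (ne_of_gt hc0), mul_one]

lemma mem_sep_iff (ι : E ≃ₗ[ℂ] F) (y : F) :
    y ∈ sep ι ↔ ∀ ε : ℝ, 0 < ε → ∃ u : E, ‖u‖ < ε ∧ ‖ι u - y‖ < ε := Iff.rfl

lemma sep_isClosed (ι : E ≃ₗ[ℂ] F) : IsClosed ((sep ι : Submodule ℂ F) : Set F) := by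
  refine isClosed_of_closure_subset ?_
  intro y hy
  rw [SetLike.mem_coe, mem_sep_iff]
  intro ε hε
  obtain ⟨b, hbmem, hbd⟩ := Metric.mem_closure_iff.1 hy (ε / 2) (half_pos hε)
  rw [SetLike.mem_coe, mem_sep_iff] at hbmem
  obtain ⟨u, hu1, hu2⟩ := hbmem (ε / 2) (half_pos hε)
  refine ⟨u, by linarith, ?_⟩
  calc ‖ι u - y‖ = ‖(ι u - b) + (b - y)‖ := by congr 1; abel
    _ ≤ ‖ι u - b‖ + ‖b - y‖ := norm_add_le _ _
    _ < ε / 2 + ε / 2 := by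
        rw [dist_eq_norm] at hbd
        have : ‖b - y‖ = ‖y - b‖ := norm_sub_rev _ _
        rw [this]
        exact add_lt_add hu2 hbd
    _ = ε := by ring



lemma sep_invariant (ι : E ≃ₗ[ℂ] F) (TE : E →L[ℂ] E) (TF : F →L[ℂ] F)
    (hcomm : ∀ u : E, ι (TE u) = TF (ι u)) {y : F} (hy : y ∈ sep ι) : TF y ∈ sep ι := by
  rw [mem_sep_iff]
  intro ε hε
  set D : ℝ := max ‖TE‖ ‖TF‖ + 1 with hD
  have hD1 : (1 : ℝ) ≤ D := by
    have : (0:ℝ) ≤ max ‖TE‖ ‖TF‖ := le_max_iff.2 (Or.inl (norm_nonneg _))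
    linarith
  have hD0 : (0 : ℝ) < D := by linarith
  have hδ : 0 < ε / D := by positivity
  obtain ⟨u, hu1, hu2⟩ := (mem_sep_iff ι y).1 hy _ hδ
  refine ⟨TE u, ?_, ?_⟩
  · calc ‖TE u‖ ≤ ‖TE‖ * ‖u‖ := TE.le_opNorm u
      _ ≤ (D - 1) * ‖u‖ := by
          have : ‖TE‖ ≤ D - 1 := by simp [hD]
          exact mul_le_mul_of_nonneg_right this (norm_nonneg _)
      _ < D * (ε / D) := by
          have h1 : (D - 1) * ‖u‖ ≤ (D-1) * (ε / D) := by
            exact mul_le_mul_of_nonneg_left hu1.le (by linarith)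
          have h2 : (D - 1) * (ε / D) < D * (ε / D) := by
            have := mul_lt_mul_of_pos_right (show D - 1 < D by linarith) hδ
            exact this
          linarith
      _ = ε := by field_simp
  · have : ι (TE u) - TF y = TF (ι u - y) := by rw [map_sub, hcomm]
    rw [this]
    calc ‖TF (ι u - y)‖ ≤ ‖TF‖ * ‖ι u - y‖ := TF.le_opNorm _
      _ ≤ (D - 1) * ‖ι u - y‖ := by
          have : ‖TF‖ ≤ D - 1 := by simp [hD]
          exact mul_le_mul_of_nonneg_right this (norm_nonneg _)
      _ < D * (ε / D) := by
          have h1 : (D - 1) * ‖ι u - y‖ ≤ (D-1) * (ε / D) :=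
            mul_le_mul_of_nonneg_left hu2.le (by linarith)
          have h2 : (D - 1) * (ε / D) < D * (ε / D) :=
            mul_lt_mul_of_pos_right (show D - 1 < D by linarith) hδ
          linarith
      _ = ε := by field_simp



variable [CompleteSpace E] [CompleteSpace F]

lemma exists_M0 (ι : E ≃ₗ[ℂ] F) :
    ∃ M₀ : ℝ, 1 ≤ M₀ ∧ ∀ ξ : E, infDist (ι ξ) ((sep ι : Submodule ℂ F) : Set F) ≤ M₀ * ‖ξ‖ := by
  haveI hcl : IsClosed ((sep ι : Submodule ℂ F) : Set F) := sep_isClosed ι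
  set g : E →ₗ[ℂ] F ⧸ (sep ι) := (sep ι).mkQ.comp (ι : E →ₗ[ℂ] F) with hg
  have hgapp : ∀ v : E, g v = Submodule.Quotient.mk (ι v) := fun v => rfl
  have hgraph : ∀ (u : ℕ → E) (x : E) (y : F ⧸ (sep ι)), Tendsto u atTop (𝓝 x) →
      Tendsto (g ∘ u) atTop (𝓝 y) → y = g x := by
    intro u x y hux hgy
    have hη : Tendsto (fun k => u k - x) atTop (𝓝 0) := by
      simpa using hux.sub (tendsto_const_nhds (x := x))
    have hgη : Tendsto (fun k => g (u k - x)) atTop (𝓝 (y - g x)) := by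
      have : (fun k => g (u k - x)) = fun k => g (u k) - g x := by
        funext k; rw [map_sub]
      rw [this]
      exact hgy.sub (tendsto_const_nhds (x := g x))
    obtain ⟨z, hz⟩ := Submodule.Quotient.mk_surjective (sep ι) (y - g x)
    have hzsep : z ∈ sep ι := by
      rw [mem_sep_iff]
      intro ε hε
      have h4 : (0:ℝ) < ε / 4 := by linarith
      obtain ⟨k₁, hk₁⟩ := (Metric.tendsto_atTop.1 hη) (ε / 2) (by linarith)
      obtain ⟨k₂, hk₂⟩ := (Metric.tendsto_atTop.1 hgη) (ε / 4) h4
      set k := max k₁ k₂ with hk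
      have hηk : ‖u k - x‖ < ε / 2 := by
        have := hk₁ k (le_max_left _ _)
        rwa [dist_zero_right] at this
      have hgk : ‖Submodule.Quotient.mk (p := sep ι) (ι (u k - x) - z)‖ < ε / 4 := by
        have := hk₂ k (le_max_right _ _)
        rw [dist_eq_norm] at this
        rw [← hz] at this
        have heq : g (u k - x) - Submodule.Quotient.mk z
            = Submodule.Quotient.mk (ι (u k - x) - z) := by
          rw [hgapp, ← Submodule.Quotient.mk_sub]
        rwa [heq] at this
      obtain ⟨m, hm, hmlt⟩ := Submodule.Quotient.norm_mk_lt
        (Submodule.Quotient.mk (p := sep ι) (ι (u k - x) - z)) h4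
      have hmnorm : ‖m‖ < ε / 2 := by linarith
      have hs : ι (u k - x) - z - m ∈ sep ι :=
        (Submodule.Quotient.eq (sep ι)).1 hm.symm
      obtain ⟨u', hu'1, hu'2⟩ := (mem_sep_iff ι _).1 hs (ε / 2) (by linarith)
      refine ⟨u k - x - u', ?_, ?_⟩
      · calc ‖u k - x - u'‖ ≤ ‖u k - x‖ + ‖u'‖ := norm_sub_le _ _
          _ < ε := by linarith
      · have heq2 : ι (u k - x - u') - z
            = m - (ι u' - (ι (u k - x) - z - m)) := by
          rw [map_sub]; abel
        rw [heq2]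
        calc ‖m - (ι u' - (ι (u k - x) - z - m))‖
            ≤ ‖m‖ + ‖ι u' - (ι (u k - x) - z - m)‖ := norm_sub_le _ _
          _ < ε := by linarith
    have h0 : y - g x = 0 := by
      rw [← hz, Submodule.Quotient.mk_eq_zero]
      exact hzsep
    rwa [sub_eq_zero] at h0
  have hgc : Continuous g := g.continuous_of_seq_closed_graph hgraph
  set gc : E →L[ℂ] F ⧸ (sep ι) := ⟨g, hgc⟩ with hgc'
  refine ⟨‖gc‖ + 1, by linarith [norm_nonneg gc], ?_⟩
  intro ξ
  refine le_of_forall_pos_le_add fun δ hδ => ?_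
  obtain ⟨m, hm, hmlt⟩ := Submodule.Quotient.norm_mk_lt
    (Submodule.Quotient.mk (p := sep ι) (ι ξ)) hδ
  have hs : ι ξ - m ∈ sep ι := (Submodule.Quotient.eq (sep ι)).1 hm.symm
  have h1 : infDist (ι ξ) ((sep ι : Submodule ℂ F) : Set F) ≤ dist (ι ξ) (ι ξ - m) :=
    infDist_le_dist_of_mem hs
  have h2 : dist (ι ξ) (ι ξ - m) = ‖m‖ := by
    rw [dist_eq_norm]
    congr 1
    abel
  have h3 : ‖Submodule.Quotient.mk (p := sep ι) (ι ξ)‖ ≤ ‖gc‖ * ‖ξ‖ := gc.le_opNorm ξ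
  have h4 : ‖gc‖ * ‖ξ‖ ≤ (‖gc‖ + 1) * ‖ξ‖ :=
    mul_le_mul_of_nonneg_right (by linarith) (norm_nonneg _)
  rw [h2] at h1
  linarith



lemma sep_eq_bot (ι : E ≃ₗ[ℂ] F) (TE : E →L[ℂ] E) (TF : F →L[ℂ] F)
    (hcomm : ∀ u : E, ι (TE u) = TF (ι u))
    (hinj : Function.Injective TF)
    (hcap : ∀ y : F, (∀ n : ℕ, y ∈ closure (Set.range (fun z : F => (TF ^ n) z))) → y = 0) :
    sep ι = ⊥ := by
  classical
  -- the chain of closed subspaces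
  set G : ℕ → Submodule ℂ F := fun n => (Submodule.map ((TF ^ n : F →L[ℂ] F) : F →ₗ[ℂ] F) (sep ι)).topologicalClosure
    with hGdef
  have hGclosed : ∀ n, IsClosed ((G n : Submodule ℂ F) : Set F) := fun n =>
    Submodule.isClosed_topologicalClosure _
  have hpow_succ' : ∀ (n : ℕ) (z : F), (TF ^ (n + 1)) z = TF ((TF ^ n) z) := by
    intro n z
    rw [pow_succ']
    exact ContinuousLinearMap.mul_apply _ _ _
  have hpow_succ : ∀ (n : ℕ) (z : F), (TF ^ (n + 1)) z = (TF ^ n) (TF z) := by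
    intro n z
    rw [pow_succ]
    exact ContinuousLinearMap.mul_apply _ _ _
  -- operator norm bounds
  set A : ℝ := ‖TF‖ + 1 with hA
  have hA1 : (1 : ℝ) ≤ A := by have := norm_nonneg TF; linarith
  have hA0 : (0 : ℝ) < A := by linarith
  have hApow : ∀ (n : ℕ) (z : F), ‖(TF ^ n) z‖ ≤ A ^ n * ‖z‖ := by
    intro n
    induction n with
    | zero => intro z; simp
    | succ n ih =>
        intro z
        rw [hpow_succ n z]
        calc ‖(TF ^ n) (TF z)‖ ≤ A ^ n * ‖TF z‖ := ih (TF z)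
          _ ≤ A ^ n * (A * ‖z‖) := by
              have h1 : ‖TF z‖ ≤ A * ‖z‖ := by
                calc ‖TF z‖ ≤ ‖TF‖ * ‖z‖ := TF.le_opNorm z
                  _ ≤ A * ‖z‖ := mul_le_mul_of_nonneg_right (by linarith) (norm_nonneg _)
              exact mul_le_mul_of_nonneg_left h1 (by positivity)
          _ = A ^ (n + 1) * ‖z‖ := by ring
  set B : ℝ := ‖TE‖ + 1 with hB
  have hB1 : (1 : ℝ) ≤ B := by have := norm_nonneg TE; linarith
  have hB0 : (0 : ℝ) < B := by linarith
  have hpowE_succ : ∀ (n : ℕ) (z : E), (TE ^ (n + 1)) z = (TE ^ n) (TE z) := by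
    intro n z
    rw [pow_succ]
    exact ContinuousLinearMap.mul_apply _ _ _
  have hBpow : ∀ (n : ℕ) (z : E), ‖(TE ^ n) z‖ ≤ B ^ n * ‖z‖ := by
    intro n
    induction n with
    | zero => intro z; simp
    | succ n ih =>
        intro z
        rw [hpowE_succ n z]
        calc ‖(TE ^ n) (TE z)‖ ≤ B ^ n * ‖TE z‖ := ih (TE z)
          _ ≤ B ^ n * (B * ‖z‖) := by
              have h1 : ‖TE z‖ ≤ B * ‖z‖ := by
                calc ‖TE z‖ ≤ ‖TE‖ * ‖z‖ := TE.le_opNorm z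
                  _ ≤ B * ‖z‖ := mul_le_mul_of_nonneg_right (by linarith) (norm_nonneg _)
              exact mul_le_mul_of_nonneg_left h1 (by positivity)
          _ = B ^ (n + 1) * ‖z‖ := by ring
  -- commutation of iterates
  have hcommn : ∀ (n : ℕ) (u : E), ι ((TE ^ n) u) = (TF ^ n) (ι u) := by
    intro n
    induction n with
    | zero => intro u; simp
    | succ n ih =>
        intro u
        rw [hpowE_succ n u, hpow_succ n (ι u), ih (TE u), hcomm u]
  -- monotonicity of G
  have hTFsep : ∀ {y : F}, y ∈ sep ι → TF y ∈ sep ι := fun hy =>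
    sep_invariant ι TE TF hcomm hy
  have hGmono : ∀ n, G (n + 1) ≤ G n := by
    intro n
    apply Submodule.topologicalClosure_mono
    intro y hy
    obtain ⟨s, hs, rfl⟩ := Submodule.mem_map.1 hy
    rw [ContinuousLinearMap.coe_coe, hpow_succ n s]
    exact Submodule.mem_map.2 ⟨TF s, hTFsep hs, rfl⟩
  have hGle : ∀ m n, m ≤ n → G n ≤ G m := by
    intro m n hmn
    induction hmn with
    | refl => exact le_rfl
    | step h ih => exact le_trans (hGmono _) ih
  -- G (n+1) is the closure of the image of G n
  have hGsucc : ∀ n, G (n + 1) = (Submodule.map (TF : F →ₗ[ℂ] F) (G n)).topologicalClosure := by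
    intro n
    have hmapsucc : Submodule.map ((TF ^ (n + 1) : F →L[ℂ] F) : F →ₗ[ℂ] F) (sep ι)
        = Submodule.map (TF : F →ₗ[ℂ] F) (Submodule.map ((TF ^ n : F →L[ℂ] F) : F →ₗ[ℂ] F) (sep ι)) := by
      ext y
      simp only [Submodule.mem_map]
      constructor
      · rintro ⟨s, hs, rfl⟩
        exact ⟨(TF ^ n) s, ⟨s, hs, rfl⟩, (hpow_succ' n s).symm⟩
      · rintro ⟨t, ⟨s, hs, rfl⟩, rfl⟩
        exact ⟨s, hs, hpow_succ' n s⟩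
    apply le_antisymm
    · apply Submodule.topologicalClosure_minimal
      · rw [hmapsucc]
        calc Submodule.map (TF : F →ₗ[ℂ] F) (Submodule.map ((TF ^ n : F →L[ℂ] F) : F →ₗ[ℂ] F) (sep ι))
            ≤ Submodule.map (TF : F →ₗ[ℂ] F) (G n) := Submodule.map_mono (Submodule.le_topologicalClosure _)
          _ ≤ (Submodule.map (TF : F →ₗ[ℂ] F) (G n)).topologicalClosure := Submodule.le_topologicalClosure _
      · exact Submodule.isClosed_topologicalClosure _
    · apply Submodule.topologicalClosure_minimal
      · calc Submodule.map (TF : F →ₗ[ℂ] F) (G n)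
            ≤ (Submodule.map (TF : F →ₗ[ℂ] F) (Submodule.map ((TF ^ n : F →L[ℂ] F) : F →ₗ[ℂ] F) (sep ι))).topologicalClosure :=
              Submodule.topologicalClosure_map TF _
          _ = G (n + 1) := by rw [← hmapsucc]
      · exact Submodule.isClosed_topologicalClosure _
  -- main constants
  obtain ⟨M₀, hM₀1, hM₀⟩ := exists_M0 ι
  have hM₀0 : (0:ℝ) < M₀ := by linarith
  set εs : ℕ → ℝ := fun m => ((4*A*B)^m * M₀)⁻¹ with hεs
  have hAB0 : (0:ℝ) < 4*A*B := by positivity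
  have hεs_pos : ∀ m, 0 < εs m := by
    intro m
    have : (0:ℝ) < (4*A*B)^m * M₀ := by positivity
    exact inv_pos.2 this
  -- distance bound for images
  have hMn : ∀ (n : ℕ) (ξ : E),
      infDist ((TF ^ n) (ι ξ)) ((G n : Submodule ℂ F) : Set F) ≤ M₀ * A ^ n * ‖ξ‖ := by
    intro n ξ
    refine le_of_forall_pos_le_add fun δ hδ => ?_
    have hAn : (0:ℝ) < A ^ n := by positivity
    have hδ' : 0 < δ / A ^ n := by positivity
    have h1 : infDist (ι ξ) ((sep ι : Submodule ℂ F) : Set F) < M₀ * ‖ξ‖ + δ / A ^ n :=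
      lt_of_le_of_lt (hM₀ ξ) (by linarith)
    obtain ⟨s, hs, hds⟩ := (infDist_lt_iff (infDist_coe_nonempty _)).1 h1
    have hmem : (TF ^ n) s ∈ ((G n : Submodule ℂ F) : Set F) := by
      apply Submodule.le_topologicalClosure _
      exact Submodule.mem_map.2 ⟨s, hs, rfl⟩
    calc infDist ((TF ^ n) (ι ξ)) ((G n : Submodule ℂ F) : Set F)
        ≤ dist ((TF ^ n) (ι ξ)) ((TF ^ n) s) := infDist_le_dist_of_mem hmem
      _ = ‖(TF ^ n) (ι ξ - s)‖ := by rw [dist_eq_norm, ← map_sub]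
      _ ≤ A ^ n * ‖ι ξ - s‖ := hApow n _
      _ ≤ A ^ n * (M₀ * ‖ξ‖ + δ / A ^ n) := by
          rw [dist_eq_norm] at hds
          exact mul_le_mul_of_nonneg_left (by linarith) (by positivity)
      _ = M₀ * A ^ n * ‖ξ‖ + δ := by field_simp
  -- stabilization of the chain G
  have hstab : ∃ m, G (m + 1) = G m := by
    by_contra hne
    push_neg at hne
    -- step existence
    have hstep : ∀ (m : ℕ) (S : ℝ), ∃ a : E,
        ‖a‖ ≤ εs m ∧ 2*((m:ℝ)+1+S) ≤ infDist ((TF ^ m) (ι a)) ((G (m+1) : Submodule ℂ F) : Set F) := by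
      intro m S
      by_cases hS : 2*((m:ℝ)+1+S) ≤ 0
      · refine ⟨0, by simpa using (hεs_pos m).le, ?_⟩
        have h0 : ((TF ^ m) (ι 0)) = 0 := by rw [map_zero, map_zero]
        rw [h0, infDist_zero_of_mem (by exact SetLike.mem_coe.2 (G (m+1)).zero_mem)]
        exact hS
      · push_neg at hS
        set R : ℝ := 2*((m:ℝ)+1+S) + 1 with hR
        have hR0 : (0:ℝ) < R := by linarith
        have hGlt : G (m+1) < G m := lt_of_le_of_ne (hGmono m) (hne m)
        obtain ⟨y₀, hy₀m, hy₀⟩ := SetLike.exists_of_lt hGlt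
        have hd₀ : 0 < infDist y₀ ((G (m+1) : Submodule ℂ F) : Set F) :=
          ((hGclosed (m+1)).notMem_iff_infDist_pos (infDist_coe_nonempty _)).1 hy₀
        set d₀ := infDist y₀ ((G (m+1) : Submodule ℂ F) : Set F) with hd₀def
        set c : ℂ := ((R / d₀ : ℝ) : ℂ) with hc
        have hRd : (0:ℝ) < R / d₀ := by positivity
        have hcne : c ≠ 0 := by
          rw [hc]
          exact_mod_cast ne_of_gt hRd
        set y : F := c • y₀ with hy
        have hym : y ∈ G m := (G m).smul_mem _ hy₀m
        have hyR : R ≤ infDist y ((G (m+1) : Submodule ℂ F) : Set F) := by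
          have hsm := le_infDist_smul (G (m+1)) y₀ c hcne
          have hnc : ‖c‖ = R / d₀ := by
            rw [hc, Complex.norm_real, Real.norm_eq_abs, abs_of_pos hRd]
          rw [hnc] at hsm
          calc R = (R / d₀) * d₀ := by field_simp
            _ ≤ infDist (c • y₀) ((G (m+1) : Submodule ℂ F) : Set F) := hsm
        have hyclos : y ∈ closure ((Submodule.map ((TF ^ m : F →L[ℂ] F) : F →ₗ[ℂ] F) (sep ι) : Submodule ℂ F) : Set F) := by
          have hcoe : ((G m : Submodule ℂ F) : Set F)
              = closure ((Submodule.map ((TF ^ m : F →L[ℂ] F) : F →ₗ[ℂ] F) (sep ι) : Submodule ℂ F) : Set F) :=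
            Submodule.topologicalClosure_coe _
          rw [← hcoe]
          exact hym
        obtain ⟨b, hb, hdb⟩ := Metric.mem_closure_iff.1 hyclos (1/2) (by norm_num)
        obtain ⟨t, htsep, rfl⟩ := Submodule.mem_map.1 (SetLike.mem_coe.1 hb)
        have hδpos : 0 < min (εs m) (1 / (2 * (A ^ m + 1))) :=
          lt_min (hεs_pos m) (by positivity)
        obtain ⟨u, hu1, hu2⟩ := (mem_sep_iff ι t).1 htsep _ hδpos
        refine ⟨u, (le_of_lt (lt_of_lt_of_le hu1 (min_le_left _ _))), ?_⟩
        have hAm : (0:ℝ) < A ^ m := by positivity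
        have hb1 : ‖(TF ^ m) (ι u) - (TF ^ m) t‖ < 1/2 := by
          rw [← map_sub]
          calc ‖(TF ^ m) (ι u - t)‖ ≤ A ^ m * ‖ι u - t‖ := hApow m _
            _ < A ^ m * (1 / (2 * (A ^ m + 1))) :=
                mul_lt_mul_of_pos_left (lt_of_lt_of_le hu2 (min_le_right _ _)) hAm
            _ ≤ 1/2 := by
                rw [mul_one_div, div_le_div_iff₀ (by positivity) (by norm_num)]
                linarith
        have hdy : dist ((TF ^ m) (ι u)) y < 1 := by
          calc dist ((TF ^ m) (ι u)) y
              ≤ dist ((TF ^ m) (ι u)) ((TF ^ m) t) + dist ((TF ^ m) t) y := dist_triangle _ _ _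
            _ < 1/2 + 1/2 := by
                apply add_lt_add
                · rwa [dist_eq_norm]
                · rwa [dist_comm] at hdb
            _ = 1 := by norm_num
        have htri : infDist y ((G (m+1) : Submodule ℂ F) : Set F)
            ≤ infDist ((TF ^ m) (ι u)) ((G (m+1) : Submodule ℂ F) : Set F)
              + dist y ((TF ^ m) (ι u)) := infDist_le_infDist_add_dist
        rw [dist_comm] at htri
        linarith
    -- construct the sequence
    obtain ⟨x, hx⟩ := seq_rec_aux
      (fun m S a => ‖a‖ ≤ εs m ∧
        2*((m:ℝ)+1+S) ≤ infDist ((TF ^ m) (ι a)) ((G (m+1) : Submodule ℂ F) : Set F))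
      (fun k a => ‖(TF ^ k) (ι a)‖) hstep
    set Sm : ℕ → ℝ := fun m => ∑ k ∈ Finset.range m, ‖(TF ^ k) (ι (x k))‖ with hSm
    have hSm_nonneg : ∀ m, 0 ≤ Sm m := fun m => Finset.sum_nonneg (fun k _ => norm_nonneg _)
    have hquarter : Summable (fun i : ℕ => ((1:ℝ)/4)^i) :=
      summable_geometric_of_lt_one (by norm_num) (by norm_num)
    have hbound : ∀ m i : ℕ, ‖(TE ^ i) (x (i + m))‖ ≤ (1/4:ℝ)^i * εs m := by
      intro m i
      have h1 : ‖(TE ^ i) (x (i + m))‖ ≤ B ^ i * εs (i + m) := by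
        calc ‖(TE ^ i) (x (i + m))‖ ≤ B ^ i * ‖x (i + m)‖ := hBpow i _
          _ ≤ B ^ i * εs (i + m) :=
              mul_le_mul_of_nonneg_left (hx (i+m)).1 (by positivity)
      refine h1.trans ?_
      have e2 : (0:ℝ) < (4*A*B)^m * M₀ := by positivity
      have key : B^i * εs (i+m) = (B^i / (4*A*B)^i) * εs m := by
        simp only [hεs]
        rw [pow_add]
        field_simp
      rw [key]
      have h2 : B^i / (4*A*B)^i ≤ (1/4:ℝ)^i := by
        rw [← div_pow]
        apply pow_le_pow_left₀ (by positivity)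
        rw [div_le_div_iff₀ (by positivity) (by norm_num)]
        nlinarith
      exact mul_le_mul_of_nonneg_right h2 (hεs_pos m).le
    have hsummN : ∀ m, Summable (fun i : ℕ => ‖(TE ^ i) (x (i + m))‖) := by
      intro m
      exact Summable.of_nonneg_of_le (fun i => norm_nonneg _) (hbound m)
        (hquarter.mul_right _)
    have hsumm : ∀ m, Summable (fun i : ℕ => (TE ^ i) (x (i + m))) :=
      fun m => (hsummN m).of_norm
    set ζ : ℕ → E := fun m => ∑' i, (TE ^ i) (x (i + m)) with hζdef
    have hζnorm : ∀ m, ‖ζ m‖ ≤ 2 * εs m := by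
      intro m
      have h1 : ‖ζ m‖ ≤ ∑' i, ‖(TE ^ i) (x (i + m))‖ := norm_tsum_le_tsum_norm (hsummN m)
      have h2 : ∑' i, ‖(TE ^ i) (x (i + m))‖ ≤ ∑' i : ℕ, (1/4:ℝ)^i * εs m :=
        Summable.tsum_le_tsum (hbound m) (hsummN m) (hquarter.mul_right _)
      have h3 : ∑' i : ℕ, (1/4:ℝ)^i * εs m = (1 - 1/4)⁻¹ * εs m := by
        rw [tsum_mul_right, tsum_geometric_of_lt_one (by norm_num) (by norm_num)]
      have h4 : ((1:ℝ) - 1/4)⁻¹ * εs m ≤ 2 * εs m := by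
        have : ((1:ℝ) - 1/4)⁻¹ = 4/3 := by norm_num
        rw [this]
        nlinarith [hεs_pos m]
      linarith
    have hζid : ∀ m, (TE ^ m) (ζ m) = ζ 0 - ∑ k ∈ Finset.range m, (TE ^ k) (x k) := by
      intro m
      have h1 : (TE ^ m) (ζ m) = ∑' i, (TE ^ m) ((TE ^ i) (x (i + m))) :=
        (TE ^ m).map_tsum (hsumm m)
      have h2 : ∀ i : ℕ, (TE ^ m) ((TE ^ i) (x (i + m))) = (TE ^ (i + m)) (x (i + m)) := by
        intro i
        rw [← ContinuousLinearMap.mul_apply, ← pow_add, Nat.add_comm m i]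
      rw [tsum_congr h2] at h1
      have hsumm0 : Summable (fun i : ℕ => (TE ^ i) (x i)) := by
        have := hsumm 0
        simpa using this
      have h3 := Summable.sum_add_tsum_nat_add (f := fun i : ℕ => (TE ^ i) (x i)) m hsumm0
      have hζ0 : ζ 0 = ∑' i : ℕ, (TE ^ i) (x i) := by
        simp only [hζdef, Nat.add_zero]
      rw [h1, hζ0, ← h3]
      abel
    set v : ℕ → F := fun m => ι (ζ 0) - ∑ k ∈ Finset.range m, (TF ^ k) (ι (x k)) with hvdef
    have hvι : ∀ m, v m = (TF ^ m) (ι (ζ m)) := by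
      intro m
      have h0 := congrArg ι (hζid m)
      rw [hcommn m (ζ m)] at h0
      rw [map_sub] at h0
      rw [map_sum] at h0
      have h1 : ∀ k, ι ((TE ^ k) (x k)) = (TF ^ k) (ι (x k)) := fun k => hcommn k _
      rw [Finset.sum_congr rfl (fun k _ => h1 k)] at h0
      simp only [hvdef]
      exact h0.symm
    have hv1 : ∀ m, infDist (v (m+1)) ((G (m+1) : Submodule ℂ F) : Set F) ≤ 1 := by
      intro m
      rw [hvι (m+1)]
      refine (hMn (m+1) (ζ (m+1))).trans ?_
      have h1 : M₀ * A^(m+1) * ‖ζ (m+1)‖ ≤ M₀ * A^(m+1) * (2 * εs (m+1)) :=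
        mul_le_mul_of_nonneg_left (hζnorm (m+1)) (by positivity)
      refine h1.trans ?_
      simp only [hεs]
      have hx4 : ((4:ℝ)*A*B)^(m+1) = 4^(m+1) * A^(m+1) * B^(m+1) := by
        rw [mul_pow, mul_pow]
      rw [hx4]
      have h4m : (4:ℝ) ≤ 4^(m+1) := le_self_pow₀ (by norm_num) (Nat.succ_ne_zero m)
      have hBm : (1:ℝ) ≤ B^(m+1) := one_le_pow₀ hB1
      have hAm : (0:ℝ) < A^(m+1) := by positivity
      have heq : M₀ * A^(m+1) * (2 * (4^(m+1) * A^(m+1) * B^(m+1) * M₀)⁻¹)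
          = 2/(4^(m+1) * B^(m+1)) := by
        field_simp
      rw [heq, div_le_one (by positivity)]
      nlinarith
    have hvdiff : ∀ m, v m - v (m+1) = (TF ^ m) (ι (x m)) := by
      intro m
      simp only [hvdef]
      simp only [Finset.sum_range_succ]
      abel
    have hvnorm : ∀ m, ‖v m‖ ≤ ‖ι (ζ 0)‖ + Sm m := by
      intro m
      calc ‖v m‖ ≤ ‖ι (ζ 0)‖ + ‖∑ k ∈ Finset.range m, (TF ^ k) (ι (x k))‖ := norm_sub_le _ _
        _ ≤ ‖ι (ζ 0)‖ + Sm m := by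
            have := norm_sum_le (Finset.range m) (fun k => (TF ^ k) (ι (x k)))
            simp only [hSm]
            linarith
    obtain ⟨m, hmgt⟩ := exists_nat_gt (‖ι (ζ 0)‖)
    have hxm := (hx m).2
    have hsplit : infDist ((TF ^ m) (ι (x m))) ((G (m+1) : Submodule ℂ F) : Set F)
        ≤ infDist (v m) ((G (m+1) : Submodule ℂ F) : Set F)
          + infDist (v (m+1)) ((G (m+1) : Submodule ℂ F) : Set F) := by
      have h1 : (TF ^ m) (ι (x m)) = v m + (- v (m+1)) := by
        rw [← hvdiff m]; abel
      rw [h1]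
      refine (infDist_add_le (G (m+1)) _ _).trans ?_
      rw [infDist_neg_eq]
    have hvm_le : infDist (v m) ((G (m+1) : Submodule ℂ F) : Set F) ≤ ‖v m‖ := by
      have h := infDist_le_dist_of_mem
        (x := v m) (SetLike.mem_coe.2 (G (m+1)).zero_mem)
      rwa [dist_zero_right] at h
    have hfin : 2*((m:ℝ)+1+Sm m) ≤ (‖ι (ζ 0)‖ + Sm m) + 1 := by
      have := hv1 m
      have := hvnorm m
      linarith
    have : (m:ℝ) ≤ ‖ι (ζ 0)‖ := by linarith [hSm_nonneg m]
    linarith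
  -- conclusion: G stabilizes, hence is 0, hence sep = ⊥
  obtain ⟨m, hm⟩ := hstab
  have hconst : ∀ k, G (m + k) = G m := by
    intro k
    induction k with
    | zero => rfl
    | succ k ih =>
        have h1 : G (m + k + 1) = (Submodule.map (TF : F →ₗ[ℂ] F) (G (m + k))).topologicalClosure := hGsucc _
        have h2 : G (m + 1) = (Submodule.map (TF : F →ₗ[ℂ] F) (G m)).topologicalClosure := hGsucc m
        calc G (m + (k+1)) = G (m + k + 1) := by rw [Nat.add_succ]
          _ = (Submodule.map (TF : F →ₗ[ℂ] F) (G (m + k))).topologicalClosure := h1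
          _ = (Submodule.map (TF : F →ₗ[ℂ] F) (G m)).topologicalClosure := by rw [ih]
          _ = G (m + 1) := h2.symm
          _ = G m := hm
  have hGm0 : ∀ y ∈ G m, y = 0 := by
    intro y hy
    apply hcap
    intro n
    have h1 : y ∈ G (m + n) := by rw [hconst n]; exact hy
    have h2 : ((G (m+n) : Submodule ℂ F) : Set F)
        ⊆ closure (Set.range (fun z : F => (TF ^ n) z)) := by
      have hc : ((G (m+n) : Submodule ℂ F) : Set F)
          = closure ((Submodule.map ((TF ^ (m+n) : F →L[ℂ] F) : F →ₗ[ℂ] F) (sep ι) : Submodule ℂ F) : Set F) :=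
        Submodule.topologicalClosure_coe _
      rw [hc]
      apply closure_mono
      intro z hz
      obtain ⟨s, hs, rfl⟩ := Submodule.mem_map.1 (SetLike.mem_coe.1 hz)
      refine ⟨(TF ^ m) s, ?_⟩
      show (TF ^ n) ((TF ^ m) s) = (TF ^ (m + n)) s
      rw [← ContinuousLinearMap.mul_apply, ← pow_add, Nat.add_comm n m]
    exact h2 h1
  have hinjn : ∀ n, Function.Injective (fun z : F => (TF ^ n) z) := by
    intro n
    induction n with
    | zero => intro a b h; simpa using h
    | succ n ih =>
        intro a b h
        simp only [hpow_succ n] at h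
        exact hinj (ih h)
  rw [eq_bot_iff]
  intro s hs
  have h1 : (TF ^ m) s ∈ G m :=
    Submodule.le_topologicalClosure _ (Submodule.mem_map.2 ⟨s, hs, rfl⟩)
  have h2 : (TF ^ m) s = 0 := hGm0 _ h1
  have h3 : (fun z : F => (TF ^ m) z) s = (fun z : F => (TF ^ m) z) 0 := by
    simp only [map_zero]
    exact h2
  have h4 := hinjn m h3
  simpa using h4


lemma aux_continuous (ι : E ≃ₗ[ℂ] F) (TE : E →L[ℂ] E) (TF : F →L[ℂ] F)
    (hcomm : ∀ u : E, ι (TE u) = TF (ι u))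
    (hinj : Function.Injective TF)
    (hcap : ∀ y : F, (∀ n : ℕ, y ∈ closure (Set.range (fun z : F => (TF ^ n) z))) → y = 0) :
    Continuous (ι : E → F) := by
  have hbot := sep_eq_bot ι TE TF hcomm hinj hcap
  have hcont : Continuous (ι : E →ₗ[ℂ] F) := by
    apply LinearMap.continuous_of_seq_closed_graph
    intro u x y hux hgy
    have hgy' : Tendsto (fun k => ι (u k)) atTop (𝓝 y) := hgy
    have hmem : y - ι x ∈ sep ι := by
      rw [mem_sep_iff]
      intro ε hε
      obtain ⟨k₁, hk₁⟩ := (Metric.tendsto_atTop.1 hux) ε hε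
      obtain ⟨k₂, hk₂⟩ := (Metric.tendsto_atTop.1 hgy') ε hε
      refine ⟨u (max k₁ k₂) - x, ?_, ?_⟩
      · have := hk₁ (max k₁ k₂) (le_max_left _ _)
        rwa [dist_eq_norm] at this
      · have h2 := hk₂ (max k₁ k₂) (le_max_right _ _)
        rw [dist_eq_norm] at h2
        have heq : ι (u (max k₁ k₂) - x) - (y - ι x) = ι (u (max k₁ k₂)) - y := by
          rw [map_sub]; abel
        rwa [heq]
    rw [hbot, Submodule.mem_bot] at hmem
    exact sub_eq_zero.1 hmem
  exact hcont

end DetTop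

/-- A copy of `X` that will carry the norm `N`. -/
def DetTop.NCopy {X : Type*} (_N : X → ℝ) : Type _ := X

/-- The canonical identification of `X` with its copy. -/
def DetTop.NCopy.mk {X : Type*} {N : X → ℝ} (x : X) : DetTop.NCopy N := x

/-- The canonical identification of the copy with `X`. -/
def DetTop.NCopy.un {X : Type*} {N : X → ℝ} (x : DetTop.NCopy N) : X := x


/-- Theorem 1.5: if `T` is a bounded injective linear operator on a complex Banach
space `X` such that `⋂ₙ closure(Tⁿ(X)) = {0}` and `closure(Tⁿ⁺¹(X))` has finite
codimension in `closure(Tⁿ(X))` for some `n`, then `T` determines the topology of `X`: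
every complete norm on `X` making `T` bounded is equivalent to the original norm. -/
theorem determines_topology_of_finite_codimension
    {X : Type*} [NormedAddCommGroup X] [NormedSpace ℂ X] [CompleteSpace X]
    (T : X →ₗ[ℂ] X) (hT : Continuous T) (hinj : Function.Injective T)
    (hcap : (⋂ n : ℕ, closure ((LinearMap.range (T ^ n) : Submodule ℂ X) : Set X)) = {0})
    (hcodim : ∃ n : ℕ, FiniteDimensional ℂ
      ((LinearMap.range (T ^ n)).topologicalClosure ⧸
        Submodule.comap ((LinearMap.range (T ^ n)).topologicalClosure).subtype
          (LinearMap.range (T ^ (n + 1))).topologicalClosure)) :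
    ∀ N : X → ℝ, IsCompleteNorm N → (∃ C : ℝ, ∀ x : X, N (T x) ≤ C * N x) →
      ∃ c C : ℝ, 0 < c ∧ 0 < C ∧ ∀ x : X, c * ‖x‖ ≤ N x ∧ N x ≤ C * ‖x‖ := by
  intro N hN hbound
  obtain ⟨C₀, hC₀⟩ := hbound
  -- basic facts about N
  have hN0 : N 0 = 0 := by
    have h := hN.map_smul 0 0
    simpa using h
  have hNneg : ∀ x : X, N (-x) = N x := by
    intro x
    have h := hN.map_smul (-1) x
    simpa using h
  have hNnonneg : ∀ x : X, 0 ≤ N x := by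
    intro x
    have h1 := hN.add_le x (-x)
    rw [add_neg_cancel, hN0, hNneg] at h1
    linarith
  -- set up the copy of X with norm N
  letI : AddCommGroup (DetTop.NCopy N) := inferInstanceAs (AddCommGroup X)
  letI : NormedAddCommGroup (DetTop.NCopy N) := AddGroupNorm.toNormedAddCommGroup
    { toFun := fun x => N x
      map_zero' := hN0
      add_le' := hN.add_le
      neg' := hNneg
      eq_zero_of_map_eq_zero' := hN.eq_zero_of_map_eq_zero }
  letI : Module ℂ (DetTop.NCopy N) := inferInstanceAs (Module ℂ X)
  letI : NormedSpace ℂ (DetTop.NCopy N) := ⟨fun c x => le_of_eq (hN.map_smul c x)⟩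
  have hnorm : ∀ x : DetTop.NCopy N, ‖x‖ = N x := fun _ => rfl
  haveI : CompleteSpace (DetTop.NCopy N) := by
    apply Metric.complete_of_cauchySeq_tendsto
    intro u hu
    rw [Metric.cauchySeq_iff] at hu
    obtain ⟨x, hx⟩ := hN.complete u (by
      intro ε hε
      obtain ⟨n₀, hn₀⟩ := hu ε hε
      refine ⟨n₀, fun m hm n hn => ?_⟩
      have h := hn₀ m hm n hn
      rwa [dist_eq_norm, hnorm] at h)
    refine ⟨DetTop.NCopy.mk (N := N) x, ?_⟩
    rw [Metric.tendsto_atTop]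
    intro ε hε
    obtain ⟨n₀, hn₀⟩ := (Metric.tendsto_atTop.1 hx) ε hε
    refine ⟨n₀, fun n hn => ?_⟩
    have h := hn₀ n hn
    rw [Real.dist_eq, sub_zero] at h
    rw [dist_eq_norm]
    have heq : ‖u n - DetTop.NCopy.mk (N := N) x‖
        = N (DetTop.NCopy.un (u n) - x) := rfl
    rw [heq]
    calc N (DetTop.NCopy.un (u n) - x) ≤ |N (DetTop.NCopy.un (u n) - x)| := le_abs_self _
      _ < ε := h
  -- the identification and the operators
  set ι : DetTop.NCopy N ≃ₗ[ℂ] X :=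
    { toFun := fun x => x
      invFun := fun x => x
      map_add' := fun _ _ => rfl
      map_smul' := fun _ _ => rfl
      left_inv := fun _ => rfl
      right_inv := fun _ => rfl } with hι
  set TF : X →L[ℂ] X := ⟨T, hT⟩ with hTF
  set TEₗ : DetTop.NCopy N →ₗ[ℂ] DetTop.NCopy N :=
    { toFun := fun x => T x
      map_add' := fun a b => map_add T a b
      map_smul' := fun c a => map_smul T c a } with hTEl
  have hTEbound : ∀ x : DetTop.NCopy N, ‖TEₗ x‖ ≤ (max C₀ 0) * ‖x‖ := by
    intro x
    rw [hnorm, hnorm]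
    calc N (T x) ≤ C₀ * N x := hC₀ x
      _ ≤ (max C₀ 0) * N x :=
          mul_le_mul_of_nonneg_right (le_max_left _ _) (hNnonneg x)
  set TE : DetTop.NCopy N →L[ℂ] DetTop.NCopy N := TEₗ.mkContinuous (max C₀ 0) hTEbound
    with hTE
  have hcomm : ∀ u : DetTop.NCopy N, ι (TE u) = TF (ι u) := fun _ => rfl
  have hinj' : Function.Injective TF := hinj
  -- powers agree
  have hpow_agree : ∀ (n : ℕ) (z : X), (T ^ n) z = (TF ^ n) z := by
    intro n
    induction n with
    | zero => intro z; simp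
    | succ n ih =>
        intro z
        rw [pow_succ, pow_succ, Module.End.mul_apply, ContinuousLinearMap.mul_apply, ih]
        rfl
  have hcap' : ∀ y : X, (∀ n : ℕ, y ∈ closure (Set.range (fun z : X => (TF ^ n) z))) → y = 0 := by
    intro y hy
    have hmem : y ∈ ⋂ n : ℕ, closure ((LinearMap.range (T ^ n) : Submodule ℂ X) : Set X) := by
      rw [Set.mem_iInter]
      intro n
      have hset : ((LinearMap.range (T ^ n) : Submodule ℂ X) : Set X)
          = Set.range (fun z : X => (TF ^ n) z) := by
        rw [LinearMap.coe_range]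
        exact congrArg Set.range (funext fun z => hpow_agree n z)
      rw [hset]
      exact hy n
    rw [hcap] at hmem
    exact hmem
  have hcont : Continuous (ι : DetTop.NCopy N → X) :=
    DetTop.aux_continuous ι TE TF hcomm hinj' hcap'
  let e := ι.toContinuousLinearEquivOfContinuous hcont
  set K₁ : ℝ := ‖(e : DetTop.NCopy N →L[ℂ] X)‖ + 1 with hK₁
  set K₂ : ℝ := ‖(e.symm : X →L[ℂ] DetTop.NCopy N)‖ + 1 with hK₂
  have hK₁0 : (0:ℝ) < K₁ := by
    have := norm_nonneg (e : DetTop.NCopy N →L[ℂ] X); linarith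
  have hK₂0 : (0:ℝ) < K₂ := by
    have := norm_nonneg (e.symm : X →L[ℂ] DetTop.NCopy N); linarith
  refine ⟨K₁⁻¹, K₂, by positivity, hK₂0, ?_⟩
  intro x
  constructor
  · -- ‖x‖ ≤ K₁ * N x, hence K₁⁻¹ * ‖x‖ ≤ N x
    have h1 := ContinuousLinearMap.le_opNorm (e : DetTop.NCopy N →L[ℂ] X)
      (DetTop.NCopy.mk (N := N) x)
    have h2 : ‖(e : DetTop.NCopy N →L[ℂ] X) (DetTop.NCopy.mk (N := N) x)‖ = ‖x‖ := rfl
    have h3 : ‖DetTop.NCopy.mk (N := N) x‖ = N x := rfl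
    rw [h2, h3] at h1
    have h4 : ‖x‖ ≤ K₁ * N x := by
      have h5 : ‖(e : DetTop.NCopy N →L[ℂ] X)‖ * N x ≤ K₁ * N x :=
        mul_le_mul_of_nonneg_right (by simp only [hK₁]; linarith) (hNnonneg x)
      exact h1.trans h5
    rw [inv_mul_le_iff₀ hK₁0]
    linarith
  · -- N x ≤ K₂ * ‖x‖
    have h1 := ContinuousLinearMap.le_opNorm (e.symm : X →L[ℂ] DetTop.NCopy N) x
    have h2 : ‖(e.symm : X →L[ℂ] DetTop.NCopy N) x‖ = N x := rfl
    rw [h2] at h1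
    calc N x ≤ ‖(e.symm : X →L[ℂ] DetTop.NCopy N)‖ * ‖x‖ := h1
      _ ≤ K₂ * ‖x‖ := mul_le_mul_of_nonneg_right (by simp only [hK₂]; linarith) (norm_nonneg x)
end

section
/- Let T be a linear operator on a complex vector space X with empty spectrum, i.e., T − zI is bijective for every z ∈ ℂ. Then there exists a set A and a ℂ-linear bijection G from X onto the direct sum ⨁_{α ∈ A} ℂ(z) of copies of the field of complex rational functions (finitely supported functions A → ℂ(z)), such that G(Tx) equals the image of G(x) under componentwise multiplication by the rational function z. Moreover, the cardinality of A is uniquely determined: if G' : X → ⨁_{β ∈ B} ℂ(z) is another ℂ-linear bijection with the same intertwining property, then A and B have the same cardinality. -/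
universe u

open Polynomial

section Aux

variable {X : Type u} [AddCommGroup X] [Module ℂ X]

/-- Nonzero polynomials act invertibly. -/
theorem aux_aeval_isUnit (T : X →ₗ[ℂ] X)
    (hT : ∀ z : ℂ, Function.Bijective fun x => T x - z • x)
    {p : ℂ[X]} (hp : p ≠ 0) :
    IsUnit (Polynomial.aeval (T : Module.End ℂ X) p) := by
  have hlin : ∀ z : ℂ,
      IsUnit (Polynomial.aeval (T : Module.End ℂ X) (Polynomial.X - C z)) := by
    intro z
    rw [Module.End.isUnit_iff]
    have : ⇑(Polynomial.aeval (T : Module.End ℂ X) (Polynomial.X - C z))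
        = fun x => T x - z • x := by
      funext x
      simp [Module.algebraMap_end_apply]
    rw [this]
    exact hT z
  have hprod : ∀ s : Multiset ℂ,
      IsUnit (Polynomial.aeval (T : Module.End ℂ X)
        ((s.map fun z => Polynomial.X - C z).prod)) := by
    intro s
    induction s using Multiset.induction_on with
    | empty => simp
    | cons z s ih =>
      rw [Multiset.map_cons, Multiset.prod_cons, map_mul]
      exact (hlin z).mul ih
  have hsplit : p.Splits := IsAlgClosed.splits p
  have hfac := hsplit.eq_prod_roots
  rw [hfac, map_mul]
  apply IsUnit.mul
  · rw [aeval_C]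
    exact (isUnit_iff_ne_zero.mpr (leadingCoeff_ne_zero.mpr hp)).map
      (algebraMap ℂ (Module.End ℂ X))
  · exact hprod p.roots

end Aux

/-- Theorem 2.2: a linear operator with empty spectrum on a complex vector space is
similar to a direct sum of copies of the multiplication operator `f(z) ↦ z·f(z)` on the
field `ℂ(z)` of complex rational functions, and the number of copies is uniquely
determined. -/
theorem empty_spectrum_similar_to_multiplication
    {X : Type u} [AddCommGroup X] [Module ℂ X] (T : X →ₗ[ℂ] X)
    (hT : ∀ z : ℂ, Function.Bijective fun x => T x - z • x) :
    ∃ (A : Type u) (G : X ≃ₗ[ℂ] (A →₀ RatFunc ℂ)),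
      (∀ x : X, G (T x) = (RatFunc.X : RatFunc ℂ) • G x) ∧
      ∀ (B : Type u) (G' : X ≃ₗ[ℂ] (B →₀ RatFunc ℂ)),
        (∀ x : X, G' (T x) = (RatFunc.X : RatFunc ℂ) • G' x) →
        Cardinal.mk A = Cardinal.mk B := by
  classical
  set E := Module.End ℂ X with hE
  set T' : E := (T : Module.End ℂ X) with hT'
  -- the double centralizer of T, a commutative subring of End
  set S : Subring E := Subring.centralizer ((Subring.centralizer {T'} : Subring E) : Set E)
    with hS
  have hmemS : ∀ p : ℂ[X], Polynomial.aeval T' p ∈ S := by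
    intro p
    rw [hS, Subring.mem_centralizer_iff]
    intro g hg
    have hgT : Commute g T' := by
      have h0 := (Subring.mem_centralizer_iff.mp hg) T' (Set.mem_singleton _)
      exact h0.symm
    -- g commutes with aeval T' p
    induction p using Polynomial.induction_on' with
    | add p q hp hq =>
      rw [map_add, mul_add, add_mul, hp, hq]
    | monomial n a =>
      have h1 : Commute g ((Polynomial.aeval T') ((monomial n) a)) := by
        rw [← C_mul_X_pow_eq_monomial, map_mul, aeval_C, map_pow, aeval_X]
        exact (show Commute g ((algebraMap ℂ E) a) from (Algebra.commutes a g).symm).mul_right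
          (hgT.pow_right n)
      exact h1
  -- the ring hom from polynomials into S
  letI : CommRing S := { (inferInstance : Ring S) with
    mul_comm := by
      rintro ⟨a, ha⟩ ⟨b, hb⟩
      have hTm : T' ∈ (Subring.centralizer {T'} : Subring E) :=
        Subring.mem_centralizer_iff.mpr (by rintro g rfl; rfl)
      have haC : a ∈ (Subring.centralizer {T'} : Subring E) := by
        rw [Subring.mem_centralizer_iff]
        rintro g rfl
        exact Subring.mem_centralizer_iff.mp ha T' hTm
      have hab := Subring.mem_centralizer_iff.mp hb a haC
      exact Subtype.ext hab }
  let gS : ℂ[X] →+* S :=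
    { toFun := fun p => ⟨Polynomial.aeval T' p, hmemS p⟩
      map_one' := Subtype.ext (by simp)
      map_mul' := fun p q => Subtype.ext (by simp)
      map_zero' := Subtype.ext (by simp)
      map_add' := fun p q => Subtype.ext (by simp) }
  have hunit : ∀ y : nonZeroDivisors ℂ[X], IsUnit (gS y) := by
    rintro ⟨p, hp⟩
    have hp0 : p ≠ 0 := nonZeroDivisors.ne_zero hp
    obtain ⟨u, hu⟩ := aux_aeval_isUnit T hT hp0
    have hval : (u : E) ∈ S := hu ▸ hmemS p
    have hinv : ((u⁻¹ : Eˣ) : E) ∈ S := by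
      rw [hS, Subring.mem_centralizer_iff]
      intro g hg
      have : Commute g (u : E) := by
        have := (Subring.mem_centralizer_iff.mp hval) g hg
        exact this
      exact (this.units_inv_right)
    refine ⟨⟨⟨(u : E), hval⟩, ⟨((u⁻¹ : Eˣ) : E), hinv⟩, ?_, ?_⟩, ?_⟩
    · exact Subtype.ext u.mul_inv
    · exact Subtype.ext u.inv_mul
    · exact Subtype.ext hu
  -- the representation of RatFunc ℂ on X
  let ψ : RatFunc ℂ →+* S :=
    IsLocalization.lift (M := nonZeroDivisors ℂ[X]) (S := RatFunc ℂ) hunit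
  let φ : RatFunc ℂ →+* E := S.subtype.comp ψ
  have hφ : ∀ p : ℂ[X], φ (algebraMap ℂ[X] (RatFunc ℂ) p) = Polynomial.aeval T' p := by
    intro p
    have h := IsLocalization.lift_eq (M := nonZeroDivisors ℂ[X]) (S := RatFunc ℂ) hunit p
    calc φ (algebraMap ℂ[X] (RatFunc ℂ) p)
        = ((ψ (algebraMap ℂ[X] (RatFunc ℂ) p) : S) : E) := rfl
      _ = ((gS p : S) : E) := by rw [h]
      _ = Polynomial.aeval T' p := rfl
  letI mK : Module (RatFunc ℂ) X := Module.compHom X φ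
  have hsmul : ∀ (f : RatFunc ℂ) (x : X), f • x = φ f x := fun _ _ => rfl
  letI : IsScalarTower ℂ (RatFunc ℂ) X := by
    constructor
    intro c f x
    rw [hsmul, hsmul]
    have h1 : c • f = algebraMap ℂ (RatFunc ℂ) c * f := Algebra.smul_def c f
    have h2 : algebraMap ℂ (RatFunc ℂ) c = algebraMap ℂ[X] (RatFunc ℂ) (C c) :=
      (RatFunc.algebraMap_C c).symm
    rw [h1, h2, map_mul, hφ, aeval_C]
    rfl
  -- X is a vector space over RatFunc ℂ, hence free
  let A : Type u := ↥(Module.Basis.ofVectorSpaceIndex (RatFunc ℂ) X)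
  let b : Module.Basis A (RatFunc ℂ) X := Module.Basis.ofVectorSpace (RatFunc ℂ) X
  let Gk : X ≃ₗ[RatFunc ℂ] (A →₀ RatFunc ℂ) := b.repr
  let G : X ≃ₗ[ℂ] (A →₀ RatFunc ℂ) := Gk.restrictScalars ℂ
  have hφX : φ (RatFunc.X : RatFunc ℂ) = T' := by
    rw [← RatFunc.algebraMap_X, hφ, aeval_X]
  have hTX : ∀ x : X, T x = (RatFunc.X : RatFunc ℂ) • x := by
    intro x
    rw [hsmul, hφX]
  have hGT : ∀ x : X, G (T x) = (RatFunc.X : RatFunc ℂ) • G x := by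
    intro x
    show Gk (T x) = (RatFunc.X : RatFunc ℂ) • Gk x
    rw [hTX x]
    exact map_smul Gk _ _
  refine ⟨A, G, hGT, ?_⟩
  intro B G' hG'
  -- the transfer map
  let e : (A →₀ RatFunc ℂ) ≃ₗ[ℂ] (B →₀ RatFunc ℂ) := G.symm.trans G'
  have he : ∀ v, e ((RatFunc.X : RatFunc ℂ) • v) = (RatFunc.X : RatFunc ℂ) • e v := by
    intro v
    have h1 : G.symm ((RatFunc.X : RatFunc ℂ) • v) = T (G.symm v) := by
      apply G.injective
      rw [hGT, G.apply_symm_apply, G.apply_symm_apply]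
    show G' (G.symm ((RatFunc.X : RatFunc ℂ) • v)) = (RatFunc.X : RatFunc ℂ) • G' (G.symm v)
    rw [h1, hG']
  have heXn : ∀ (n : ℕ) (v : A →₀ RatFunc ℂ),
      e (((RatFunc.X : RatFunc ℂ) ^ n) • v) = ((RatFunc.X : RatFunc ℂ) ^ n) • e v := by
    intro n
    induction n with
    | zero => intro v; simp
    | succ n ih =>
      intro v
      rw [pow_succ, mul_comm, mul_smul, he, ih, ← mul_smul, mul_comm]
  have hpoly : ∀ (p : ℂ[X]) (v : A →₀ RatFunc ℂ),
      e ((algebraMap ℂ[X] (RatFunc ℂ) p) • v) = (algebraMap ℂ[X] (RatFunc ℂ) p) • e v := by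
    intro p
    induction p using Polynomial.induction_on' with
    | add p q hp hq =>
      intro v
      rw [map_add, add_smul, map_add, hp, hq, add_smul]
    | monomial n a =>
      intro v
      have hCalg : algebraMap ℂ[X] (RatFunc ℂ) (C a) = algebraMap ℂ (RatFunc ℂ) a := by
        rw [IsScalarTower.algebraMap_apply ℂ ℂ[X] (RatFunc ℂ) a, Polynomial.algebraMap_eq]
      rw [← C_mul_X_pow_eq_monomial, map_mul, map_pow, RatFunc.algebraMap_X,
        hCalg, mul_smul, mul_smul, algebraMap_smul, map_smul, heXn, algebraMap_smul]
  have hK : ∀ (f : RatFunc ℂ) (v : A →₀ RatFunc ℂ), e (f • v) = f • e v := by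
    intro f v
    have hq0 : algebraMap ℂ[X] (RatFunc ℂ) f.denom ≠ 0 :=
      RatFunc.algebraMap_ne_zero (RatFunc.denom_ne_zero f)
    have h1 : algebraMap ℂ[X] (RatFunc ℂ) f.denom * f
        = algebraMap ℂ[X] (RatFunc ℂ) f.num := by
      rw [mul_comm, ← eq_div_iff hq0]
      exact (RatFunc.num_div_denom f).symm
    have h2 : algebraMap ℂ[X] (RatFunc ℂ) f.denom • e (f • v)
        = algebraMap ℂ[X] (RatFunc ℂ) f.denom • (f • e v) := by
      calc algebraMap ℂ[X] (RatFunc ℂ) f.denom • e (f • v)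
          = e (algebraMap ℂ[X] (RatFunc ℂ) f.denom • f • v) := (hpoly f.denom (f • v)).symm
        _ = e ((algebraMap ℂ[X] (RatFunc ℂ) f.denom * f) • v) := by rw [mul_smul]
        _ = (algebraMap ℂ[X] (RatFunc ℂ) f.denom * f) • e v := by rw [h1]; exact hpoly f.num v
        _ = algebraMap ℂ[X] (RatFunc ℂ) f.denom • (f • e v) := by rw [mul_smul]
    have h3 := congrArg (fun w => (algebraMap ℂ[X] (RatFunc ℂ) f.denom)⁻¹ • w) h2
    simp only [smul_smul, ← mul_assoc, inv_mul_cancel₀ hq0, one_mul, one_smul] at h3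
    exact h3
  let e' : (A →₀ RatFunc ℂ) ≃ₗ[RatFunc ℂ] (B →₀ RatFunc ℂ) :=
    e.toAddEquiv.toLinearEquiv hK
  let b1 : Module.Basis B (RatFunc ℂ) (B →₀ RatFunc ℂ) := Finsupp.basisSingleOne
  let b2 : Module.Basis A (RatFunc ℂ) (B →₀ RatFunc ℂ) :=
    (Finsupp.basisSingleOne : Module.Basis A (RatFunc ℂ) (A →₀ RatFunc ℂ)).map e'
  exact mk_eq_mk_of_basis' b2 b1
end

section
/- Let T be an injective quasinilpotent linear operator on a complex vector space X, and let X_T = ⋂_{n≥0} Tⁿ(X). Then X_T is a T-invariant subspace and the restriction T₀ of T to X_T has empty spectrum: for every z ∈ ℂ, the map x ↦ Tx − z·x is a bijection of X_T onto X_T. -/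
/-- Lemma 3.1: if `T` is an injective quasinilpotent linear operator on a complex vector
space `X`, then `X_T = ⋂ₙ Tⁿ(X)` is `T`-invariant and the restriction of `T` to `X_T` has
empty spectrum: for every `z ∈ ℂ`, `x ↦ Tx - z•x` maps `X_T` bijectively onto `X_T`. -/
theorem restriction_to_intersection_has_empty_spectrum
    {X : Type*} [AddCommGroup X] [Module ℂ X] (T : X →ₗ[ℂ] X)
    (hinj : Function.Injective T)
    (hq : ∀ z : ℂ, z ≠ 0 → Function.Bijective fun x => T x - z • x) :
    (∀ x ∈ ⋂ n : ℕ, ((LinearMap.range (T ^ n) : Submodule ℂ X) : Set X),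
        T x ∈ ⋂ n : ℕ, ((LinearMap.range (T ^ n) : Submodule ℂ X) : Set X)) ∧
    ∀ z : ℂ, Set.BijOn (fun x => T x - z • x)
      (⋂ n : ℕ, ((LinearMap.range (T ^ n) : Submodule ℂ X) : Set X))
      (⋂ n : ℕ, ((LinearMap.range (T ^ n) : Submodule ℂ X) : Set X)) := by
  set S := ⋂ n : ℕ, ((LinearMap.range (T ^ n) : Submodule ℂ X) : Set X) with hS
  have hmem : ∀ x : X, x ∈ S ↔ ∀ n : ℕ, ∃ y, (T ^ n) y = x := by
    intro x
    simp [hS, Set.mem_iInter, LinearMap.mem_range]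
  -- pow commutation: T ((T^n) v) = (T^n) (T v)
  have hcomm : ∀ (n : ℕ) (v : X), T ((T ^ n) v) = (T ^ n) (T v) := by
    intro n v
    have : (T * T ^ n) v = (T ^ n * T) v := by
      rw [← pow_succ', ← pow_succ]
    simpa [Module.End.mul_apply] using this
  -- injectivity of powers
  have hpowinj : ∀ n : ℕ, Function.Injective (T ^ n) := by
    intro n
    induction n with
    | zero => simpa [Module.End.coe_one] using Function.injective_id
    | succ n ih =>
        have : ⇑(T ^ (n + 1)) = ⇑T ∘ ⇑(T ^ n) := by
          ext v; simp [pow_succ', Module.End.mul_apply]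
        rw [this]
        exact hinj.comp ih
  -- T-invariance
  have hTinv : ∀ x ∈ S, T x ∈ S := by
    intro x hx
    rw [hmem] at hx ⊢
    intro n
    obtain ⟨y, hy⟩ := hx n
    exact ⟨T y, by rw [← hcomm, hy]⟩
  refine ⟨hTinv, ?_⟩
  intro z
  -- the affine map commutes with T^n
  have hAcomm : ∀ (n : ℕ) (v : X),
      T ((T ^ n) v) - z • ((T ^ n) v) = (T ^ n) (T v - z • v) := by
    intro n v
    rw [map_sub, map_smul, hcomm]
  by_cases hz : z = 0
  · subst hz
    simp only [zero_smul, sub_zero]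
    refine ⟨fun x hx => hTinv x hx, fun x _ y _ h => hinj h, ?_⟩
    intro y hy
    rw [hmem] at hy
    obtain ⟨x, hx⟩ := hy 1
    simp only [pow_one] at hx
    refine ⟨x, ?_, hx⟩
    rw [hmem]
    intro n
    obtain ⟨w, hw⟩ := hy (n + 1)
    refine ⟨w, hinj ?_⟩
    rw [hcomm, show (T ^ n) (T w) = (T ^ (n+1)) w from by
      simp [pow_succ, Module.End.mul_apply], hw, hx]
  · obtain ⟨hi, hs⟩ := hq z hz
    refine ⟨?_, fun x _ y _ h => hi h, ?_⟩
    · intro x hx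
      rw [hmem] at hx ⊢
      intro n
      obtain ⟨y, hy⟩ := hx n
      exact ⟨T y - z • y, by rw [← hAcomm, hy]⟩
    · intro y hy
      obtain ⟨x, hx⟩ := hs y
      refine ⟨x, ?_, hx⟩
      rw [hmem] at hy ⊢
      intro n
      obtain ⟨u, hu⟩ := hy n
      obtain ⟨v, hv⟩ := hs u
      have hv' : T v - z • v = u := hv
      have hx' : T x - z • x = y := hx
      refine ⟨v, hi ?_⟩
      show T ((T ^ n) v) - z • ((T ^ n) v) = T x - z • x
      rw [hAcomm, hv', hu, hx']
end

section
/- Let T be an injective linear operator on a complex vector space X and E a linear subspace of X such that X is the algebraic direct sum of E and T(X) (i.e., E ∩ T(X) = {0} and E + T(X) = X). Then for every x ∈ X there exists a unique sequence (xₙ)_{n≥0} of elements of E such that x − Σ_{k=0}^{n} Tᵏxₖ ∈ T^{n+1}(X) for every n ≥ 0. -/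
/-- Lemma 3.4: if `T` is an injective linear operator on a complex vector space `X` and
`E` is a linear subspace with `X = E ⊕ T(X)` (algebraically), then every `x ∈ X` admits a
unique sequence `(xₙ)` of elements of `E` with
`x ≡ x₀ + Tx₁ + ⋯ + Tⁿxₙ (mod Tⁿ⁺¹(X))` for every `n`. -/
theorem exists_unique_expansion
    {X : Type*} [AddCommGroup X] [Module ℂ X] (T : X →ₗ[ℂ] X)
    (hinj : Function.Injective T) (E : Submodule ℂ X)
    (hdisj : E ⊓ LinearMap.range T = ⊥) (hsup : E ⊔ LinearMap.range T = ⊤) (x : X) :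
    ∃! f : ℕ → X, (∀ n : ℕ, f n ∈ E) ∧
      ∀ n : ℕ, x - ∑ k ∈ Finset.range (n + 1), (T ^ k) (f k) ∈
        LinearMap.range (T ^ (n + 1)) := by
  have hpowinj : ∀ n : ℕ, Function.Injective (⇑(T ^ n)) := by
    intro n
    have h : ⇑(T ^ n) = (⇑T)^[n] := by
      ext y; exact Module.End.pow_apply T n y
    rw [h]
    exact Function.Injective.iterate hinj n
  have hdec : ∀ y : X, ∃ p : X × X, p.1 ∈ E ∧ y = p.1 + T p.2 := by
    intro y
    have hy : y ∈ E ⊔ LinearMap.range T := by rw [hsup]; trivial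
    rcases Submodule.mem_sup.mp hy with ⟨e, he, t, ht, h⟩
    rcases ht with ⟨z, rfl⟩
    exact ⟨(e, z), he, h.symm⟩
  choose p hpE hpeq using hdec
  set y : ℕ → X := fun n => Nat.rec x (fun _ yn => (p yn).2) n with hy
  set f : ℕ → X := fun n => (p (y n)).1 with hf
  have hy0 : y 0 = x := rfl
  have hystep : ∀ n, y n = f n + T (y (n + 1)) := fun n => hpeq (y n)
  have key : ∀ n : ℕ, x - ∑ k ∈ Finset.range (n + 1), (T ^ k) (f k)
      = (T ^ (n + 1)) (y (n + 1)) := by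
    intro n
    induction n with
    | zero =>
      have h0 : x = f 0 + T (y 1) := by rw [← hy0]; exact hystep 0
      rw [show (0:ℕ)+1 = 1 from rfl, Finset.sum_range_one, pow_zero, pow_one,
        Module.End.one_apply, h0]
      abel
    | succ n ih =>
      rw [Finset.sum_range_succ, ← sub_sub, ih, ← map_sub]
      have h1 : y (n + 1) - f (n + 1) = T (y (n + 2)) := by
        rw [hystep (n + 1)]; abel
      rw [h1, ← Module.End.mul_apply, ← pow_succ]
  refine ⟨f, ⟨fun n => hpE (y n), fun n => by rw [key n]; exact ⟨y (n + 1), rfl⟩⟩, ?_⟩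
  rintro g ⟨hgE, hgR⟩
  funext n
  induction n using Nat.strong_induction_on with
  | _ n ih =>
    have hbf : x - ∑ k ∈ Finset.range (n + 1), (T ^ k) (f k)
        ∈ LinearMap.range (T ^ (n + 1)) := by
      rw [key n]; exact ⟨y (n + 1), rfl⟩
    have hdiff : (x - ∑ k ∈ Finset.range (n + 1), (T ^ k) (g k))
        - (x - ∑ k ∈ Finset.range (n + 1), (T ^ k) (f k))
        ∈ LinearMap.range (T ^ (n + 1)) :=
      Submodule.sub_mem _ (hgR n) hbf
    have hsumeq : ∑ k ∈ Finset.range n, (T ^ k) (g k)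
        = ∑ k ∈ Finset.range n, (T ^ k) (f k) :=
      Finset.sum_congr rfl fun k hk => by rw [ih k (Finset.mem_range.mp hk)]
    have hdiff2 : (T ^ n) (f n - g n) ∈ LinearMap.range (T ^ (n + 1)) := by
      have heq : (x - ∑ k ∈ Finset.range (n + 1), (T ^ k) (g k))
          - (x - ∑ k ∈ Finset.range (n + 1), (T ^ k) (f k))
          = (T ^ n) (f n - g n) := by
        rw [Finset.sum_range_succ, Finset.sum_range_succ, hsumeq, map_sub]
        abel
      rwa [heq] at hdiff
    rcases hdiff2 with ⟨w, hw⟩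
    have hw' : (T ^ n) (T w) = (T ^ n) (f n - g n) := by
      rw [← Module.End.mul_apply, ← pow_succ]; exact hw
    have hTw : T w = f n - g n := hpowinj n hw'
    have hmem : f n - g n ∈ E ⊓ LinearMap.range T :=
      ⟨Submodule.sub_mem _ (hpE (y n)) (hgE n), ⟨w, hTw⟩⟩
    rw [hdisj, Submodule.mem_bot] at hmem
    have := sub_eq_zero.mp hmem
    exact this.symm
end

section
/- Let (aₙ)_{n≥0} be a sequence of non-negative real numbers such that the set {n ∈ ℕ : aₙ > 0} is infinite and aₙ^{1/n} → 0 as n → ∞. Then there exists an infinite set A ⊆ ℕ such that aₙ > 0 for every n ∈ A and Σ_{k=n+1}^{∞} a_k = o(aₙ) as n → ∞ along n ∈ A; that is, for every ε > 0 all but finitely many n ∈ A satisfy Σ_{k>n} a_k ≤ ε·aₙ. -/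
open Filter Real

/-- Lemma 4.1: if `(aₙ)` is a sequence of non-negative reals with infinitely many positive
terms and `aₙ^{1/n} → 0`, then there is an infinite set `A ⊆ ℕ` on which `aₙ > 0` and such
that the tails `∑_{k>n} a_k` are `o(aₙ)` as `n → ∞` along `A`. -/
theorem exists_infinite_set_tail_little_o
    (a : ℕ → ℝ) (hnonneg : ∀ n, 0 ≤ a n)
    (hinf : {n : ℕ | 0 < a n}.Infinite)
    (hroot : Filter.Tendsto (fun n : ℕ => (a n) ^ (1 / (n : ℝ))) Filter.atTop (nhds 0)) :
    ∃ A : Set ℕ, A.Infinite ∧ (∀ n ∈ A, 0 < a n) ∧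
      ∀ ε : ℝ, 0 < ε → ∃ N : ℕ, ∀ n ∈ A, N ≤ n →
        (∑' k : ℕ, a (n + 1 + k)) ≤ ε * a n := by
  set s : ℕ → ℝ := fun n => (a n) ^ (1 / (n : ℝ)) with hsdef
  have hs_nonneg : ∀ n, 0 ≤ s n := fun n => Real.rpow_nonneg (hnonneg n) _
  have hpow : ∀ n : ℕ, n ≠ 0 → (s n) ^ n = a n := by
    intro n hn
    have hn' : (n : ℝ) ≠ 0 := Nat.cast_ne_zero.mpr hn
    rw [hsdef]
    rw [← Real.rpow_natCast ((a n) ^ (1 / (n:ℝ))) n, ← Real.rpow_mul (hnonneg n),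
      one_div_mul_cancel hn', Real.rpow_one]
  have hs_pos : ∀ n : ℕ, n ≠ 0 → 0 < a n → 0 < s n := by
    intro n hn h
    exact Real.rpow_pos_of_pos h _
  have ha_pos : ∀ n : ℕ, n ≠ 0 → 0 < s n → 0 < a n := by
    intro n hn h
    rcases (hnonneg n).lt_or_eq with h' | h'
    · exact h'
    · exfalso
      rw [hsdef] at h
      simp only [← h'] at h
      rw [Real.zero_rpow (by positivity : 1 / (n:ℝ) ≠ 0)] at h
      exact lt_irrefl 0 h
  -- summability of a
  have hsum : Summable a := by
    have h2 : ∀ᶠ n in atTop, s n < 1/2 := hroot.eventually (gt_mem_nhds (by norm_num))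
    rcases h2.exists_forall_of_atTop with ⟨N, hN⟩
    have : Summable (fun n => a (n + (N + 1))) := by
      refine Summable.of_nonneg_of_le (f := fun n => (1/2 : ℝ) ^ (n + (N + 1)))
        (fun n => hnonneg _) ?_ ?_
      · intro n
        have h1 : (n + (N+1)) ≠ 0 := by omega
        rw [← hpow _ h1]
        exact pow_le_pow_left₀ (hs_nonneg _) (hN _ (by omega)).le _
      · exact (summable_nat_add_iff (N+1)).mpr
          (summable_geometric_of_lt_one (by norm_num) (by norm_num))
    exact (summable_nat_add_iff (N+1)).mp this
  -- the set A
  set A : Set ℕ := {n | 1 ≤ n ∧ 0 < a n ∧ ∀ k, n ≤ k → s k ≤ s n} with hAdef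
  refine ⟨A, ?_, fun n hn => hn.2.1, ?_⟩
  · -- A infinite
    apply Set.infinite_of_forall_exists_gt
    intro m
    obtain ⟨k₀, hk₀pos, hk₀gt⟩ : ∃ k₀, 0 < a k₀ ∧ m + 1 ≤ k₀ := by
      obtain ⟨k₀, hk₀, hgt⟩ := hinf.exists_gt m
      exact ⟨k₀, hk₀, hgt⟩
    have hk₀ne : k₀ ≠ 0 := by omega
    have hsk₀ : 0 < s k₀ := hs_pos _ hk₀ne hk₀pos
    -- finitely many k with s k₀ ≤ s k
    have hev : ∀ᶠ k in atTop, s k < s k₀ := hroot.eventually (gt_mem_nhds hsk₀)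
    rcases hev.exists_forall_of_atTop with ⟨M, hM⟩
    set F : Finset ℕ := (Finset.range (M+1)).filter (fun k => m + 1 ≤ k ∧ s k₀ ≤ s k)
      with hF
    have hk₀F : k₀ ∈ F := by
      simp only [hF, Finset.mem_filter, Finset.mem_range]
      refine ⟨?_, hk₀gt, le_refl _⟩
      by_contra h
      have := hM k₀ (by omega)
      exact absurd this (lt_irrefl _)
    obtain ⟨n, hnF, hnmax⟩ := F.exists_max_image s ⟨k₀, hk₀F⟩
    simp only [hF, Finset.mem_filter, Finset.mem_range] at hnF
    have hsn : 0 < s n := lt_of_lt_of_le hsk₀ (hnF.2.2)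
    have hnne : n ≠ 0 := by omega
    refine ⟨n, ?_, by omega⟩
    refine ⟨by omega, ha_pos _ hnne hsn, ?_⟩
    intro k hk
    by_cases hks : s k₀ ≤ s k
    · have hkM : k < M + 1 := by
        by_contra h
        exact absurd (hM k (by omega)) (not_lt.mpr hks)
      have hkF : k ∈ F := by
        simp only [hF, Finset.mem_filter, Finset.mem_range]
        exact ⟨hkM, by omega, hks⟩
      exact hnmax k hkF
    · exact le_trans (not_le.mp hks).le hnF.2.2
  · -- little-o
    intro ε hε
    have hδ : (0:ℝ) < ε / (1 + ε) := by positivity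
    have hev : ∀ᶠ n in atTop, s n < ε / (1 + ε) := hroot.eventually (gt_mem_nhds hδ)
    rcases hev.exists_forall_of_atTop with ⟨N, hN⟩
    refine ⟨N, fun n hn hNn => ?_⟩
    obtain ⟨hn1, hapos, hmax⟩ := hn
    set t := s n with ht
    have htlt : t < ε / (1 + ε) := hN n hNn
    have ht1 : t < 1 := lt_of_lt_of_le htlt (by
      rw [div_le_one (by linarith)]; linarith)
    have htnn : 0 ≤ t := hs_nonneg n
    have hnne : n ≠ 0 := by omega
    -- a (n+1+k) ≤ a n * t^(k+1)
    have key : ∀ k : ℕ, a (n + 1 + k) ≤ a n * t ^ (k + 1) := by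
      intro k
      have h1 : (n + 1 + k) ≠ 0 := by omega
      have h2 : s (n+1+k) ≤ t := hmax _ (by omega)
      calc a (n+1+k) = (s (n+1+k)) ^ (n+1+k) := (hpow _ h1).symm
        _ ≤ t ^ (n+1+k) := pow_le_pow_left₀ (hs_nonneg _) h2 _
        _ = t ^ n * t ^ (k+1) := by ring
        _ = a n * t ^ (k+1) := by rw [hpow _ hnne]
    have hsum' : Summable (fun k => a (n + 1 + k)) := by
      have := (summable_nat_add_iff (n+1)).mpr hsum
      exact this.congr (fun k => by ring_nf)
    have hgeo : Summable (fun k : ℕ => a n * t ^ (k+1)) := by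
      apply Summable.mul_left
      exact ((summable_geometric_of_lt_one htnn ht1).mul_left t).congr
        (fun k => by rw [pow_succ]; ring)
    calc (∑' k : ℕ, a (n + 1 + k)) ≤ ∑' k : ℕ, a n * t ^ (k+1) :=
          Summable.tsum_le_tsum key hsum' hgeo
      _ = a n * (t * (1 - t)⁻¹) := by
          rw [tsum_mul_left]
          congr 1
          rw [show (fun k : ℕ => t ^ (k+1)) = fun k : ℕ => t * t ^ k from
            funext fun k => by rw [pow_succ]; ring]
          rw [tsum_mul_left, tsum_geometric_of_lt_one htnn ht1]
      _ ≤ ε * a n := by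
          rw [mul_comm (ε) (a n)]
          apply mul_le_mul_of_nonneg_left _ (hnonneg n)
          have h1t : 0 < 1 - t := by linarith
          rw [mul_inv_le_iff₀ h1t]
          have : t * (1 + ε) < ε := by
            rw [lt_div_iff₀ (by linarith : (0:ℝ) < 1 + ε)] at htlt
            exact htlt
          nlinarith
end

section
/- Let X be a Fréchet space over ℂ and (xₙ)_{n≥0} a linearly independent sequence in X. Then there exists a sequence (tₙ)_{n≥0} of positive real numbers such that for every sequence (bₙ)_{n≥0} of complex numbers with Σ_{n=0}^{∞} tₙ|bₙ| < ∞: (A) the series Σ_{n=0}^{∞} bₙxₙ converges absolutely in X (meaning Σ p(bₙxₙ) < ∞ for every continuous seminorm p on X, and in particular the series converges); and (B) if Σ_{n=0}^{∞} bₙxₙ = 0 then bₙ = 0 for every n. -/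
open Filter Finset Topology
open scoped NNReal

lemma aux_seminorm_sum_apply {E ι : Type*} [AddCommGroup E] [Module ℂ E]
    (s : Finset ι) (q : ι → Seminorm ℂ E) (v : E) :
    (∑ j ∈ s, q j) v = ∑ j ∈ s, q j v := by
  induction s using Finset.cons_induction with
  | empty => simp
  | cons a u ha ih => rw [Finset.sum_cons, Finset.sum_cons, Seminorm.add_apply, ih]

lemma aux_seminorm_map_sum_le {E ι : Type*} [AddCommGroup E] [Module ℂ E]
    (p : Seminorm ℂ E) (s : Finset ι) (f : ι → E) :
    p (∑ j ∈ s, f j) ≤ ∑ j ∈ s, p (f j) := by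
  induction s using Finset.cons_induction with
  | empty => simp
  | cons a u ha ih =>
    rw [Finset.sum_cons, Finset.sum_cons]
    exact (map_add_le_add p _ _).trans (by linarith)

/- A Fréchet space over `ℂ` is encoded as a complete, metrizable (first countable and `T0`
uniform additive group) locally convex topological vector space. -/

/-- Lemma 4.2: for any linearly independent sequence `(xₙ)` in a complex Fréchet space `X`
there are weights `tₙ > 0` such that whenever `∑ tₙ|bₙ| < ∞`, the series `∑ bₙxₙ`
converges absolutely in `X` (i.e. `∑ p(bₙxₙ) < ∞` for each continuous seminorm `p`, and
the partial sums converge), and `∑ bₙxₙ = 0` forces all `bₙ = 0`. -/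
theorem exists_weights_absolutely_convergent_and_independent
    {X : Type*} [AddCommGroup X] [Module ℂ X] [UniformSpace X] [IsUniformAddGroup X]
    [ContinuousSMul ℂ X] [CompleteSpace X] [FirstCountableTopology X] [T0Space X]
    [Module ℝ X] [IsScalarTower ℝ ℂ X] [LocallyConvexSpace ℝ X]
    (x : ℕ → X) (hx : LinearIndependent ℂ x) :
    ∃ t : ℕ → ℝ, (∀ n, 0 < t n) ∧
      ∀ b : ℕ → ℂ, Summable (fun n => t n * ‖b n‖) →
        (∀ p : Seminorm ℂ X, Continuous p → Summable fun n => p (b n • x n)) ∧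
        (∃ s : X, Filter.Tendsto (fun N => ∑ n ∈ Finset.range N, b n • x n)
          Filter.atTop (nhds s)) ∧
        (Filter.Tendsto (fun N => ∑ n ∈ Finset.range N, b n • x n)
            Filter.atTop (nhds 0) → ∀ n, b n = 0) := by
  classical
  haveI : ContinuousSMul ℝ X := IsScalarTower.continuousSMul ℂ
  open scoped ComplexOrder in
  haveI : LocallyConvexSpace ℂ X := by
    refine LocallyConvexSpace.ofBasisZero ℂ X id (fun s : Set X => s ∈ 𝓝 (0:X) ∧ Convex ℝ s)
      (LocallyConvexSpace.convex_basis_zero ℝ X) ?_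
    intro S hS u hu v hv a c ha hc hac
    rw [Complex.nonneg_iff] at ha hc
    have ea : a = (a.re : ℂ) := Complex.ext (by simp) (by simp [← ha.2])
    have ec : c = (c.re : ℂ) := Complex.ext (by simp) (by simp [← hc.2])
    have hr : a.re + c.re = 1 := by have := congrArg Complex.re hac; simpa using this
    have key : ∀ (r : ℝ) (w : X), (r : ℂ) • w = r • w := fun r w => by
      rw [← smul_one_smul ℂ r w, Complex.real_smul, mul_one]
    rw [ea, ec, key, key]
    exact hS.2 hu hv ha.1 hc.1 hr
  have hp : WithSeminorms (gaugeSeminormFamily ℂ X) := with_gaugeSeminormFamily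
  obtain ⟨U, hU⟩ := (𝓝 (0:X)).exists_antitone_basis
  have hqex : ∀ k : ℕ, ∃ q : Seminorm ℂ X, Continuous q ∧ ∀ v : X, q v < 1 → v ∈ U k := by
    intro k
    obtain ⟨s, r, hr, hball⟩ := (hp.mem_nhds_iff 0 (U k)).1 (hU.mem k)
    set P := s.sup (gaugeSeminormFamily ℂ X) with hP
    have hPc : Continuous P :=
      Seminorm.continuous (r := r) (hp.hasBasis_zero_ball.mem_of_mem (i := (s, r)) hr)
    set c : ℝ≥0 := (r⁻¹).toNNReal with hc
    have hcr : (c : ℝ) = r⁻¹ := Real.coe_toNNReal _ (inv_nonneg.2 hr.le)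
    have happ : ∀ v, (c • P) v = r⁻¹ * P v := by
      intro v; rw [Seminorm.smul_apply, NNReal.smul_def, hcr, smul_eq_mul]
    refine ⟨c • P, ?_, ?_⟩
    · have : ⇑(c • P) = fun v => r⁻¹ * P v := funext happ
      rw [this]; exact continuous_const.mul hPc
    · intro v hv
      apply hball
      rw [Seminorm.mem_ball_zero]
      rw [happ] at hv
      calc P v = r * (r⁻¹ * P v) := by field_simp
      _ < r * 1 := mul_lt_mul_of_pos_left hv hr
      _ = r := mul_one r
  choose q hqc hqU using hqex
  -- the increasing fundamental sequence of seminorms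
  set pk : ℕ → Seminorm ℂ X := fun k => ∑ j ∈ Finset.range (k+1), q j with hpk
  have pk_apply : ∀ k v, pk k v = ∑ j ∈ Finset.range (k+1), q j v := fun k v =>
    aux_seminorm_sum_apply _ _ _
  have pk_mono : ∀ {k l : ℕ}, k ≤ l → ∀ v, pk k v ≤ pk l v := by
    intro k l h v
    rw [pk_apply, pk_apply]
    exact Finset.sum_le_sum_of_subset_of_nonneg
      (Finset.range_subset_range.2 (by omega)) (fun i _ _ => apply_nonneg _ v)
  have pk_cont : ∀ k, Continuous (pk k) := by
    intro k
    have : ⇑(pk k) = fun v => ∑ j ∈ Finset.range (k+1), q j v := funext (pk_apply k)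
    rw [this]
    exact continuous_finset_sum _ fun j _ => hqc j
  have q_le_pk : ∀ k v, q k v ≤ pk k v := by
    intro k v
    rw [pk_apply]
    exact Finset.single_le_sum (fun i _ => apply_nonneg _ v)
      (Finset.mem_range.2 (by omega))
  -- (P3) basis property
  have hbasis : ∀ W ∈ 𝓝 (0:X), ∃ k, ∀ v, pk k v < 1 → v ∈ W := by
    intro W hW
    obtain ⟨k, -, hk⟩ := hU.toHasBasis.mem_iff.1 hW
    exact ⟨k, fun v hv => hk (hqU k v (lt_of_le_of_lt (q_le_pk k v) hv))⟩
  -- (P4) domination of continuous seminorms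
  have hdom : ∀ p : Seminorm ℂ X, Continuous p → ∃ k, ∀ v, p v ≤ pk k v := by
    intro p hpc
    obtain ⟨k, hk⟩ := hbasis (p.ball 0 1) (Seminorm.ball_mem_nhds hpc one_pos)
    refine ⟨k, fun v => ?_⟩
    refine le_of_forall_pos_lt_add (fun ε hε => ?_)
    set d : ℝ := pk k v + ε with hd
    have hdpos : (0:ℝ) < d := add_pos_of_nonneg_of_pos (apply_nonneg _ _) hε
    have hnd : ‖((d:ℝ) : ℂ)⁻¹‖ = d⁻¹ := by
      rw [norm_inv, Complex.norm_real, Real.norm_of_nonneg hdpos.le]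
    have h0 : pk k v < d := lt_add_of_pos_right _ hε
    have h1 : pk k (((d:ℝ) : ℂ)⁻¹ • v) < 1 := by
      rw [map_smul_eq_mul, hnd]
      calc d⁻¹ * pk k v < d⁻¹ * d := mul_lt_mul_of_pos_left h0 (inv_pos.2 hdpos)
      _ = 1 := inv_mul_cancel₀ hdpos.ne'
    have h2 := hk _ h1
    rw [Seminorm.mem_ball_zero, map_smul_eq_mul, hnd] at h2
    calc p v = d * (d⁻¹ * p v) := by field_simp
    _ < d * 1 := mul_lt_mul_of_pos_left h2 hdpos
    _ = pk k v + ε := by rw [mul_one]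
  -- finite-dimensional lower estimate
  have hFD : ∀ M : ℕ, ∃ k, ∀ a : Fin (M+1) → ℂ, ∀ j : Fin (M+1),
      ‖a j‖ ≤ pk k (∑ i, a i • x (i : ℕ)) := by
    intro M
    have hxF : LinearIndependent ℂ fun i : Fin (M+1) => x (i : ℕ) :=
      hx.comp _ Fin.val_injective
    set T : (Fin (M+1) → ℂ) →ₗ[ℂ] X :=
      { toFun := fun a => ∑ i, a i • x (i : ℕ)
        map_add' := by intro a b; simp [add_smul, Finset.sum_add_distrib]
        map_smul' := by intro c a; simp [Finset.smul_sum, smul_smul] } with hT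
    have hTapp : ∀ a : Fin (M+1) → ℂ, T a = ∑ i, a i • x (i : ℕ) := fun a => rfl
    have hTcont : Continuous T := LinearMap.continuous_of_finiteDimensional T
    have hK : IsCompact (T '' Metric.sphere 0 1) :=
      (isCompact_sphere 0 1).image hTcont
    have h0K : (0:X) ∉ T '' Metric.sphere 0 1 := by
      rintro ⟨a, ha, hTa⟩
      have hz : a = 0 := by
        have := Fintype.linearIndependent_iff.1 hxF a (by rw [← hTapp]; exact hTa)
        funext i; exact this i
      rw [hz] at ha
      simp at ha
    obtain ⟨k, hk⟩ := hbasis _ (hK.isClosed.isOpen_compl.mem_nhds h0K)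
    refine ⟨k, fun a j => ?_⟩
    rcases eq_or_ne a 0 with rfl | ha
    · simp
    · have hna : 0 < ‖a‖ := norm_pos_iff.2 ha
      have hnc : ‖((‖a‖ : ℝ) : ℂ)⁻¹‖ = ‖a‖⁻¹ := by
        rw [norm_inv, Complex.norm_real, Real.norm_of_nonneg hna.le]
      have hmemsphere : ((‖a‖ : ℂ))⁻¹ • a ∈ Metric.sphere (0 : Fin (M+1) → ℂ) 1 := by
        rw [mem_sphere_iff_norm, sub_zero, norm_smul, hnc, inv_mul_cancel₀ hna.ne']
      have hnotin : T (((‖a‖ : ℂ))⁻¹ • a) ∈ T '' Metric.sphere 0 1 :=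
        Set.mem_image_of_mem _ hmemsphere
      have hge : ¬ pk k (T (((‖a‖ : ℂ))⁻¹ • a)) < 1 := fun hlt => (hk _ hlt) hnotin
      push_neg at hge
      rw [map_smul, map_smul_eq_mul, hnc] at hge
      have key : ‖a‖ ≤ pk k (T a) := by
        calc ‖a‖ = ‖a‖ * 1 := (mul_one _).symm
        _ ≤ ‖a‖ * (‖a‖⁻¹ * pk k (T a)) := by
            exact mul_le_mul_of_nonneg_left hge hna.le
        _ = pk k (T a) := by field_simp
      calc ‖a j‖ ≤ ‖a‖ := norm_le_pi_norm a j
      _ ≤ pk k (T a) := key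
      _ = pk k (∑ i, a i • x (i : ℕ)) := by rw [hTapp]
  choose K0 hK0 using hFD
  set kk : ℕ → ℕ := fun M => max M ((Finset.range (M+1)).sup K0) with hkk
  have kk_mono : Monotone kk := fun a c hac =>
    max_le_max hac (Finset.sup_mono (Finset.range_subset_range.2 (by omega)))
  have kk_ge : ∀ M, M ≤ kk M := fun M => le_max_left _ _
  have kk_geK : ∀ M, K0 M ≤ kk M := fun M =>
    le_trans (Finset.le_sup (Finset.mem_range.2 (by omega))) (le_max_right _ _)
  -- the weights
  refine ⟨fun n => 1 + pk (kk n) (x n),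
    fun n => add_pos_of_pos_of_nonneg one_pos (apply_nonneg _ _), ?_⟩
  intro b hb
  set t : ℕ → ℝ := fun n => 1 + pk (kk n) (x n) with ht
  set g : ℕ → ℝ := fun n => t n * ‖b n‖ with hg
  have hg0 : ∀ n, 0 ≤ g n :=
    fun n => mul_nonneg (add_pos_of_pos_of_nonneg one_pos (apply_nonneg _ _)).le (norm_nonneg _)
  have hEst : ∀ k n : ℕ, k ≤ kk n → pk k (b n • x n) ≤ g n := by
    intro k n hkn
    rw [map_smul_eq_mul]
    have h1 : pk k (x n) ≤ t n :=
      le_trans (pk_mono hkn (x n)) (le_add_of_nonneg_left zero_le_one)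
    calc ‖b n‖ * pk k (x n) ≤ ‖b n‖ * t n :=
      mul_le_mul_of_nonneg_left h1 (norm_nonneg _)
    _ = g n := mul_comm _ _
  -- (A1)
  have hA1 : ∀ p : Seminorm ℂ X, Continuous p → Summable fun n => p (b n • x n) := by
    intro p hpc
    obtain ⟨k, hk⟩ := hdom p hpc
    rw [← summable_nat_add_iff k]
    refine Summable.of_nonneg_of_le (fun n => apply_nonneg _ _) (fun n => ?_)
      ((summable_nat_add_iff k).2 hb)
    calc p (b (n+k) • x (n+k)) ≤ pk k (b (n+k) • x (n+k)) := hk _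
    _ ≤ g (n+k) := hEst k (n+k) (le_trans (by omega) (kk_ge (n+k)))
  -- (A2)
  have hsummX : Summable (fun n => b n • x n) := by
    rw [summable_iff_vanishing]
    intro e he
    obtain ⟨k, hk⟩ := hbasis e he
    obtain ⟨s, hs⟩ := summable_iff_vanishing.1 hb (Set.Iio (1:ℝ)) (Iio_mem_nhds one_pos)
    obtain ⟨M, hM⟩ := s.exists_nat_subset_range
    refine ⟨Finset.range (max k M), fun u hu => ?_⟩
    have hd : Disjoint u s :=
      hu.mono_right ((hM.trans (Finset.range_subset_range.2 (le_max_right _ _))))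
    have hub : ∀ n ∈ u, max k M ≤ n := by
      intro n hn
      by_contra hlt
      exact (Finset.disjoint_left.1 hu) hn (Finset.mem_range.2 (by omega))
    apply hk
    calc pk k (∑ n ∈ u, b n • x n) ≤ ∑ n ∈ u, pk k (b n • x n) :=
      aux_seminorm_map_sum_le _ _ _
    _ ≤ ∑ n ∈ u, g n := Finset.sum_le_sum (fun n hn =>
        hEst k n (le_trans (le_trans (le_max_left _ _) (hub n hn)) (kk_ge n)))
    _ < 1 := hs u hd
  refine ⟨hA1, ⟨_, hsummX.hasSum.tendsto_sum_nat⟩, ?_⟩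
  -- (B)
  intro hzero n₀
  set S : ℕ → X := fun N => ∑ n ∈ Finset.range N, b n • x n with hS
  have htail : Tendsto (fun N => ∑' j, g (j + N)) atTop (𝓝 0) := tendsto_sum_nat_add g
  have key : ∀ M : ℕ, n₀ < M + 1 → ‖b n₀‖ ≤ ∑' j, g (j + (M+1)) := by
    intro M hM
    have hgsummtail : Summable (fun j => g (j + (M+1))) := (summable_nat_add_iff (M+1)).2 hb
    have h1 : ‖b n₀‖ ≤ pk (kk M) (S (M+1)) := by
      have h2 := hK0 M (fun i : Fin (M+1) => b (i : ℕ)) ⟨n₀, hM⟩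
      have h3 : (∑ i : Fin (M+1), b (i:ℕ) • x (i:ℕ)) = S (M+1) :=
        Fin.sum_univ_eq_sum_range (fun n => b n • x n) (M+1)
      rw [h3] at h2
      exact le_trans h2 (pk_mono (kk_geK M) _)
    have h2 : ∀ L, M + 1 ≤ L →
        pk (kk M) (S (M+1)) ≤ pk (kk M) (S L) + ∑' j, g (j + (M+1)) := by
      intro L hL
      have hsplit : S (M+1) = S L - ∑ n ∈ Finset.Ico (M+1) L, b n • x n := by
        rw [hS]
        simp only []
        rw [Finset.sum_Ico_eq_sub _ hL]
        abel
      rw [hsplit]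
      refine le_trans (map_sub_le_add _ _ _) (add_le_add_right ?_ _)
      calc pk (kk M) (∑ n ∈ Finset.Ico (M+1) L, b n • x n)
          ≤ ∑ n ∈ Finset.Ico (M+1) L, pk (kk M) (b n • x n) :=
          aux_seminorm_map_sum_le _ _ _
      _ ≤ ∑ n ∈ Finset.Ico (M+1) L, g n := Finset.sum_le_sum (fun n hn =>
          hEst (kk M) n (le_trans (kk_mono (by
            have := (Finset.mem_Ico.1 hn).1; omega)) (le_refl _)))
      _ = ∑ j ∈ Finset.range (L - (M+1)), g (j + (M+1)) := by
          rw [Finset.sum_Ico_eq_sum_range]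
          exact Finset.sum_congr rfl (fun j _ => by rw [add_comm])
      _ ≤ ∑' j, g (j + (M+1)) :=
          Summable.sum_le_tsum _ (fun j _ => hg0 _) hgsummtail
    have h5 : Tendsto (fun L => pk (kk M) (S L) + ∑' j, g (j + (M+1))) atTop
        (𝓝 (0 + ∑' j, g (j + (M+1)))) := by
      refine Tendsto.add ?_ tendsto_const_nhds
      have h6 := ((pk_cont (kk M)).tendsto 0).comp hzero
      simpa [map_zero, Function.comp_def] using h6
    have h6 : pk (kk M) (S (M+1)) ≤ 0 + ∑' j, g (j + (M+1)) :=
      ge_of_tendsto h5 (eventually_atTop.2 ⟨M+1, fun L hL => h2 L hL⟩)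
    rw [zero_add] at h6
    exact le_trans h1 h6
  have htail' : Tendsto (fun M : ℕ => ∑' j, g (j + (M+1))) atTop (𝓝 0) :=
    htail.comp (tendsto_add_atTop_nat 1)
  have hfin : ‖b n₀‖ ≤ 0 :=
    ge_of_tendsto htail' (eventually_atTop.2 ⟨n₀, fun M hM => key M (by omega)⟩)
  exact norm_le_zero_iff.1 hfin
end

section
/- Every infinite-dimensional Fréchet space X over ℂ has algebraic dimension (as a ℂ-vector space) at least the cardinality of the continuum 𝔠 = 2^ℵ₀. -/
open Filter Set Topology Pointwise Uniformity

set_option linter.unusedSectionVars false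

section Aux

variable {X : Type*} [AddCommGroup X] [Module ℂ X] [UniformSpace X] [IsUniformAddGroup X]
    [ContinuousSMul ℂ X] [CompleteSpace X] [FirstCountableTopology X] [T0Space X]
    [Module ℝ X] [IsScalarTower ℝ ℂ X] [LocallyConvexSpace ℝ X]

lemma aux_functional (F : Submodule ℂ X) (hF : IsClosed (F : Set X)) {x : X} (hx : x ∉ F) :
    ∃ f : X →L[ℂ] ℂ, f x = 1 ∧ ∀ a ∈ F, f a = 0 := by
  have hconv : Convex ℝ (F : Set X) := (F.restrictScalars ℝ).convex
  obtain ⟨f, u, hux, hfu⟩ := RCLike.geometric_hahn_banach_point_closed (𝕜 := ℂ) hconv hF hx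
  have hF0 : ∀ a ∈ F, f a = 0 := by
    intro a ha
    by_contra hfa
    have hns : (0:ℝ) < Complex.normSq (f a) := Complex.normSq_pos.mpr hfa
    have key : ∀ t : ℝ, u < t * Complex.normSq (f a) := by
      intro t
      have h1 := hfu (((t:ℂ) * (starRingEnd ℂ) (f a)) • a) (F.smul_mem _ ha)
      have h2 : f (((t:ℂ) * (starRingEnd ℂ) (f a)) • a)
          = (t:ℂ) * ((starRingEnd ℂ) (f a) * f a) := by
        rw [map_smul]; simp [smul_eq_mul]; ring
      rw [h2] at h1
      simpa [Complex.normSq_eq_conj_mul_self, Complex.normSq_apply] using h1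
    have := key ((u - 1) / Complex.normSq (f a))
    rw [div_mul_cancel₀ _ hns.ne'] at this
    linarith
  have hu0 : u < 0 := by simpa using hfu 0 F.zero_mem
  have hfx : f x ≠ 0 := by
    intro h0
    rw [h0] at hux; simp at hux; linarith
  refine ⟨(f x)⁻¹ • f, ?_, fun a ha => ?_⟩
  · simp [inv_mul_cancel₀ hfx]
  · simp [hF0 a ha]

lemma aux_step (h : ¬ FiniteDimensional ℂ X) (n : ℕ) (xs : ℕ → X) (fs : ℕ → X →L[ℂ] ℂ) :
    ∃ (x : X) (f : X →L[ℂ] ℂ), (∀ i < n, fs i x = 0) ∧ f x = 1 ∧ ∀ i < n, f (xs i) = 0 := by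
  set F : Submodule ℂ X := Submodule.span ℂ (xs '' Iio n) with hFdef
  have hFfin : FiniteDimensional ℂ F :=
    FiniteDimensional.span_of_finite ℂ ((Set.finite_Iio n).image xs)
  set K : Submodule ℂ X := ⨅ i : Fin n, LinearMap.ker ((fs i) : X →ₗ[ℂ] ℂ) with hKdef
  have hK : ¬ (K ≤ F) := by
    intro hKF
    apply h
    have hKer : K = LinearMap.ker (LinearMap.pi (fun i : Fin n => ((fs i) : X →ₗ[ℂ] ℂ))) :=
      (LinearMap.ker_pi _).symm
    have h1 : FiniteDimensional ℂ (X ⧸ K) := by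
      rw [hKer]
      exact Module.Finite.equiv (LinearMap.quotKerEquivRange _).symm
    have h2 : FiniteDimensional ℂ K := Submodule.finiteDimensional_of_le hKF
    rw [FiniteDimensional, ← Module.rank_lt_aleph0_iff, ← rank_quotient_add_rank_of_divisionRing K]
    exact Cardinal.add_lt_aleph0 (Module.rank_lt_aleph0 ℂ (X ⧸ K)) (Module.rank_lt_aleph0 ℂ K)
  obtain ⟨x, hxK, hxF⟩ := SetLike.not_le_iff_exists.mp hK
  have hFc : IsClosed (F : Set X) := Submodule.closed_of_finiteDimensional F
  obtain ⟨f, hfx, hfF⟩ := aux_functional F hFc hxF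
  refine ⟨x, f, fun i hi => ?_, hfx, fun i hi => ?_⟩
  · have := Submodule.mem_iInf (fun i : Fin n => LinearMap.ker ((fs i) : X →ₗ[ℂ] ℂ)) |>.mp hxK ⟨i, hi⟩
    simpa using this
  · exact hfF _ (Submodule.subset_span ⟨i, hi, rfl⟩)

lemma aux_biorthogonal (h : ¬ FiniteDimensional ℂ X) :
    ∃ (xs : ℕ → X) (fs : ℕ → X →L[ℂ] ℂ),
      ∀ n, (∀ i < n, fs i (xs n) = 0) ∧ fs n (xs n) = 1 ∧ ∀ i < n, fs n (xs i) = 0 := by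
  classical
  let step : ℕ → (ℕ → X × (X →L[ℂ] ℂ)) → X × (X →L[ℂ] ℂ) := fun n prev =>
    ⟨(aux_step h n (fun i => (prev i).1) (fun i => (prev i).2)).choose,
     (aux_step h n (fun i => (prev i).1) (fun i => (prev i).2)).choose_spec.choose⟩
  have step_spec : ∀ n prev,
      (∀ i < n, (prev i).2 (step n prev).1 = 0) ∧ (step n prev).2 (step n prev).1 = 1 ∧
        ∀ i < n, (step n prev).2 (prev i).1 = 0 := fun n prev =>
    (aux_step h n (fun i => (prev i).1) (fun i => (prev i).2)).choose_spec.choose_spec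
  let P : ℕ → ℕ → X × (X →L[ℂ] ℂ) := fun n => Nat.rec (fun _ => (0, 0))
    (fun m prev => Function.update prev m (step m prev)) n
  let a : ℕ → X × (X →L[ℂ] ℂ) := fun n => step n (P n)
  have hP : ∀ n m, m < n → P n m = a m := by
    intro n
    induction n with
    | zero => intro m hm; omega
    | succ k ih =>
      intro m hm
      show Function.update (P k) k (step k (P k)) m = a m
      rcases Nat.lt_or_ge m k with hmk | hmk
      · rw [Function.update_of_ne (by omega)]; exact ih m hmk
      · have : m = k := by omega
        subst this
        rw [Function.update_self]
  refine ⟨fun n => (a n).1, fun n => (a n).2, fun n => ?_⟩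
  obtain ⟨h1, h2, h3⟩ := step_spec n (P n)
  refine ⟨fun i hi => ?_, h2, fun i hi => ?_⟩
  · show (a i).2 (a n).1 = 0
    rw [← hP n i hi]; exact h1 i hi
  · show (a n).2 (a i).1 = 0
    rw [← hP n i hi]; exact h3 i hi

lemma aux_sum_mem {u : ℕ → Set X} (h0 : ∀ n, (0:X) ∈ u n)
    (hadd : ∀ n, u (n+1) + u (n+1) ⊆ u n) (a : ℕ → X) :
    ∀ d m, (∀ n, m ≤ n → n < m + d → a n ∈ u (n+1)) →
      (∑ n ∈ Finset.Ico m (m+d), a n) ∈ u m := by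
  intro d
  induction d with
  | zero => intro m _; simp [h0 m]
  | succ d ih =>
    intro m hm
    have hidx : m + (d+1) = (m+1) + d := by omega
    rw [hidx, Finset.sum_eq_sum_Ico_succ_bot (by omega)]
    exact hadd m (Set.add_mem_add (hm m le_rfl (by omega))
      (ih (m+1) (fun n hn hn' => hm n (by omega) (by omega))))

end Aux

/-- Corollary 4.3: every infinite-dimensional Fréchet space over `ℂ` (a complete,
metrizable — first countable and `T0` — locally convex topological vector space) has
algebraic dimension at least the cardinality of the continuum. -/
theorem continuum_le_rank_of_infinite_dimensional_frechet
    {X : Type*} [AddCommGroup X] [Module ℂ X] [UniformSpace X] [IsUniformAddGroup X]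
    [ContinuousSMul ℂ X] [CompleteSpace X] [FirstCountableTopology X] [T0Space X]
    [Module ℝ X] [IsScalarTower ℝ ℂ X] [LocallyConvexSpace ℝ X]
    (h : ¬ FiniteDimensional ℂ X) :
    Cardinal.continuum ≤ Module.rank ℂ X := by
  classical
  obtain ⟨xs, fs, hbi⟩ := aux_biorthogonal h
  obtain ⟨u₀, hu₀, hadd₀⟩ := IsTopologicalAddGroup.exists_antitone_basis_nhds_zero X
  set u : ℕ → Set X := fun n => u₀ n ∩ (fun x => -x) ⁻¹' (u₀ n) with hu_def
  have humem : ∀ n, u n ∈ 𝓝 (0:X) := fun n =>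
    Filter.inter_mem (hu₀.toHasBasis.mem_of_mem trivial)
      ((continuous_neg.tendsto' (0:X) 0 neg_zero) (hu₀.toHasBasis.mem_of_mem trivial))
  have h0 : ∀ n, (0:X) ∈ u n := fun n => mem_of_mem_nhds (humem n)
  have hsymm : ∀ n x, x ∈ u n → -x ∈ u n := fun n x hx => ⟨hx.2, by simpa using hx.1⟩
  have hadd : ∀ n, u (n+1) + u (n+1) ⊆ u n := by
    rintro n z ⟨x, hx, y, hy, rfl⟩
    refine ⟨hadd₀ n (Set.add_mem_add hx.1 hy.1), ?_⟩
    have : -(x + y) = (-x) + (-y) := by abel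
    show -(x+y) ∈ u₀ n
    rw [this]
    exact hadd₀ n (Set.add_mem_add hx.2 hy.2)
  -- choose scaling factors
  have hδex : ∀ n, ∃ δ : ℝ, 0 < δ ∧ ∀ c : ℂ, ‖c‖ ≤ δ → c • xs n ∈ u (n+1) := by
    intro n
    have hc : Tendsto (fun c : ℂ => c • xs n) (𝓝 0) (𝓝 0) := by
      have := (show Continuous fun c : ℂ => c • xs n from continuous_id.smul (continuous_const : Continuous fun _ : ℂ => xs n)).tendsto (0:ℂ)
      simpa using this
    have hev : ∀ᶠ c : ℂ in 𝓝 0, c • xs n ∈ u (n+1) :=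
      hc.eventually (eventually_mem_set.mpr (humem (n+1)))
    obtain ⟨ε, hε, hball⟩ := Metric.eventually_nhds_iff.mp hev
    refine ⟨ε/2, by positivity, fun c hc' => hball ?_⟩
    rw [dist_zero_right]
    linarith
  choose δ hδpos hδ using hδex
  set y : ℕ → X := fun n => ((δ n : ℝ) : ℂ) • xs n with hy_def
  set S : ℝ → ℕ → X := fun t k => ∑ n ∈ Finset.range k, ((t : ℂ))^n • y n with hS_def
  have hterm : ∀ t, t ∈ Ioo (0:ℝ) 1 → ∀ n, ((t:ℂ))^n • y n ∈ u (n+1) := by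
    intro t ht n
    have heq : ((t:ℂ))^n • y n = (((t:ℂ))^n * ((δ n : ℝ) : ℂ)) • xs n := by
      rw [hy_def, smul_smul]
    rw [heq]
    apply hδ
    rw [norm_mul, norm_pow, Complex.norm_real, Complex.norm_real,
      Real.norm_eq_abs, Real.norm_eq_abs, abs_of_pos ht.1, abs_of_pos (hδpos n)]
    calc t^n * δ n ≤ 1 * δ n := by
          apply mul_le_mul_of_nonneg_right _ (hδpos n).le
          exact pow_le_one₀ ht.1.le ht.2.le
      _ = δ n := one_mul _
  have hubasis : (𝓝 (0:X)).HasBasis (fun _ : ℕ => True) u :=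
    hu₀.toHasBasis.to_hasBasis' (fun i _ => ⟨i, trivial, inter_subset_left⟩)
      (fun i _ => humem i)
  have hbasis : (𝓤 X).HasBasis (fun _ : ℕ => True)
      (fun n => {p : X × X | p.2 - p.1 ∈ u n}) := by
    rw [uniformity_eq_comap_nhds_zero X]
    exact hubasis.comap _
  have hdiff : ∀ t, t ∈ Ioo (0:ℝ) 1 → ∀ N n, N ≤ n → S t n - S t N ∈ u N := by
    intro t ht N n hNn
    have heq : S t n - S t N = ∑ k ∈ Finset.Ico N n, ((t:ℂ))^k • y k := by
      rw [hS_def]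
      rw [Finset.sum_Ico_eq_sub _ hNn]
    rw [heq]
    have := aux_sum_mem h0 hadd (fun k => ((t:ℂ))^k • y k) (n - N) N
      (fun k _ _ => hterm t ht k)
    have hn : N + (n - N) = n := by omega
    rwa [hn] at this
  have hcauchy : ∀ t, t ∈ Ioo (0:ℝ) 1 → CauchySeq (S t) := by
    intro t ht
    rw [hbasis.cauchySeq_iff']
    intro i _
    refine ⟨i, fun n hn => ?_⟩
    show S t i - S t n ∈ u i
    have h1 := hdiff t ht i n hn
    have h2 := hsymm i _ h1
    rwa [neg_sub] at h2
  have hlim : ∀ t : Ioo (0:ℝ) 1, ∃ l, Tendsto (S t) atTop (𝓝 l) := fun t =>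
    cauchySeq_tendsto_of_complete (hcauchy t t.2)
  choose v hv using hlim
  -- values of the functionals on the limits
  have hfval : ∀ (t : Ioo (0:ℝ) 1) (m : ℕ),
      fs m (v t) = (((t : ℝ) : ℂ))^m * ((δ m : ℝ) : ℂ) := by
    intro t m
    have h1 : Tendsto (fun k => fs m (S (t:ℝ) k)) atTop (𝓝 (fs m (v t))) :=
      ((fs m).continuous.tendsto _).comp (hv t)
    have h2 : ∀ k, m < k → fs m (S (t:ℝ) k) = (((t:ℝ):ℂ))^m * ((δ m : ℝ) : ℂ) := by
      intro k hk
      rw [hS_def]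
      simp only [map_sum, map_smul, smul_eq_mul]
      rw [Finset.sum_eq_single m]
      · rw [hy_def]
        simp only [map_smul, smul_eq_mul]
        rw [(hbi m).2.1]
        ring
      · intro n hn hnm
        rw [hy_def]
        simp only [map_smul, smul_eq_mul]
        rcases Nat.lt_or_ge n m with h' | h'
        · rw [(hbi m).2.2 n h']; ring
        · have : m < n := by omega
          rw [(hbi n).1 m this]; ring
      · intro hm
        exact absurd (Finset.mem_range.mpr hk) hm
    have h3 : Tendsto (fun k => fs m (S (t:ℝ) k)) atTop
        (𝓝 ((((t:ℝ):ℂ))^m * ((δ m : ℝ) : ℂ))) := by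
      apply Tendsto.congr' _ tendsto_const_nhds
      filter_upwards [eventually_ge_atTop (m+1)] with k hk
      exact (h2 k (by omega)).symm
    exact tendsto_nhds_unique h1 h3
  -- linear independence of the family v
  have hδC : ∀ m, ((δ m : ℝ) : ℂ) ≠ 0 := fun m => by
    exact_mod_cast (hδpos m).ne'
  have hli : LinearIndependent ℂ (fun t : Ioo (0:ℝ) 1 => v t) := by
    rw [linearIndependent_iff']
    intro s g hsum i hi
    have hzero : ∀ m : ℕ, ∑ j ∈ s, g j * (((j : ℝ) : ℂ))^m = 0 := by
      intro m
      have h1 : fs m (∑ j ∈ s, g j • v j) = 0 := by rw [hsum]; simp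
      rw [map_sum] at h1
      simp only [map_smul, smul_eq_mul, hfval] at h1
      have h2 : (∑ j ∈ s, g j * (((j : ℝ) : ℂ))^m) * ((δ m : ℝ) : ℂ) = 0 := by
        rw [Finset.sum_mul, ← h1]
        apply Finset.sum_congr rfl
        intro j _
        ring
      rcases mul_eq_zero.mp h2 with h' | h'
      · exact h'
      · exact absurd h' (hδC m)
    set n := s.card with hn_def
    let e : Fin n ≃ {x // x ∈ s} := s.equivFin.symm
    have hinj : Function.Injective (fun j : Fin n => ((((e j : Ioo (0:ℝ) 1)) : ℝ) : ℂ)) := by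
      intro a b hab
      have hab' : (((e a : Ioo (0:ℝ) 1)) : ℝ) = (((e b : Ioo (0:ℝ) 1)) : ℝ) :=
        Complex.ofReal_injective (by simpa using hab)
      exact e.injective (Subtype.ext (Subtype.ext hab'))
    have hv0 : (fun j : Fin n => g (e j)) = 0 := by
      apply Matrix.eq_zero_of_forall_pow_sum_mul_pow_eq_zero hinj
      intro i'
      have hcalc : ∑ j : Fin n, g (e j) * ((((e j : Ioo (0:ℝ) 1)) : ℝ) : ℂ)^(i' : ℕ)
          = ∑ x : {x // x ∈ s}, g x * ((((x : Ioo (0:ℝ) 1)) : ℝ) : ℂ)^(i' : ℕ) :=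
        e.sum_comp (fun x : {x // x ∈ s} => g x * ((((x : Ioo (0:ℝ) 1)) : ℝ) : ℂ)^(i' : ℕ))
      rw [hcalc, Finset.sum_coe_sort s (fun x => g x * (((x : ℝ) : ℂ))^(i' : ℕ))]
      exact hzero (i' : ℕ)
    have := congrFun hv0 (e.symm ⟨i, hi⟩)
    simpa using this
  have hcard := hli.cardinal_lift_le_rank
  rw [Cardinal.mk_Ioo_real (zero_lt_one), Cardinal.lift_continuum] at hcard
  calc Cardinal.continuum ≤ Cardinal.lift.{0} (Module.rank ℂ X) := hcard
    _ = Module.rank ℂ X := Cardinal.lift_uzero _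
end

section
/- Let T be an injective continuous linear operator with dense range acting on a Fréchet space X over ℂ. Then the subspace X_T = ⋂_{n≥0} Tⁿ(X) is dense in X. -/
open Filter Topology Set Uniformity

/-- Proposition 4.8 (density part): if `T` is an injective continuous linear operator
with dense range on a complex Fréchet space `X`, then `X_T = ⋂ₙ Tⁿ(X)` is dense in `X`. -/
theorem dense_iInter_range_pow
    {X : Type*} [AddCommGroup X] [Module ℂ X] [UniformSpace X] [IsUniformAddGroup X]
    [ContinuousSMul ℂ X] [CompleteSpace X] [FirstCountableTopology X] [T0Space X]
    [Module ℝ X] [IsScalarTower ℝ ℂ X] [LocallyConvexSpace ℝ X]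
    (T : X →ₗ[ℂ] X) (hcont : Continuous T) (hinj : Function.Injective T)
    (hdense : DenseRange T) :
    Dense (⋂ n : ℕ, ((LinearMap.range (T ^ n) : Submodule ℂ X) : Set X)) := by
  -- continuity of powers of T
  have hcontpow : ∀ n : ℕ, Continuous (T ^ n : X →ₗ[ℂ] X) := by
    intro n
    induction n with
    | zero => simpa [pow_zero, Module.End.one_eq_id] using continuous_id
    | succ n ih =>
      have h : (T ^ (n + 1) : X →ₗ[ℂ] X) = (T ^ n) * T := pow_succ T n
      rw [h]
      simpa [Module.End.mul_eq_comp, LinearMap.coe_comp] using ih.comp hcont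
  -- countable antitone basis of 𝓝 0
  obtain ⟨V, hV⟩ := (𝓝 (0 : X)).exists_antitone_basis
  -- symmetric halving
  have half : ∀ s : Set X, s ∈ 𝓝 (0 : X) → ∃ w, w ∈ 𝓝 (0 : X) ∧
      (∀ a ∈ w, ∀ b ∈ w, a + b ∈ s) ∧ (∀ a ∈ w, -a ∈ w) := by
    intro s hs
    obtain ⟨w, hw, hww⟩ := exists_nhds_zero_half hs
    refine ⟨w ∩ (fun a => -a) ⁻¹' w,
      Filter.inter_mem hw (continuous_neg.continuousAt.preimage_mem_nhds (by simpa using hw)),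
      ?_, ?_⟩
    · exact fun a ha b hb => hww a ha.1 b hb.1
    · rintro a ⟨h1, h2⟩
      exact ⟨h2, by simpa using h1⟩
  choose! h hmem hadd hsymm using half
  -- density criterion
  intro x
  rw [mem_closure_iff_nhds]
  intro t ht
  have ht0 : (fun u => x + u) ⁻¹' t ∈ 𝓝 (0 : X) :=
    (continuous_const.add continuous_id).continuousAt.preimage_mem_nhds (by simpa using ht)
  obtain ⟨U', hU'mem, hU'closed, hU'sub⟩ := exists_mem_nhds_isClosed_subset ht0
  -- the chain W
  set W : ℕ → Set X := fun n => Nat.rec (h U') (fun n w => h (w ∩ V n)) n with hWdef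
  have W0 : W 0 = h U' := rfl
  have Wsucc : ∀ n, W (n + 1) = h (W n ∩ V n) := fun n => rfl
  have Wmem : ∀ n, W n ∈ 𝓝 (0 : X) := by
    intro n
    induction n with
    | zero => exact hmem U' hU'mem
    | succ n ih =>
      rw [Wsucc]
      exact hmem _ (Filter.inter_mem ih (hV.toHasBasis.mem_of_mem trivial))
  have Wzero : ∀ n, (0 : X) ∈ W n := fun n => mem_of_mem_nhds (Wmem n)
  have Wadd : ∀ n, ∀ a ∈ W (n + 1), ∀ b ∈ W (n + 1), a + b ∈ W n := by
    intro n a ha b hb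
    have hWV : W n ∩ V n ∈ 𝓝 (0 : X) :=
      Filter.inter_mem (Wmem n) (hV.toHasBasis.mem_of_mem trivial)
    have := hadd _ hWV a (by rwa [Wsucc] at ha) b (by rwa [Wsucc] at hb)
    exact this.1
  have Wneg : ∀ n, ∀ a ∈ W n, -a ∈ W n := by
    intro n
    induction n with
    | zero => exact fun a ha => hsymm U' hU'mem a ha
    | succ n ih =>
      intro a ha
      have hWV : W n ∩ V n ∈ 𝓝 (0 : X) :=
        Filter.inter_mem (Wmem n) (hV.toHasBasis.mem_of_mem trivial)
      rw [Wsucc] at ha ⊢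
      exact hsymm _ hWV a ha
  have Wanti : ∀ n, W (n + 1) ⊆ W n := by
    intro n a ha
    simpa using Wadd n a ha 0 (Wzero (n + 1))
  have Wmono : ∀ n m, n ≤ m → W m ⊆ W n := by
    intro n m hnm
    induction m with
    | zero => simpa [Nat.le_zero.mp hnm]
    | succ m ih =>
      rcases Nat.lt_or_ge n (m + 1) with hlt | hge
      · exact (Wanti m).trans (ih (Nat.lt_succ_iff.mp hlt))
      · have : n = m + 1 := le_antisymm hnm hge
        rw [this]
  have WsubV : ∀ n, W (n + 1) ⊆ V n := by
    intro n a ha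
    rw [Wsucc] at ha
    have hWV : W n ∩ V n ∈ 𝓝 (0 : X) :=
      Filter.inter_mem (Wmem n) (hV.toHasBasis.mem_of_mem trivial)
    have : a + 0 ∈ W n ∩ V n := hadd _ hWV a ha 0 (mem_of_mem_nhds (hmem _ hWV))
    simpa using this.2
  have W0sub : W 0 ⊆ U' := by
    intro a ha
    have : a + 0 ∈ U' := hadd U' hU'mem a ha 0 (Wzero 0)
    simpa using this
  -- telescoping
  have tele : ∀ z : ℕ → X, (∀ n, z (n + 1) - z n ∈ W (n + 1)) →
      ∀ n m, n ≤ m → z m - z n ∈ W n := by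
    intro z hz n m hnm
    obtain ⟨k, rfl⟩ := Nat.exists_eq_add_of_le hnm
    clear hnm
    induction k generalizing n with
    | zero => simpa using Wzero n
    | succ k ih =>
      have h1 : z (n + 1) - z n ∈ W (n + 1) := hz n
      have h2 : z (n + (k + 1)) - z (n + 1) ∈ W (n + 1) := by
        have := ih (n + 1)
        have hidx : n + 1 + k = n + (k + 1) := by omega
        rwa [hidx] at this
      have := Wadd n _ h2 _ h1
      rwa [sub_add_sub_cancel] at this
  -- the small neighborhoods for the recursive choice
  set V' : ℕ → Set X := fun m => ⋂ j ∈ Finset.range (m + 1), (T ^ j : X →ₗ[ℂ] X) ⁻¹' W (m + 1)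
    with hV'def
  have V'mem : ∀ m, V' m ∈ 𝓝 (0 : X) := by
    intro m
    refine (Filter.biInter_finset_mem _).mpr fun j _ => ?_
    exact (hcontpow j).continuousAt.preimage_mem_nhds (by simpa using Wmem (m + 1))
  -- recursive construction using dense range
  have key : ∀ (a : X) (m : ℕ), ∃ b : X, T b - a ∈ V' m := by
    intro a m
    have h1 : (fun u => u - a) ⁻¹' V' m ∈ 𝓝 a :=
      (continuous_id.sub continuous_const).continuousAt.preimage_mem_nhds
        (by simpa using V'mem m)
    obtain ⟨w, hw1, hw2⟩ := mem_closure_iff_nhds.mp (hdense a) _ h1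
    obtain ⟨b, rfl⟩ := hw2
    exact ⟨b, hw1⟩
  choose F hF using key
  set xs : ℕ → X := fun n => Nat.rec x (fun m a => F a m) n with hxsdef
  have hxs0 : xs 0 = x := rfl
  have hxs : ∀ m, T (xs (m + 1)) - xs m ∈ V' m := fun m => hF (xs m) m
  -- the double sequence
  set z : ℕ → ℕ → X := fun k n => (T ^ n : X →ₗ[ℂ] X) (xs (n + k)) with hzdef
  have hzdiff : ∀ k n, z k (n + 1) - z k n ∈ W (n + 1) := by
    intro k n
    have e1 : z k (n + 1) = (T ^ n : X →ₗ[ℂ] X) (T (xs (n + k + 1))) := by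
      have : n + 1 + k = n + k + 1 := by omega
      simp only [hzdef, this, pow_succ, Module.End.mul_apply]
    have e2 : z k (n + 1) - z k n
        = (T ^ n : X →ₗ[ℂ] X) (T (xs (n + k + 1)) - xs (n + k)) := by
      rw [e1, map_sub]
    rw [e2]
    have hmemV' : T (xs (n + k + 1)) - xs (n + k) ∈ V' (n + k) := hxs (n + k)
    have : T (xs (n + k + 1)) - xs (n + k) ∈ (T ^ n : X →ₗ[ℂ] X) ⁻¹' W (n + k + 1) := by
      have := Set.mem_iInter₂.mp hmemV' n (Finset.mem_range.mpr (by omega))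
      exact this
    exact Wmono (n + 1) (n + k + 1) (by omega) this
  -- Cauchy
  have hbasisU : (𝓤 X).HasBasis (fun _ : ℕ => True)
      (fun i => {p : X × X | p.2 - p.1 ∈ V i}) := by
    rw [uniformity_eq_comap_nhds_zero X]
    exact hV.toHasBasis.comap _
  have hcauchy : ∀ k, CauchySeq (z k) := by
    intro k
    rw [hbasisU.cauchySeq_iff']
    intro i _
    refine ⟨i + 1, fun n hn => ?_⟩
    have h1 : z k n - z k (i + 1) ∈ W (i + 1) := tele (z k) (hzdiff k) (i + 1) n hn
    have h2 : z k (i + 1) - z k n ∈ W (i + 1) := by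
      have := Wneg (i + 1) _ h1
      simpa using this
    exact WsubV i h2
  have hlim : ∀ k, ∃ y, Tendsto (z k) atTop (𝓝 y) :=
    fun k => cauchySeq_tendsto_of_complete (hcauchy k)
  choose y hy using hlim
  -- T y(k+1) = y k
  have hTy : ∀ k, T (y (k + 1)) = y k := by
    intro k
    have h1 : Tendsto (fun n => T (z (k + 1) n)) atTop (𝓝 (T (y (k + 1)))) :=
      (hcont.tendsto _).comp (hy (k + 1))
    have h2 : (fun n => T (z (k + 1) n)) = fun n => z k (n + 1) := by
      funext n
      have hidx : n + 1 + k = n + (k + 1) := by omega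
      simp only [hzdef, pow_succ', Module.End.mul_apply, hidx]
    have h3 : Tendsto (fun n => z k (n + 1)) atTop (𝓝 (y k)) :=
      (hy k).comp (tendsto_add_atTop_nat 1)
    rw [h2] at h1
    exact tendsto_nhds_unique h1 h3
  have hpow : ∀ m, (T ^ m : X →ₗ[ℂ] X) (y m) = y 0 := by
    intro m
    induction m with
    | zero => simp
    | succ m ih =>
      have : (T ^ (m + 1) : X →ₗ[ℂ] X) (y (m + 1))
          = (T ^ m : X →ₗ[ℂ] X) (T (y (m + 1))) := by
        rw [pow_succ]; simp [Module.End.mul_apply]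
      rw [this, hTy m, ih]
  -- y 0 is in the intersection
  have hyS : y 0 ∈ ⋂ n : ℕ, ((LinearMap.range (T ^ n) : Submodule ℂ X) : Set X) :=
    Set.mem_iInter.mpr fun m => ⟨y m, hpow m⟩
  -- y 0 is in t
  have hz00 : z 0 0 = x := by simp [hzdef, hxs0]
  have hclose : ∀ n, z 0 n - x ∈ W 0 := by
    intro n
    have := tele (z 0) (hzdiff 0) 0 n (Nat.zero_le n)
    rwa [hz00] at this
  have htend : Tendsto (fun n => z 0 n - x) atTop (𝓝 (y 0 - x)) :=
    (hy 0).sub tendsto_const_nhds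
  have hmemcl : y 0 - x ∈ closure (W 0) :=
    mem_closure_of_tendsto htend (Filter.Eventually.of_forall hclose)
  have hyU' : y 0 - x ∈ U' := by
    have : closure (W 0) ⊆ U' := by
      rw [← hU'closed.closure_eq]
      exact closure_mono W0sub
    exact this hmemcl
  have hyt : y 0 ∈ t := by
    have := hU'sub hyU'
    simpa using this
  exact ⟨y 0, hyt, hyS⟩
end

section
/- Let T be a linear operator on a complex vector space X. Then T is tame if and only if for every sequence (yₙ)_{n≥0} of elements of X ∖ T(X) and every sequence (cₙ)_{n≥0} of complex numbers there exists x ∈ X such that x − Σ_{j=0}^{n} cⱼ Tʲyⱼ ∈ T^{n+1}(X) for every n ≥ 0. -/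
/-- A linear operator `T` on a complex vector space `X` is tame if for every sequence
`(xₙ)` in `X` there is `x ∈ X` with `x ≡ ∑_{k≤n} Tᵏxₖ (mod Tⁿ⁺¹(X))` for all `n`. -/
def TameOp {X : Type*} [AddCommGroup X] [Module ℂ X] (T : X →ₗ[ℂ] X) : Prop :=
  ∀ y : ℕ → X, ∃ x : X, ∀ n : ℕ,
    x - ∑ k ∈ Finset.range (n + 1), (T ^ k) (y k) ∈ LinearMap.range (T ^ (n + 1))

/-- Lemma 5.1: `T` is tame if and only if for every sequence `(yₙ)` of elements of
`X ∖ T(X)` and every sequence `(cₙ)` of complex numbers there is `x ∈ X` with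
`x ≡ ∑_{j≤n} cⱼTʲyⱼ (mod Tⁿ⁺¹(X))` for all `n`. -/
theorem tame_iff_outside_range
    {X : Type*} [AddCommGroup X] [Module ℂ X] (T : X →ₗ[ℂ] X) :
    TameOp T ↔
      ∀ y : ℕ → X, (∀ n : ℕ, y n ∉ LinearMap.range T) → ∀ c : ℕ → ℂ, ∃ x : X, ∀ n : ℕ,
        x - ∑ j ∈ Finset.range (n + 1), c j • (T ^ j) (y j) ∈
          LinearMap.range (T ^ (n + 1)) := by
  classical
  constructor
  · intro hT y _ c
    obtain ⟨x, hx⟩ := hT (fun n => c n • y n)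
    refine ⟨x, fun n => ?_⟩
    simpa [map_smul] using hx n
  · intro H y
    by_cases hsurj : Function.Surjective T
    · refine ⟨0, fun n => ?_⟩
      have hs : Function.Surjective (T ^ (n + 1)) := by
        induction n with
        | zero => simpa [pow_one] using hsurj
        | succ m ih =>
          have : (T ^ (m + 2)) = (T ^ (m + 1)) * T := pow_succ T (m + 1)
          rw [this]
          exact fun v => by
            obtain ⟨w, hw⟩ := ih v
            obtain ⟨u, hu⟩ := hsurj w
            exact ⟨u, by simp [Module.End.mul_apply, hu, hw]⟩
      rcases hs (0 - ∑ k ∈ Finset.range (n + 1), (T ^ k) (y k)) with ⟨w, hw⟩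
      exact ⟨w, hw⟩
    · obtain ⟨y₀, hy₀⟩ : ∃ y₀, y₀ ∉ LinearMap.range T := by
        by_contra h
        push_neg at h
        exact hsurj fun v => LinearMap.mem_range.mp (h v)
      -- carry sequence
      let r : ℕ → X := fun n => Nat.rec (0 : X)
        (fun m rm => if h : ∃ w, T w = y m + rm then h.choose else 0) n
      have hr0 : r 0 = 0 := rfl
      have hrsucc : ∀ m, r (m + 1) =
          if h : ∃ w, T w = y m + r m then h.choose else 0 := fun m => rfl
      let z : ℕ → X := fun n => if ∃ w, T w = y n + r n then y₀ else y n + r n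
      let c : ℕ → ℂ := fun n => if ∃ w, T w = y n + r n then 0 else 1
      have hz : ∀ n, z n ∉ LinearMap.range T := by
        intro n
        by_cases h : ∃ w, T w = y n + r n
        · simpa [z, h] using hy₀
        · simp only [z, if_neg h]
          intro hc
          exact h (LinearMap.mem_range.mp hc)
      -- key identity
      have key : ∀ n, ∑ j ∈ Finset.range (n + 1), (T ^ j) (y j)
          = (∑ j ∈ Finset.range (n + 1), c j • (T ^ j) (z j)) + (T ^ (n + 1)) (r (n + 1)) := by
        intro n
        induction n with
        | zero =>
          have hr1 : r 1 = if h : ∃ w, T w = y 0 + r 0 then h.choose else 0 := hrsucc 0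
          by_cases h : ∃ w, T w = y 0 + r 0
          · have hT1 : T (r 1) = y 0 := by
              rw [hr1, dif_pos h]
              simpa [hr0] using h.choose_spec
            simp only [Finset.sum_range_one, pow_zero, pow_one, Module.End.one_apply,
              c, z, if_pos h, zero_smul, zero_add]
            exact hT1.symm
          · have hr1' : r 1 = 0 := by rw [hr1, dif_neg h]
            have h' : ¬∃ w, T w = y 0 := by simpa [hr0] using h
            simp [c, z, h', hr1', hr0]
        | succ m ih =>
          rw [Finset.sum_range_succ, Finset.sum_range_succ (fun j => c j • (T ^ j) (z j)), ih]
          by_cases h : ∃ w, T w = y (m + 1) + r (m + 1)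
          · have h1 : (T ^ (m + 2)) (r (m + 2)) =
                (T ^ (m + 1)) (y (m + 1) + r (m + 1)) := by
              rw [hrsucc (m + 1), dif_pos h, pow_succ T (m + 1), Module.End.mul_apply,
                h.choose_spec]
            simp only [c, z, if_pos h, zero_smul, add_zero]
            rw [h1]
            simp [map_add]
            abel
          · have h2 : r (m + 2) = 0 := by rw [hrsucc (m + 1), dif_neg h]
            simp only [c, z, if_neg h, one_smul, h2, map_zero, add_zero, map_add]
            abel
      obtain ⟨x, hx⟩ := H z hz c
      refine ⟨x, fun n => ?_⟩
      have hmem : (T ^ (n + 1)) (r (n + 1)) ∈ LinearMap.range (T ^ (n + 1)) :=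
        LinearMap.mem_range_self _ _
      have := Submodule.sub_mem _ (hx n) hmem
      have heq : x - ∑ j ∈ Finset.range (n + 1), c j • (T ^ j) (z j)
          - (T ^ (n + 1)) (r (n + 1))
          = x - ∑ k ∈ Finset.range (n + 1), (T ^ k) (y k) := by
        rw [key n]; abel
      rwa [heq] at this
end

section
/- Let X be a Fréchet space over ℂ and T : X → X an injective continuous linear operator such that the subspace ⋂_{n≥0} Tⁿ(X) is dense in X. Then T is tame. -/
open Filter Topology Uniformity

/-- Lemma 5.6: an injective continuous linear operator `T` on a complex Fréchet space `X`
such that `⋂ₙ Tⁿ(X)` is dense in `X` is tame. -/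
theorem tame_of_dense_iInter
    {X : Type*} [AddCommGroup X] [Module ℂ X] [UniformSpace X] [IsUniformAddGroup X]
    [ContinuousSMul ℂ X] [CompleteSpace X] [FirstCountableTopology X] [T0Space X]
    [Module ℝ X] [IsScalarTower ℝ ℂ X] [LocallyConvexSpace ℝ X]
    (T : X →ₗ[ℂ] X) (hcont : Continuous T) (hinj : Function.Injective T)
    (hdense : Dense (⋂ n : ℕ, ((LinearMap.range (T ^ n) : Submodule ℂ X) : Set X))) :
    TameOp T := by
  intro y
  -- continuity of powers
  have hcpow : ∀ j : ℕ, Continuous (T ^ j : X →ₗ[ℂ] X) := by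
    intro j
    induction j with
    | zero => simpa [Module.End.one_apply, Module.End.coe_one] using continuous_id
    | succ n ih =>
      have : ⇑(T ^ (n + 1)) = fun x => (T ^ n) (T x) := by
        funext x; rw [pow_succ, Module.End.mul_apply]
      rw [this]; exact ih.comp hcont
  obtain ⟨u, hu, hadd⟩ := IsTopologicalAddGroup.exists_antitone_basis_nhds_zero X
  have humem : ∀ i, u i ∈ 𝓝 (0 : X) := fun i => hu.toHasBasis.mem_of_mem trivial
  have hzero : ∀ i, (0 : X) ∈ u i := fun i => mem_of_mem_nhds (humem i)
  -- choose correctors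
  have key : ∀ k : ℕ, ∃ c : X, (∀ n : ℕ, c ∈ LinearMap.range (T ^ n)) ∧
      ∀ j ≤ k, (T ^ j) (y k + c) ∈ u (k + 1) := by
    intro k
    have hN : {c : X | ∀ j ≤ k, (T ^ j) (y k + c) ∈ u (k + 1)} ∈ 𝓝 (-(y k)) := by
      have h1 : ∀ j : ℕ, {c : X | (T ^ j) (y k + c) ∈ u (k + 1)} ∈ 𝓝 (-(y k)) := by
        intro j
        have hc : Continuous fun c : X => (T ^ j) (y k + c) :=
          (hcpow j).comp (continuous_const.add continuous_id)
        exact hc.continuousAt.preimage_mem_nhds (by simpa using humem (k + 1))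
      have : {c : X | ∀ j ≤ k, (T ^ j) (y k + c) ∈ u (k + 1)} =
          ⋂ j ∈ Finset.range (k + 1), {c : X | (T ^ j) (y k + c) ∈ u (k + 1)} := by
        ext c
        simp only [Set.mem_setOf_eq, Set.mem_iInter, Finset.mem_range, Nat.lt_succ_iff]
      rw [this]
      exact (Filter.biInter_finset_mem _).mpr fun j _ => h1 j
    obtain ⟨c, hc1, hc2⟩ := mem_closure_iff_nhds.mp (hdense (-(y k))) _ hN
    exact ⟨c, fun n => Set.mem_iInter.mp hc2 n, hc1⟩
  choose c hcD hcu using key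
  -- the double sequence of series terms
  set g : ℕ → ℕ → X := fun m k => (T ^ k) (y (m + k) + c (m + k)) with hg
  have hgmem : ∀ m k, g m k ∈ u (k + 1) := by
    intro m k
    have := hcu (m + k) k (Nat.le_add_left k m)
    exact hu.antitone (by omega : k + 1 ≤ m + k + 1) this
  -- partial sums over Ico stay in u m
  have sum_mem : ∀ (h : ℕ → X), (∀ k, h k ∈ u (k + 1)) →
      ∀ (d m : ℕ), (∑ k ∈ Finset.Ico m (m + d), h k) ∈ u m := by
    intro h hh d
    induction d with
    | zero => intro m; simpa using hzero m
    | succ d ih =>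
      intro m
      rw [Finset.sum_eq_sum_Ico_succ_bot (by omega)]
      have h2 : (∑ k ∈ Finset.Ico (m + 1) (m + 1 + d), h k) ∈ u (m + 1) := ih (m + 1)
      have : m + (d + 1) = m + 1 + d := by omega
      rw [this]
      exact hadd m (Set.add_mem_add (hh m) h2)
  -- Cauchy criterion
  have hbasis : (𝓤 X).HasBasis (fun _ : ℕ => True)
      fun i => (fun p : X × X => p.1 - p.2) ⁻¹' u i := by
    rw [uniformity_eq_comap_nhds_zero_swapped]
    exact hu.toHasBasis.comap _
  have hconv : ∀ m, ∃ a : X,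
      Tendsto (fun N => ∑ k ∈ Finset.range N, g m k) atTop (𝓝 a) := by
    intro m
    apply cauchySeq_tendsto_of_complete
    rw [hbasis.cauchySeq_iff']
    intro i _
    refine ⟨i, fun n hn => ?_⟩
    simp only [Set.mem_preimage]
    rw [← Finset.sum_Ico_eq_sub _ hn]
    have : (∑ k ∈ Finset.Ico i n, g m k) ∈ u i := by
      have := sum_mem (g m) (hgmem m) (n - i) i
      rwa [show i + (n - i) = n by omega] at this
    exact this
  choose L hL using hconv
  refine ⟨L 0, fun n => ?_⟩
  -- T^{n+1} (L (n+1)) = L 0 - ∑_{k ≤ n} g 0 k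
  have hTL : (T ^ (n + 1)) (L (n + 1)) = L 0 - ∑ k ∈ Finset.range (n + 1), g 0 k := by
    have h1 : Tendsto (fun N => (T ^ (n + 1)) (∑ k ∈ Finset.range N, g (n + 1) k)) atTop
        (𝓝 ((T ^ (n + 1)) (L (n + 1)))) := ((hcpow (n + 1)).tendsto _).comp (hL (n + 1))
    have heq : ∀ N, (T ^ (n + 1)) (∑ k ∈ Finset.range N, g (n + 1) k)
        = (∑ k ∈ Finset.range (n + 1 + N), g 0 k) - ∑ k ∈ Finset.range (n + 1), g 0 k := by
      intro N
      rw [map_sum, ← Finset.sum_Ico_eq_sub _ (by omega : n + 1 ≤ n + 1 + N)]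
      rw [Finset.sum_Ico_eq_sum_range]
      apply Finset.sum_congr (by congr 1; omega)
      intro k _
      show (T ^ (n + 1)) ((T ^ k) (y (n + 1 + k) + c (n + 1 + k))) =
          (T ^ (n + 1 + k)) (y (0 + (n + 1 + k)) + c (0 + (n + 1 + k)))
      rw [Nat.zero_add, pow_add T (n + 1) k, Module.End.mul_apply]
    have h2 : Tendsto (fun N => (∑ k ∈ Finset.range (n + 1 + N), g 0 k)
        - ∑ k ∈ Finset.range (n + 1), g 0 k) atTop
        (𝓝 (L 0 - ∑ k ∈ Finset.range (n + 1), g 0 k)) := by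
      apply Tendsto.sub_const
      exact (hL 0).comp (tendsto_atTop_atTop_of_monotone (fun a b hab => by omega)
        (fun b => ⟨b, by omega⟩))
    rw [show (fun N => (T ^ (n+1)) (∑ k ∈ Finset.range N, g (n+1) k)) =
      fun N => (∑ k ∈ Finset.range (n + 1 + N), g 0 k) - ∑ k ∈ Finset.range (n + 1), g 0 k
      from funext heq] at h1
    exact tendsto_nhds_unique h1 h2
  -- assemble
  have hsplit : L 0 - ∑ k ∈ Finset.range (n + 1), (T ^ k) (y k)
      = (T ^ (n + 1)) (L (n + 1)) + ∑ k ∈ Finset.range (n + 1), (T ^ k) (c k) := by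
    rw [hTL]
    have : ∀ k ∈ Finset.range (n + 1), g 0 k = (T ^ k) (y k) + (T ^ k) (c k) := by
      intro k _
      simp only [hg]
      rw [show (0 : ℕ) + k = k by omega, map_add]
    rw [Finset.sum_congr rfl this, Finset.sum_add_distrib]
    abel
  rw [hsplit]
  apply Submodule.add_mem
  · exact ⟨L (n + 1), rfl⟩
  · apply Submodule.sum_mem
    intro k _
    obtain ⟨v, hv⟩ := hcD k (n + 1)
    exact ⟨(T ^ k) v, by rw [← hv, ← Module.End.mul_apply, ← Module.End.mul_apply,
      ← pow_add, ← pow_add, Nat.add_comm]⟩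
end

section
/- Let X be a Fréchet space over ℂ and T : X → X an injective continuous linear operator such that there exists m ∈ ℕ for which the closure of T^m(X) equals the closure of T^{m+1}(X). Then T is tame. -/
/-- Proposition 5.7: an injective continuous linear operator `T` on a complex Fréchet
space `X` such that `closure(Tᵐ(X)) = closure(Tᵐ⁺¹(X))` for some `m` is tame. -/
theorem tame_of_closure_range_pow_eq
    {X : Type*} [AddCommGroup X] [Module ℂ X] [UniformSpace X] [IsUniformAddGroup X]
    [ContinuousSMul ℂ X] [CompleteSpace X] [FirstCountableTopology X] [T0Space X]
    [Module ℝ X] [IsScalarTower ℝ ℂ X] [LocallyConvexSpace ℝ X]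
    (T : X →ₗ[ℂ] X) (hcont : Continuous T) (hinj : Function.Injective T)
    (hm : ∃ m : ℕ, closure ((LinearMap.range (T ^ m) : Submodule ℂ X) : Set X) =
      closure ((LinearMap.range (T ^ (m + 1)) : Submodule ℂ X) : Set X)) :
    TameOp T := by
  obtain ⟨m, hm⟩ := hm
  intro y
  -- continuity of powers of T
  have hcpow : ∀ k : ℕ, Continuous fun u : X => (T ^ k) u := by
    intro k
    induction k with
    | zero => simpa using continuous_id'
    | succ k ih =>
      have h : ∀ u : X, (T ^ (k + 1)) u = T ((T ^ k) u) := by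
        intro u; rw [pow_succ', Module.End.mul_apply]
      simpa [h] using hcont.comp' ih
  set R : ℕ → Set X := fun k => ((LinearMap.range (T ^ k) : Submodule ℂ X) : Set X) with hRdef
  have hRmono : ∀ {q r : ℕ}, q ≤ r → R r ⊆ R q := by
    intro q r hqr u hu
    obtain ⟨v, rfl⟩ := hu
    have h : T ^ r = T ^ q * T ^ (r - q) := by rw [← pow_add]; congr 1; omega
    exact ⟨(T ^ (r - q)) v, by rw [h, Module.End.mul_apply]⟩
  have himg : ∀ k, T '' R k = R (k + 1) := by
    intro k; ext u; constructor
    · rintro ⟨v, ⟨w, rfl⟩, rfl⟩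
      exact ⟨w, by rw [pow_succ', Module.End.mul_apply]⟩
    · rintro ⟨w, rfl⟩
      exact ⟨(T ^ k) w, ⟨w, rfl⟩, by rw [pow_succ', Module.End.mul_apply]⟩
  have hm' : closure (R m) = closure (R (m + 1)) := hm
  have hclos : ∀ r, m ≤ r → closure (R r) = closure (R m) := by
    intro r hr
    induction r, hr using Nat.le_induction with
    | base => rfl
    | succ r hr ih =>
      refine subset_antisymm (closure_mono (hRmono (by omega))) ?_
      have h1 : R m ⊆ closure (R r) := ih ▸ subset_closure
      have h2 : R (m + 1) ⊆ closure (R (r + 1)) := by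
        rw [← himg m, ← himg r]
        exact (Set.image_mono h1).trans (image_closure_subset_closure_image hcont)
      calc closure (R m) = closure (R (m + 1)) := hm'
        _ ⊆ closure (closure (R (r + 1))) := closure_mono h2
        _ = closure (R (r + 1)) := closure_closure
  have hdense : ∀ r, R m ⊆ closure (R r) := by
    intro r
    rcases le_total r m with h | h
    · exact (hRmono h).trans subset_closure
    · rw [hclos r h]; exact subset_closure
  -- a countable antitone basis of neighborhoods of 0
  obtain ⟨V, hVbasis⟩ := (nhds (0 : X)).exists_antitone_basis
  have hVmem : ∀ j, V j ∈ nhds (0 : X) := fun j => hVbasis.toHasBasis.mem_of_mem trivial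
  -- a "halving" sequence of open neighborhoods of 0
  have hUstep : ∀ (j : ℕ) (W : Set X), IsOpen W → (0 : X) ∈ W →
      ∃ W' : Set X, (IsOpen W' ∧ (0 : X) ∈ W') ∧
        (∀ a ∈ W', ∀ b ∈ W', a + b ∈ W) ∧ W' ⊆ V j := by
    intro j W hWo hW0
    obtain ⟨W₁, hW₁o, hW₁0, hW₁⟩ := exists_open_nhds_zero_half (hWo.mem_nhds hW0)
    refine ⟨W₁ ∩ interior (V j), ⟨hW₁o.inter isOpen_interior,
      ⟨hW₁0, mem_interior_iff_mem_nhds.2 (hVmem j)⟩⟩,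
      fun a ha b hb => hW₁ a ha.1 b hb.1, fun a ha => interior_subset ha.2⟩
  choose f hfprop hfadd hfsub using hUstep
  let Useq : ℕ → {W : Set X // IsOpen W ∧ (0 : X) ∈ W} := fun n =>
    Nat.rec ⟨interior (V 0), isOpen_interior, mem_interior_iff_mem_nhds.2 (hVmem 0)⟩
      (fun j p => ⟨f (j + 1) p.1 p.2.1 p.2.2, hfprop (j + 1) p.1 p.2.1 p.2.2⟩) n
  let U : ℕ → Set X := fun n => (Useq n).1
  have hUopen : ∀ j, IsOpen (U j) := fun j => (Useq j).2.1
  have hU0 : ∀ j, (0 : X) ∈ U j := fun j => (Useq j).2.2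
  have hUV : ∀ j, U j ⊆ V j := by
    intro j
    cases j with
    | zero => exact interior_subset
    | succ j => exact hfsub (j + 1) (Useq j).1 (Useq j).2.1 (Useq j).2.2
  have hUadd : ∀ j, ∀ a ∈ U (j + 1), ∀ b ∈ U (j + 1), a + b ∈ U j :=
    fun j => hfadd (j + 1) (Useq j).1 (Useq j).2.1 (Useq j).2.2
  -- sums of controlled sequences stay small
  have hsum : ∀ (g : ℕ → X) (o len q : ℕ), (∀ j, q ≤ j → j < q + len → g j ∈ U (o + j + 1)) →
      ∑ j ∈ Finset.Ico q (q + len), g j ∈ U (o + q) := by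
    intro g o len
    induction len with
    | zero => intro q _; simpa using hU0 (o + q)
    | succ len ih =>
      intro q hg
      have hqlt : q < q + (len + 1) := by omega
      rw [Finset.sum_eq_sum_Ico_succ_bot hqlt]
      have h1 : g q ∈ U (o + q + 1) := hg q le_rfl hqlt
      have h2 : ∑ j ∈ Finset.Ico (q + 1) ((q + 1) + len), g j ∈ U (o + (q + 1)) :=
        ih (q + 1) (fun j hj hj' => hg j (by omega) (by omega))
      have h3 : (q + 1) + len = q + (len + 1) := by omega
      rw [h3] at h2
      exact hUadd (o + q) _ h1 _ h2
  -- the data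
  set b : ℕ → X := fun n => (T ^ m) (y (n + m + 1)) with hbdef
  have hbR : ∀ n, b n ∈ R m := fun n => ⟨y (n + m + 1), rfl⟩
  -- key approximation step
  have key : ∀ (j : ℕ) (z : X), z ∈ R m → ∃ z' : X, z' ∈ R m ∧
      ∀ i, i ≤ j → (T ^ i) (b j + z - T z') ∈ U (j + 1) := by
    intro j z hz
    have he : b j + z ∈ R m := by
      have : b j + z ∈ LinearMap.range (T ^ m) :=
        (LinearMap.range (T ^ m)).add_mem (hbR j) hz
      exact this
    set O : Set X := ⋂ i ∈ Set.Iic j, (fun u => (T ^ i) (b j + z - u)) ⁻¹' U (j + 1) with hOdef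
    have hOopen : IsOpen O :=
      (Set.finite_Iic j).isOpen_biInter fun i _ =>
        (hUopen (j + 1)).preimage ((hcpow i).comp (continuous_const.sub continuous_id))
    have hOmem : b j + z ∈ O := by
      refine Set.mem_iInter₂.2 fun i _ => ?_
      simpa using hU0 (j + 1)
    obtain ⟨u, huO, huR⟩ :=
      mem_closure_iff_nhds.1 (hdense (m + j + 1) he) O (hOopen.mem_nhds hOmem)
    obtain ⟨v, rfl⟩ := huR
    refine ⟨(T ^ (m + j)) v, ⟨(T ^ j) v, by rw [← Module.End.mul_apply, ← pow_add]⟩, ?_⟩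
    intro i hi
    have hTv : T ((T ^ (m + j)) v) = (T ^ (m + j + 1)) v := by
      rw [pow_succ', Module.End.mul_apply]
    rw [hTv]
    exact Set.mem_iInter₂.1 huO i (Set.mem_Iic.2 hi)
  choose f' hf'R hf'prop using key
  let cseq : ℕ → {z : X // z ∈ R m} := fun n =>
    Nat.rec ⟨0, (LinearMap.range (T ^ m)).zero_mem⟩
      (fun j p => ⟨f' j p.1 p.2, hf'R j p.1 p.2⟩) n
  let c : ℕ → X := fun n => (cseq n).1
  set b' : ℕ → X := fun j => b j + c j - T (c (j + 1)) with hb'def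
  have hb' : ∀ j, ∀ i, i ≤ j → (T ^ i) (b' j) ∈ U (j + 1) :=
    fun j => hf'prop j (cseq j).1 (cseq j).2
  -- partial sums
  set F : ℕ → ℕ → X := fun n N => ∑ i ∈ Finset.range N, (T ^ i) (b' (n + i)) with hFdef
  have hbasis : (uniformity X).HasBasis (fun s : Set X => s ∈ nhds (0 : X))
      (fun s => (fun p : X × X => p.2 - p.1) ⁻¹' s) := by
    rw [uniformity_eq_comap_nhds_zero X]
    exact (nhds (0 : X)).basis_sets.comap _
  have hcauchy : ∀ n, CauchySeq (F n) := by
    intro n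
    rw [hbasis.cauchySeq_iff]
    intro s hs
    have hnegs : (fun x : X => -x) ⁻¹' s ∈ nhds (0 : X) := by
      have h := continuous_neg.continuousAt (x := (0 : X))
      simpa using h.preimage_mem_nhds (by simpa using hs)
    obtain ⟨k, -, hk⟩ := hVbasis.toHasBasis.mem_iff.1 (Filter.inter_mem hs hnegs)
    refine ⟨k, fun p hp q hq => ?_⟩
    have hdiff : ∀ {p q : ℕ}, k ≤ p → p ≤ q → F n q - F n p ∈ s ∩ (fun x : X => -x) ⁻¹' s := by
      intro p q hkp hpq
      have h1 : F n q - F n p = ∑ j ∈ Finset.Ico p q, (T ^ j) (b' (n + j)) :=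
        (Finset.sum_Ico_eq_sub _ hpq).symm
      have h2 : ∑ j ∈ Finset.Ico p (p + (q - p)), (T ^ j) (b' (n + j)) ∈ U (n + p) := by
        refine hsum _ n (q - p) p fun j hj hj' => ?_
        exact hb' (n + j) j (by omega)
      rw [show p + (q - p) = q from by omega] at h2
      rw [h1]
      exact hk (hVbasis.antitone (by omega : k ≤ n + p) (hUV (n + p) h2))
    rcases le_total p q with h | h
    · exact (hdiff hp h).1
    · have := (hdiff hq h).2
      simpa [neg_sub] using this
  have hlim : ∀ n, ∃ L : X, Filter.Tendsto (F n) Filter.atTop (nhds L) :=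
    fun n => cauchySeq_tendsto_of_complete (hcauchy n)
  choose Q' hQ' using hlim
  -- recurrence for partial sums
  have hFrec : ∀ n N, F n (N + 1) = b' n + T (F (n + 1) N) := by
    intro n N
    simp only [hFdef]
    rw [Finset.sum_range_succ' (fun i => (T ^ i) (b' (n + i))) N]
    have h1 : ∀ i, (T ^ (i + 1)) (b' (n + (i + 1))) = T ((T ^ i) (b' ((n + 1) + i))) := by
      intro i
      rw [pow_succ', Module.End.mul_apply, show n + (i + 1) = (n + 1) + i from by omega]
    simp only [h1, pow_zero, Module.End.one_apply, Nat.add_zero]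
    rw [← map_sum, add_comm]
  have hQrec : ∀ n, Q' n - T (Q' (n + 1)) = b' n := by
    intro n
    have h1 : Filter.Tendsto (fun N => F n (N + 1)) Filter.atTop (nhds (Q' n)) :=
      (hQ' n).comp (Filter.tendsto_add_atTop_nat 1)
    have h2 : Filter.Tendsto (fun N => b' n + T (F (n + 1) N)) Filter.atTop
        (nhds (b' n + T (Q' (n + 1)))) :=
      Filter.Tendsto.const_add _ ((hcont.tendsto _).comp (hQ' (n + 1)))
    have h3 : Q' n = b' n + T (Q' (n + 1)) :=
      tendsto_nhds_unique (by simpa only [hFrec n] using h1) h2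
    rw [h3]; abel
  -- build the solution of the recurrence
  set p : ℕ → X := fun n => ∑ j ∈ Finset.range m, (T ^ j) (y (n + j + 1)) with hpdef
  have hptel : ∀ n, p n - T (p (n + 1)) = y (n + 1) - (T ^ m) (y (n + m + 1)) := by
    intro n
    have h1 : (∑ j ∈ Finset.range (m + 1), (T ^ j) (y (n + j + 1)))
        = p n + (T ^ m) (y (n + m + 1)) := Finset.sum_range_succ _ m
    have h2 : (∑ j ∈ Finset.range (m + 1), (T ^ j) (y (n + j + 1)))
        = T (p (n + 1)) + y (n + 1) := by
      rw [Finset.sum_range_succ' (fun j => (T ^ j) (y (n + j + 1))) m]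
      have h3 : ∀ j, (T ^ (j + 1)) (y (n + (j + 1) + 1)) = T ((T ^ j) (y ((n + 1) + j + 1))) := by
        intro j
        rw [pow_succ', Module.End.mul_apply, show n + (j + 1) + 1 = (n + 1) + j + 1 from by omega]
      simp only [h3, pow_zero, Module.End.one_apply, Nat.add_zero]
      rw [← map_sum]
    have h4 := h1.symm.trans h2
    rw [sub_eq_sub_iff_add_eq_add]
    rw [h4]; abel
  set w : ℕ → X := fun n => p n + (Q' n - c n) with hwdef
  have hwrec : ∀ n, w n - T (w (n + 1)) = y (n + 1) := by
    intro n
    have h0 : w n - T (w (n + 1)) =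
        (p n - T (p (n + 1))) + ((Q' n - T (Q' (n + 1))) - (c n - T (c (n + 1)))) := by
      simp only [hwdef, map_add, map_sub]; abel
    rw [h0, hptel n, hQrec n]
    have hbn : b' n = (T ^ m) (y (n + m + 1)) + c n - T (c (n + 1)) := rfl
    rw [hbn]
    abel
  refine ⟨y 0 + T (w 0), ?_⟩
  have hx : ∀ n, (y 0 + T (w 0)) - ∑ k ∈ Finset.range (n + 1), (T ^ k) (y k)
      = (T ^ (n + 1)) (w n) := by
    intro n
    induction n with
    | zero => simp [pow_one]
    | succ n ih =>
      rw [Finset.sum_range_succ, ← sub_sub, ih]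
      have hwn : w n = y (n + 1) + T (w (n + 1)) := sub_eq_iff_eq_add.1 (hwrec n)
      rw [hwn, map_add]
      rw [show (T ^ (n + 1 + 1)) (w (n + 1)) = (T ^ (n + 1)) (T (w (n + 1))) from by
        rw [pow_succ, Module.End.mul_apply]]
      abel
  intro n
  rw [hx n]
  exact LinearMap.mem_range_self _ _
end

section
/- Let T be an injective bounded linear operator on a complex Banach space X. Then T is tame if and only if there exists m ∈ ℕ such that the closure of T^m(X) equals the closure of T^{m+1}(X). -/
open Filter Metric Finset

section Aux

variable {X : Type*} [NormedAddCommGroup X] [NormedSpace ℂ X]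

private lemma mem_closure_range_pow_smul (T : X →ₗ[ℂ] X) (n : ℕ) (c : ℂ) (w : X)
    (hw : w ∈ closure ((LinearMap.range (T ^ n) : Submodule ℂ X) : Set X)) :
    c • w ∈ closure ((LinearMap.range (T ^ n) : Submodule ℂ X) : Set X) := by
  rw [← Submodule.topologicalClosure_coe] at hw ⊢
  exact (LinearMap.range (T ^ n)).topologicalClosure.smul_mem c hw

private lemma mem_closure_range_pow_neg (T : X →ₗ[ℂ] X) (n : ℕ) (w : X)
    (hw : w ∈ closure ((LinearMap.range (T ^ n) : Submodule ℂ X) : Set X)) :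
    -w ∈ closure ((LinearMap.range (T ^ n) : Submodule ℂ X) : Set X) := by
  rw [← Submodule.topologicalClosure_coe] at hw ⊢
  exact (LinearMap.range (T ^ n)).topologicalClosure.neg_mem hw

/-- The key "wildness" estimate in the forward direction. -/
private lemma norm_ge_of_sub_mem_closure (T : X →ₗ[ℂ] X) (m : ℕ) (a : X)
    (c : ℝ) (hc : 0 < c) (z : X)
    (hz : (T ^ m) ((c : ℂ) • a) - z ∈
      closure ((LinearMap.range (T ^ (m + 1)) : Submodule ℂ X) : Set X)) :
    c * infDist ((T ^ m) a)
      (closure ((LinearMap.range (T ^ (m + 1)) : Submodule ℂ X) : Set X)) ≤ ‖z‖ := by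
  set C := closure ((LinearMap.range (T ^ (m + 1)) : Submodule ℂ X) : Set X)
  set w := (T ^ m) ((c : ℂ) • a) - z with hw
  have hcC : (0:ℝ) < c := hc
  have hcne : (c : ℂ) ≠ 0 := by exact_mod_cast hc.ne'
  have hmemw : ((c : ℂ))⁻¹ • w ∈ C := mem_closure_range_pow_smul T (m+1) _ _ hz
  have hdist : infDist ((T ^ m) a) C ≤ dist ((T ^ m) a) (((c : ℂ))⁻¹ • w) :=
    infDist_le_dist_of_mem hmemw
  have hz' : z = (c : ℂ) • ((T ^ m) a - ((c : ℂ))⁻¹ • w) := by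
    rw [smul_sub, smul_inv_smul₀ hcne, hw, map_smul]
    abel
  have hnorm : ‖z‖ = c * ‖(T ^ m) a - ((c : ℂ))⁻¹ • w‖ := by
    rw [hz', norm_smul, Complex.norm_real, Real.norm_eq_abs, abs_of_pos hc]
  rw [hnorm]
  rw [dist_eq_norm] at hdist
  exact mul_le_mul_of_nonneg_left hdist hc.le

end Aux

/-- Existence of the recursively rescaled sequence used in the forward direction. -/
private lemma exists_wild_seq {X : Type*} [NormedAddCommGroup X] [NormedSpace ℂ X]
    (T : X →ₗ[ℂ] X) (a : ℕ → X) (co : ℕ → ℝ → ℝ) :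
    ∃ y : ℕ → X, ∀ n : ℕ,
      y (n + 1) = ((co (n + 1) ‖∑ k ∈ Finset.range (n + 1), (T ^ k) (y k)‖ : ℝ) : ℂ) •
        a (n + 1) := by
  let q : ℕ → X × X := fun n => Nat.rec (motive := fun _ => X × X)
    (((co 0 0 : ℝ) : ℂ) • a 0, (T ^ 0) (((co 0 0 : ℝ) : ℂ) • a 0))
    (fun n p =>
      (((co (n + 1) ‖p.2‖ : ℝ) : ℂ) • a (n + 1),
        p.2 + (T ^ (n + 1)) (((co (n + 1) ‖p.2‖ : ℝ) : ℂ) • a (n + 1)))) n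
  have hS : ∀ n, (q n).2 = ∑ k ∈ Finset.range (n + 1), (T ^ k) ((q k).1) := by
    intro n
    induction n with
    | zero =>
      show (q 0).2 = ∑ k ∈ Finset.range 1, (T ^ k) ((q k).1)
      rw [Finset.sum_range_one]
      rfl
    | succ n ih =>
      rw [Finset.sum_range_succ, ← ih]
  refine ⟨fun n => (q n).1, fun n => ?_⟩
  show (q (n + 1)).1 =
    ((co (n + 1) ‖∑ k ∈ Finset.range (n + 1), (T ^ k) ((q k).1)‖ : ℝ) : ℂ) • a (n + 1)
  rw [← hS n]

/-- Theorem 5.8: an injective bounded linear operator `T` on a complex Banach space `X`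
is tame if and only if `closure(Tᵐ(X)) = closure(Tᵐ⁺¹(X))` for some `m ∈ ℕ`. -/
theorem tame_iff_closure_range_pow_eq
    {X : Type*} [NormedAddCommGroup X] [NormedSpace ℂ X] [CompleteSpace X]
    (T : X →ₗ[ℂ] X) (hcont : Continuous T) (hinj : Function.Injective T) :
    TameOp T ↔
      ∃ m : ℕ, closure ((LinearMap.range (T ^ m) : Submodule ℂ X) : Set X) =
        closure ((LinearMap.range (T ^ (m + 1)) : Submodule ℂ X) : Set X) := by
  constructor
  · -- Tame → ranges stabilize
    intro htame
    by_contra hc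
    push_neg at hc
    -- for every `m` there is `a` with `T^m a` outside the closure of the next range
    have hex : ∀ m : ℕ, ∃ a : X,
        (T ^ m) a ∉ closure ((LinearMap.range (T ^ (m + 1)) : Submodule ℂ X) : Set X) := by
      intro m
      by_contra h
      push_neg at h
      apply hc m
      apply Set.Subset.antisymm
      · refine closure_minimal ?_ isClosed_closure
        rintro z ⟨w, rfl⟩
        exact h w
      · refine closure_mono ?_
        rintro z ⟨w, rfl⟩
        exact ⟨T w, by rw [pow_succ]; rfl⟩
    choose a ha using hex
    set d : ℕ → ℝ := fun k =>
      infDist ((T ^ k) (a k))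
        (closure ((LinearMap.range (T ^ (k + 1)) : Submodule ℂ X) : Set X)) with hd_def
    have hd : ∀ k, 0 < d k := by
      intro k
      have h0 : ((0:X)) ∈ closure ((LinearMap.range (T ^ (k + 1)) : Submodule ℂ X) : Set X) :=
        subset_closure (Submodule.zero_mem _)
      exact (isClosed_closure.notMem_iff_infDist_pos ⟨0, h0⟩).1 (ha k)
    -- recursively defined sequence (yₙ, Sₙ)
    set co : ℕ → ℝ → ℝ := fun k B => ((k : ℝ) + 1 + B) / d k with hco_def
    have hco_pos : ∀ k B, 0 ≤ B → 0 < co k B := by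
      intro k B hB
      apply div_pos _ (hd k)
      positivity
    obtain ⟨y, hy_spec⟩ := exists_wild_seq T a co
    obtain ⟨x, hx⟩ := htame y
    have hbig : ∀ n : ℕ, (n : ℝ) + 2 ≤ ‖x‖ := by
      intro n
      set S : X := ∑ k ∈ Finset.range (n + 1), (T ^ k) (y k) with hS_def
      set z : X := x - S with hz_def
      set c : ℝ := co (n + 1) ‖S‖ with hc_def
      have hcpos : 0 < c := hco_pos (n + 1) _ (norm_nonneg _)
      have hy1 : y (n + 1) = ((c : ℝ) : ℂ) • a (n + 1) := hy_spec n
      have hmem : (T ^ (n + 1)) (((c : ℝ) : ℂ) • a (n + 1)) - z ∈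
          closure ((LinearMap.range (T ^ (n + 2)) : Submodule ℂ X) : Set X) := by
        have h1 : z - (T ^ (n + 1)) (y (n + 1)) =
            x - ∑ k ∈ Finset.range (n + 2), (T ^ k) (y k) := by
          rw [hz_def, hS_def,
            show (∑ k ∈ Finset.range (n + 2), (T ^ k) (y k)) =
              ∑ k ∈ Finset.range (n + 1), (T ^ k) (y k) + (T ^ (n + 1)) (y (n + 1)) from
              Finset.sum_range_succ _ (n + 1)]
          abel
        have h2 : z - (T ^ (n + 1)) (y (n + 1)) ∈
            closure ((LinearMap.range (T ^ (n + 2)) : Submodule ℂ X) : Set X) := by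
          rw [h1]
          exact subset_closure (hx (n + 1))
        have h3 := mem_closure_range_pow_neg T (n + 2) _ h2
        rw [neg_sub, hy1] at h3
        exact h3
      have hkey := norm_ge_of_sub_mem_closure T (n + 1) (a (n + 1)) c hcpos z hmem
      have hcd : c * d (n + 1) = ((n : ℝ) + 1) + 1 + ‖S‖ := by
        rw [hc_def, hco_def]
        push_cast
        exact div_mul_cancel₀ _ (hd (n + 1)).ne'
      have hkey' : c * d (n + 1) ≤ ‖z‖ := hkey
      rw [hcd] at hkey'
      have hzn : ‖z‖ ≤ ‖x‖ + ‖S‖ := by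
        rw [hz_def]
        exact norm_sub_le _ _
      have := hkey'
      linarith
    obtain ⟨n, hn⟩ := exists_nat_gt ‖x‖
    have := hbig n
    linarith
  · -- ranges stabilize → tame
    rintro ⟨m, hm⟩ y
    set u : ℕ → X := fun n => y (n + 1) with hu_def
    set T' : X →L[ℂ] X := ⟨T, hcont⟩ with hT'_def
    set K : ℝ := max 1 ‖T'‖ with hK_def
    have hK1 : (1:ℝ) ≤ K := le_max_left _ _
    have hK0 : (0:ℝ) < K := lt_of_lt_of_le one_pos hK1
    have hTK : ∀ w : X, ‖T w‖ ≤ K * ‖w‖ := fun w =>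
      le_trans (T'.le_opNorm w) (mul_le_mul_of_nonneg_right (le_max_right _ _) (norm_nonneg _))
    have hTpow : ∀ (k : ℕ) (w : X), ‖(T ^ k) w‖ ≤ K ^ k * ‖w‖ := by
      intro k
      induction k with
      | zero => intro w; simp
      | succ k ih =>
        intro w
        have h1 : (T ^ (k + 1)) w = (T ^ k) (T w) := by rw [pow_succ]; rfl
        rw [h1]
        calc ‖(T ^ k) (T w)‖ ≤ K ^ k * ‖T w‖ := ih (T w)
          _ ≤ K ^ k * (K * ‖w‖) :=
            mul_le_mul_of_nonneg_left (hTK w) (pow_nonneg hK0.le k)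
          _ = K ^ (k + 1) * ‖w‖ := by ring
    -- density of range T^{m+1} below T^m
    have hdense : ∀ (b : X) (ε : ℝ), 0 < ε → ∃ s : X, ‖(T ^ m) b + (T ^ (m + 1)) s‖ < ε := by
      intro b ε hε
      have hb : -((T ^ m) b) ∈
          closure ((LinearMap.range (T ^ (m + 1)) : Submodule ℂ X) : Set X) := by
        rw [← hm]
        exact subset_closure (Submodule.neg_mem _ ⟨b, rfl⟩)
      rw [Metric.mem_closure_iff] at hb
      obtain ⟨w, hw1, hw2⟩ := hb ε hε
      obtain ⟨s, rfl⟩ := hw1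
      refine ⟨s, ?_⟩
      rw [dist_eq_norm] at hw2
      have : -((T ^ m) b) - (T ^ (m + 1)) s = -((T ^ m) b + (T ^ (m + 1)) s) := by abel
      rw [this, norm_neg] at hw2
      exact hw2
    set ε : ℕ → ℝ := fun N => ((2 * K) ^ N)⁻¹ with hε_def
    have hεpos : ∀ N, 0 < ε N := by
      intro N
      have : (0:ℝ) < 2 * K := by linarith
      positivity
    choose sel hsel using fun (N : ℕ) (b : X) => hdense b (ε N) (hεpos N)
    set t : ℕ → X := fun N => Nat.rec (motive := fun _ => X) 0
      (fun N tN => sel N (u N - tN)) N with ht_def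
    have ht : ∀ N, ‖(T ^ m) (u N + T (t (N + 1)) - t N)‖ < ε N := by
      intro N
      have h := hsel N (u N - t N)
      have h1 : t (N + 1) = sel N (u N - t N) := rfl
      have h2 : (T ^ m) (u N + T (t (N + 1)) - t N) =
          (T ^ m) (u N - t N) + (T ^ (m + 1)) (sel N (u N - t N)) := by
        rw [h1]
        have h3 : u N + T (sel N (u N - t N)) - t N =
            (u N - t N) + T (sel N (u N - t N)) := by abel
        rw [h3, map_add, pow_succ, Module.End.mul_apply]
      rw [h2]
      exact h
    set V : ℕ → ℕ → X := fun N n =>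
      (∑ j ∈ Finset.range (N - n), (T ^ j) (u (n + j))) + (T ^ (N - n)) (t N) with hV_def
    have hVrec : ∀ N n, n < N → V N n = u n + T (V N (n + 1)) := by
      intro N n hn
      have hk : N - n = (N - (n + 1)) + 1 := by omega
      set k := N - (n + 1) with hk_def
      rw [hV_def]
      simp only
      rw [hk]
      rw [Finset.sum_range_succ']
      simp only [add_zero, pow_zero, Module.End.one_apply]
      rw [map_add, map_sum]
      have hsum : ∀ j ∈ Finset.range k,
          (T ^ (j + 1)) (u (n + (j + 1))) = T ((T ^ j) (u (n + 1 + j))) := by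
        intro j _
        rw [pow_succ']
        have : n + (j + 1) = n + 1 + j := by omega
        rw [this]
        rfl
      rw [Finset.sum_congr rfl hsum]
      have hpow : (T ^ (k + 1)) (t N) = T ((T ^ k) (t N)) := by
        rw [pow_succ']; rfl
      rw [hpow]
      abel
    have hVdiff : ∀ N n, n ≤ N →
        V (N + 1) n - V N n = (T ^ (N - n)) (u N + T (t (N + 1)) - t N) := by
      intro N n hn
      have hk : N + 1 - n = (N - n) + 1 := by omega
      rw [hV_def]
      simp only
      rw [hk, Finset.sum_range_succ]
      have hNn : n + (N - n) = N := by omega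
      rw [hNn]
      have hpow : (T ^ (N - n + 1)) (t (N + 1)) = (T ^ (N - n)) (T (t (N + 1))) := by
        rw [pow_succ]; rfl
      rw [hpow, map_sub, map_add]
      abel
    have hVbound : ∀ n N, n + m ≤ N → ‖V (N + 1) n - V N n‖ ≤ (1 / 2 : ℝ) ^ N := by
      intro n N hnm
      have hn : n ≤ N := by omega
      rw [hVdiff N n hn]
      set δ := u N + T (t (N + 1)) - t N with hδ
      have hsplit : N - n = (N - n - m) + m := by omega
      set k := N - n - m with hk_def
      have h1 : (T ^ (N - n)) δ = (T ^ k) ((T ^ m) δ) := by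
        rw [hsplit, pow_add]
        rfl
      rw [h1]
      calc ‖(T ^ k) ((T ^ m) δ)‖ ≤ K ^ k * ‖(T ^ m) δ‖ := hTpow k _
        _ ≤ K ^ k * ε N :=
          mul_le_mul_of_nonneg_left (ht N).le (pow_nonneg hK0.le k)
        _ ≤ K ^ N * ε N := by
          apply mul_le_mul_of_nonneg_right _ (hεpos N).le
          exact pow_le_pow_right₀ hK1 (by omega)
        _ = (1 / 2 : ℝ) ^ N := by
          rw [hε_def]
          simp only
          rw [mul_pow, mul_inv, one_div, inv_pow]
          rw [← mul_assoc, mul_comm (K ^ N), mul_assoc]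
          rw [mul_inv_cancel₀ (pow_pos hK0 N).ne']
          rw [mul_one]
    -- Cauchy ⇒ convergence of V · n
    have hconv : ∀ n, ∃ L, Tendsto (fun N => V N n) atTop (nhds L) := by
      intro n
      apply cauchySeq_tendsto_of_complete
      apply cauchySeq_of_dist_le_of_summable (fun N => dist (V N n) (V (N + 1) n))
        (fun N => le_rfl)
      rw [← summable_nat_add_iff (n + m)]
      refine Summable.of_nonneg_of_le (f := fun N => (1 / 2 : ℝ) ^ (N + (n + m)))
        (fun _ => dist_nonneg) (fun N => ?_) ?_
      · rw [dist_eq_norm']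
        exact hVbound n (N + (n + m)) (by omega)
      · have : (fun N : ℕ => (1 / 2 : ℝ) ^ (N + (n + m))) =
            fun N : ℕ => (1 / 2 : ℝ) ^ N * (1 / 2 : ℝ) ^ (n + m) := by
          funext N; rw [pow_add]
        rw [this]
        exact summable_geometric_two.mul_right _
    choose v hv using hconv
    have hvrec : ∀ n, v n = u n + T (v (n + 1)) := by
      intro n
      have h1 : Tendsto (fun N => u n + T (V N (n + 1))) atTop (nhds (u n + T (v (n + 1)))) :=
        tendsto_const_nhds.add ((hcont.tendsto _).comp (hv (n + 1)))
      have heq : ∀ᶠ N in atTop, u n + T (V N (n + 1)) = V N n :=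
        eventually_atTop.2 ⟨n + 1, fun N hN => (hVrec N n hN).symm⟩
      exact tendsto_nhds_unique (hv n) (h1.congr' heq)
    refine ⟨y 0 + T (v 0), ?_⟩
    have hxS : ∀ n, y 0 + T (v 0) - ∑ k ∈ Finset.range (n + 1), (T ^ k) (y k) =
        (T ^ (n + 1)) (v n) := by
      intro n
      induction n with
      | zero =>
        simp only [zero_add, Finset.sum_range_one, pow_zero, Module.End.one_apply, pow_one]
        abel
      | succ n ih =>
        rw [Finset.sum_range_succ, ← sub_sub, ih]
        have hyu : y (n + 1) = u n := rfl
        rw [hyu, ← map_sub]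
        have : v n - u n = T (v (n + 1)) := by rw [hvrec n]; abel
        rw [this]
        rw [pow_succ]
        rfl
    intro n
    exact ⟨v n, (hxS n).symm⟩
end

section
/- Let X and Y be Fréchet spaces over ℂ, let (Hₙ)_{n≥0} be a strictly decreasing sequence of closed finite-codimensional linear subspaces of X with ⋂_{n≥0} Hₙ = {0}, and let G : X → Y be a (not necessarily continuous) invertible linear operator such that G(Hₙ) is closed in Y for every n ≥ 0. Then G is continuous. -/
open Filter Topology Set Function Uniformity Pointwise

theorem aux_closure_image_nhds
    {E F : Type*} [AddCommGroup E] [Module ℂ E] [TopologicalSpace E] [IsTopologicalAddGroup E]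
    [ContinuousSMul ℂ E]
    [AddCommGroup F] [Module ℂ F] [TopologicalSpace F] [IsTopologicalAddGroup F]
    [ContinuousSMul ℂ F] [BaireSpace F]
    (f : E →ₗ[ℂ] F) (hsurj : Function.Surjective f)
    {U : Set E} (hU : U ∈ 𝓝 (0 : E)) : closure (f '' U) ∈ 𝓝 (0 : F) := by
  obtain ⟨V, hV, hVU⟩ := exists_nhds_zero_half hU
  have hnegV : (fun x : E => -x) ⁻¹' V ∈ 𝓝 (0 : E) :=
    (continuous_neg.continuousAt (x := (0 : E))).preimage_mem_nhds (by simpa using hV)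
  set V' : Set E := V ∩ (fun x : E => -x) ⁻¹' V with hV'def
  have hV' : V' ∈ 𝓝 (0 : E) := inter_mem hV hnegV
  set g : ℕ → Set F := fun n => ((n + 1 : ℕ) : ℂ) • closure (f '' V') with hgdef
  have hcontain : ∀ a ∈ f '' V', ∀ b ∈ f '' V', a - b ∈ f '' U := by
    rintro a ⟨v₁, hv₁, rfl⟩ b ⟨v₂, hv₂, rfl⟩
    refine ⟨v₁ - v₂, ?_, (map_sub f v₁ v₂)⟩
    have := hVU v₁ hv₁.1 (-v₂) hv₂.2
    simpa [sub_eq_add_neg] using this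
  have hc0 : ∀ n : ℕ, ((n + 1 : ℕ) : ℂ) ≠ 0 := fun n =>
    Nat.cast_ne_zero.2 (Nat.succ_ne_zero n)
  have hcover : (⋃ n : ℕ, g n) = univ := by
    apply eq_univ_of_forall
    intro y
    obtain ⟨x, rfl⟩ := hsurj y
    obtain ⟨r, hr⟩ := absorbs_iff_norm.1 ((absorbent_nhds_zero (𝕜 := ℂ) hV') x)
    obtain ⟨n, hn⟩ := exists_nat_ge r
    have hx : x ∈ ((n + 1 : ℕ) : ℂ) • V' := by
      have hnorm : r ≤ ‖((n + 1 : ℕ) : ℂ)‖ := by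
        rw [Complex.norm_natCast]
        push_cast
        linarith
      exact singleton_subset_iff.1 (hr _ hnorm)
    obtain ⟨v, hv, rfl⟩ := hx
    refine mem_iUnion.2 ⟨n, ?_⟩
    rw [map_smul]
    exact smul_mem_smul_set (subset_closure (mem_image_of_mem _ hv))
  have hclosed : ∀ n : ℕ, IsClosed (g n) := fun n =>
    isClosed_closure.smul_of_ne_zero (hc0 n)
  obtain ⟨n, z, hz⟩ := nonempty_interior_of_iUnion_of_closed hclosed hcover
  rw [hgdef] at hz
  simp only [interior_smul₀ (hc0 n)] at hz
  obtain ⟨w, hw, rfl⟩ := hz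
  have hopen : IsOpen ((fun y : F => y + w) ⁻¹' interior (closure (f '' V'))) :=
    isOpen_interior.preimage (continuous_id.add continuous_const)
  have h0 : (0 : F) ∈ (fun y : F => y + w) ⁻¹' interior (closure (f '' V')) := by
    simpa using hw
  refine mem_of_superset (hopen.mem_nhds h0) ?_
  intro t ht
  have h1 : t + w ∈ closure (f '' V') := interior_subset ht
  have h2 : w ∈ closure (f '' V') := interior_subset hw
  have h3 : (t + w) - w ∈ closure (f '' U) := map_mem_closure₂ continuous_sub h1 h2 hcontain
  simpa using h3

theorem aux_image_nhds
    {E F : Type*} [AddCommGroup E] [Module ℂ E] [UniformSpace E] [IsUniformAddGroup E]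
    [ContinuousSMul ℂ E] [CompleteSpace E] [FirstCountableTopology E]
    [AddCommGroup F] [Module ℂ F] [UniformSpace F] [IsUniformAddGroup F]
    [ContinuousSMul ℂ F] [CompleteSpace F] [FirstCountableTopology F] [T2Space F]
    (f : E →ₗ[ℂ] F) (hf : Continuous f) (hsurj : Function.Surjective f)
    {U : Set E} (hU : U ∈ 𝓝 (0 : E)) : f '' U ∈ 𝓝 (0 : F) := by
  haveI : (𝓤 F).IsCountablyGenerated := by
    rw [uniformity_eq_comap_nhds_zero F]; infer_instance
  haveI : BaireSpace F := inferInstance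
  obtain ⟨B, hB⟩ := (𝓝 (0 : E)).exists_antitone_basis
  obtain ⟨W, hW⟩ := (𝓝 (0 : F)).exists_antitone_basis
  obtain ⟨C, hCmem, hCclosed, hCU⟩ := exists_mem_nhds_isClosed_subset hU
  have step : ∀ S : Set E, S ∈ 𝓝 (0 : E) → ∀ n : ℕ,
      ∃ T : Set E, T ∈ 𝓝 (0 : E) ∧ (∀ a ∈ T, -a ∈ T) ∧
        (∀ a ∈ T, ∀ b ∈ T, a + b ∈ S) ∧ T ⊆ B n := by
    intro S hS n
    obtain ⟨T₀, hT₀, hadd⟩ := exists_nhds_zero_half (inter_mem hS (hB.mem n))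
    have hnegT : (fun x : E => -x) ⁻¹' T₀ ∈ 𝓝 (0 : E) :=
      (continuous_neg.continuousAt (x := (0 : E))).preimage_mem_nhds (by simpa using hT₀)
    refine ⟨T₀ ∩ (fun x : E => -x) ⁻¹' T₀, inter_mem hT₀ hnegT, ?_, ?_, ?_⟩
    · rintro a ⟨h1, h2⟩; exact ⟨h2, by simpa using h1⟩
    · intro a ha b hb; exact (hadd a ha.1 b hb.1).1
    · intro a ha
      have h0 : (0 : E) ∈ T₀ := mem_of_mem_nhds hT₀
      have := (hadd a ha.1 0 h0).2
      simpa using this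
  let Vch : {S : Set E // S ∈ 𝓝 (0 : E)} → ℕ → {S : Set E // S ∈ 𝓝 (0 : E)} :=
    fun p n => ⟨Classical.choose (step p.1 p.2 n), (Classical.choose_spec (step p.1 p.2 n)).1⟩
  let Vs : ℕ → {S : Set E // S ∈ 𝓝 (0 : E)} :=
    fun n => Nat.rec (motive := fun _ => {S : Set E // S ∈ 𝓝 (0 : E)})
      ⟨C, hCmem⟩ (fun n p => Vch p (n + 1)) n
  let V : ℕ → Set E := fun n => (Vs n).1
  have hVmem : ∀ n, V n ∈ 𝓝 (0 : E) := fun n => (Vs n).2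
  have hVspec : ∀ n : ℕ, (∀ a ∈ V (n + 1), -a ∈ V (n + 1)) ∧
      (∀ a ∈ V (n + 1), ∀ b ∈ V (n + 1), a + b ∈ V n) ∧ V (n + 1) ⊆ B (n + 1) := fun n =>
    (Classical.choose_spec (step (Vs n).1 (Vs n).2 (n + 1))).2
  have hV0 : V 0 = C := rfl
  have hcl : ∀ n, closure (f '' V n) ∈ 𝓝 (0 : F) := fun n =>
    aux_closure_image_nhds f hsurj (hVmem n)
  suffices hsuff : closure (f '' V 1) ⊆ f '' U from mem_of_superset (hcl 1) hsuff
  intro y hy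
  have key : ∀ n : ℕ, ∀ z : F, z ∈ closure (f '' V (n + 1)) →
      ∃ x : E, x ∈ V (n + 1) ∧ z - f x ∈ closure (f '' V (n + 2)) ∧ z - f x ∈ W n := by
    intro n z hz
    have hN : closure (f '' V (n + 2)) ∩ W n ∈ 𝓝 (0 : F) := inter_mem (hcl (n + 2)) (hW.mem n)
    have hphi : ContinuousAt (fun u : F => z - u) z :=
      (continuous_const.sub continuous_id).continuousAt
    have ht : (fun u : F => z - u) ⁻¹' (closure (f '' V (n + 2)) ∩ W n) ∈ 𝓝 z :=
      hphi.preimage_mem_nhds (by simpa using hN)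
    obtain ⟨u, hu1, hu2⟩ := mem_closure_iff_nhds.1 hz _ ht
    obtain ⟨x, hx, rfl⟩ := hu2
    exact ⟨x, hx, hu1.1, hu1.2⟩
  let next : ∀ n : ℕ, {z : F // z ∈ closure (f '' V (n + 1))} →
      E × {z : F // z ∈ closure (f '' V (n + 2))} :=
    fun n p => ⟨Classical.choose (key n p.1 p.2),
      ⟨p.1 - f (Classical.choose (key n p.1 p.2)),
        (Classical.choose_spec (key n p.1 p.2)).2.1⟩⟩
  let ys : ∀ n : ℕ, {z : F // z ∈ closure (f '' V (n + 1))} :=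
    fun n => Nat.rec (motive := fun n => {z : F // z ∈ closure (f '' V (n + 1))}) ⟨y, hy⟩
      (fun n p => (next n p).2) n
  let x : ℕ → E := fun n => (next n (ys n)).1
  have hx_mem : ∀ n, x n ∈ V (n + 1) := fun n =>
    (Classical.choose_spec (key n (ys n).1 (ys n).2)).1
  have hy_rec : ∀ n, ((ys (n + 1) : F)) = (ys n : F) - f (x n) := fun n => rfl
  have hy_W : ∀ n, ((ys (n + 1) : F)) ∈ W n := fun n =>
    (Classical.choose_spec (key n (ys n).1 (ys n).2)).2.2
  let s : ℕ → E := fun n => ∑ k ∈ Finset.range n, x k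
  have hs_succ : ∀ n, s (n + 1) = s n + x n := fun n => Finset.sum_range_succ _ _
  have hfs : ∀ n, f (s n) = y - (ys n : F) := by
    intro n
    induction n with
    | zero => simp [s, ys]
    | succ n ih =>
      rw [hs_succ n, map_add, ih, hy_rec n]
      abel
  have hsum : ∀ k n : ℕ, s (n + k) - s n ∈ V n := by
    intro k
    induction k with
    | zero => intro n; simpa using mem_of_mem_nhds (hVmem n)
    | succ k ih =>
      intro n
      have h1 : s ((n + 1) + k) - s (n + 1) ∈ V (n + 1) := ih (n + 1)
      have h3 := (hVspec n).2.1 _ h1 _ (hx_mem n)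
      have heq : s (n + (k + 1)) - s n = (s ((n + 1) + k) - s (n + 1)) + x n := by
        have hidx : n + (k + 1) = (n + 1) + k := by omega
        rw [hidx, hs_succ n]
        abel
      rw [heq]; exact h3
  have hbasisE : (𝓤 E).HasBasis (fun U : Set E => U ∈ 𝓝 (0 : E))
      (fun U => (fun p : E × E => p.2 - p.1) ⁻¹' U) := by
    rw [uniformity_eq_comap_nhds_zero E]
    exact (𝓝 (0 : E)).basis_sets.comap _
  have hcauchy : CauchySeq s := by
    rw [hbasisE.cauchySeq_iff]
    intro T hT
    obtain ⟨k, -, hk⟩ := hB.1.mem_iff.1 hT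
    have hVT : ∀ j, k + 1 ≤ j → V j ⊆ T := by
      intro j hj
      refine subset_trans ?_ hk
      obtain ⟨t, rfl⟩ := Nat.exists_eq_add_of_le hj
      have hidx : k + 1 + t = (k + t) + 1 := by omega
      rw [hidx]
      exact subset_trans (hVspec (k + t)).2.2 (hB.2 (by omega))
    have hdiff : ∀ m n : ℕ, k + 1 ≤ m → m ≤ n → s n - s m ∈ T := by
      intro m n hm hmn
      obtain ⟨t, rfl⟩ := Nat.exists_eq_add_of_le hmn
      exact hVT m hm (hsum t m)
    have hdiff' : ∀ m n : ℕ, k + 1 ≤ m → m ≤ n → s m - s n ∈ T := by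
      intro m n hm hmn
      obtain ⟨t, rfl⟩ := Nat.exists_eq_add_of_le hmn
      have h1 : s (m + t) - s m ∈ V m := hsum t m
      have h2 : s m - s (m + t) = -(s (m + t) - s m) := by abel
      rw [h2]
      cases m with
      | zero => exact absurd hm (by omega)
      | succ j => exact hVT (j + 1) hm ((hVspec j).1 _ h1)
    refine ⟨k + 1, fun m hm n hn => ?_⟩
    simp only [mem_preimage]
    rcases le_total m n with h | h
    · exact hdiff m n hm h
    · exact hdiff' n m hn h
  obtain ⟨l, hl⟩ := cauchySeq_tendsto_of_complete hcauchy
  have hsC : ∀ n, s n ∈ C := by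
    intro n
    have h1 : s (0 + n) - s 0 ∈ V 0 := hsum n 0
    rw [hV0] at h1
    simpa [s] using h1
  have hlC : l ∈ C := hCclosed.mem_of_tendsto hl (Filter.Eventually.of_forall hsC)
  have hy0 : Tendsto (fun n => ((ys n : F))) atTop (𝓝 (0 : F)) := by
    rw [← tendsto_add_atTop_iff_nat 1]
    exact hW.tendsto hy_W
  have hfl : Tendsto (fun n => f (s n)) atTop (𝓝 (f l)) := (hf.tendsto l).comp hl
  have hfl' : Tendsto (fun n => f (s n)) atTop (𝓝 y) := by
    have hfun : (fun n => f (s n)) = fun n => y - (ys n : F) := funext hfs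
    rw [hfun]
    simpa using (tendsto_const_nhds (x := y) (f := atTop (α := ℕ))).sub hy0
  exact ⟨l, hCU hlC, tendsto_nhds_unique hfl hfl'⟩

/-- Lemma 7.1: let `X`, `Y` be complex Fréchet spaces, `(Hₙ)` a strictly decreasing
sequence of closed finite-codimensional linear subspaces of `X` with `⋂ₙ Hₙ = {0}`, and
`G : X → Y` an invertible linear operator such that `G(Hₙ)` is closed in `Y` for every
`n`. Then `G` is continuous. -/
theorem continuous_of_image_closed
    {X : Type*} [AddCommGroup X] [Module ℂ X] [UniformSpace X] [IsUniformAddGroup X]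
    [ContinuousSMul ℂ X] [CompleteSpace X] [FirstCountableTopology X] [T0Space X]
    [Module ℝ X] [IsScalarTower ℝ ℂ X] [LocallyConvexSpace ℝ X]
    {Y : Type*} [AddCommGroup Y] [Module ℂ Y] [UniformSpace Y] [IsUniformAddGroup Y]
    [ContinuousSMul ℂ Y] [CompleteSpace Y] [FirstCountableTopology Y] [T0Space Y]
    [Module ℝ Y] [IsScalarTower ℝ ℂ Y] [LocallyConvexSpace ℝ Y]
    (H : ℕ → Submodule ℂ X) (hanti : StrictAnti H)
    (hclosed : ∀ n, IsClosed ((H n : Submodule ℂ X) : Set X))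
    (hcodim : ∀ n, FiniteDimensional ℂ (X ⧸ H n))
    (hinter : (⨅ n, H n) = ⊥)
    (G : X ≃ₗ[ℂ] Y) (hG : ∀ n, IsClosed (G '' ((H n : Submodule ℂ X) : Set X))) :
    Continuous G := by
  classical
  set K : ℕ → Submodule ℂ Y := fun n => (H n).map (G : X →ₗ[ℂ] Y) with hK
  have hKclosed : ∀ n, IsClosed ((K n : Submodule ℂ Y) : Set Y) := by
    intro n
    have hset : ((K n : Submodule ℂ Y) : Set Y) = ⇑G '' ((H n : Submodule ℂ X) : Set X) := by
      simp [hK, Submodule.map_coe]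
    rw [hset]; exact hG n
  -- continuity of the compositions with quotient maps
  have hcomp : ∀ n, Continuous (fun x : X => (K n).mkQ (G x)) := by
    intro n
    haveI : IsClosed ((H n : Submodule ℂ X) : Set X) := hclosed n
    haveI : IsClosed ((K n : Submodule ℂ Y) : Set Y) := hKclosed n
    haveI : FiniteDimensional ℂ (X ⧸ H n) := hcodim n
    have hle : H n ≤ (K n).comap (G : X →ₗ[ℂ] Y) := by
      intro x hx
      exact Submodule.mem_comap.2 (Submodule.mem_map_of_mem hx)
    set q : (X ⧸ H n) →ₗ[ℂ] (Y ⧸ K n) := Submodule.mapQ (H n) (K n) (G : X →ₗ[ℂ] Y) hle with hq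
    have hqc : Continuous q := q.continuous_of_finiteDimensional
    have hfun : (fun x : X => (K n).mkQ (G x)) = fun x => q ((H n).mkQ x) := by
      funext x
      simp [hq, Submodule.mkQ_apply, Submodule.mapQ_apply]
    rw [hfun]
    exact hqc.comp continuous_quot_mk
  -- the graph of G is closed
  have hgraph : IsClosed (((G : X →ₗ[ℂ] Y).graph : Submodule ℂ (X × Y)) : Set (X × Y)) := by
    rw [← isSeqClosed_iff_isClosed]
    intro u p hu hup
    have hmem : ∀ k, (u k).2 = G ((u k).1) := fun k => (LinearMap.mem_graph_iff _ _).1 (hu k)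
    have h1 : Tendsto (fun k => (u k).1) atTop (𝓝 p.1) := (continuous_fst.tendsto p).comp hup
    have h2 : Tendsto (fun k => (u k).2) atTop (𝓝 p.2) := (continuous_snd.tendsto p).comp hup
    have hpn : ∀ n, p.2 - G p.1 ∈ K n := by
      intro n
      haveI : IsClosed ((K n : Submodule ℂ Y) : Set Y) := hKclosed n
      have hmkc : Continuous ((K n).mkQ : Y → Y ⧸ K n) := continuous_quot_mk
      have hq1 : Tendsto (fun k => (K n).mkQ ((u k).2)) atTop (𝓝 ((K n).mkQ p.2)) :=
        (hmkc.tendsto _).comp h2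
      have hq2 : Tendsto (fun k => (K n).mkQ (G ((u k).1))) atTop (𝓝 ((K n).mkQ (G p.1))) :=
        ((hcomp n).tendsto _).comp h1
      have heqfun : (fun k => (K n).mkQ ((u k).2)) = (fun k => (K n).mkQ (G ((u k).1))) := by
        funext k; rw [hmem k]
      rw [heqfun] at hq1
      have huniq := tendsto_nhds_unique hq1 hq2
      rwa [← sub_eq_zero, ← map_sub, Submodule.mkQ_apply, Submodule.Quotient.mk_eq_zero] at huniq
    have hz : G.symm (p.2 - G p.1) ∈ ⨅ n, H n := by
      rw [Submodule.mem_iInf]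
      intro n
      obtain ⟨w, hw, hweq⟩ := hpn n
      have hww : G.symm (p.2 - G p.1) = w := by
        rw [← hweq]; simp
      rw [hww]; exact hw
    rw [hinter, Submodule.mem_bot] at hz
    have hz2 : p.2 - G p.1 = 0 := by
      have := congrArg G hz
      simpa using this
    exact (LinearMap.mem_graph_iff _ _).2 (by simpa [sub_eq_zero] using hz2)
  set Γ : Submodule ℂ (X × Y) := (G : X →ₗ[ℂ] Y).graph with hΓ
  haveI : IsUniformAddGroup Γ := inferInstanceAs (IsUniformAddGroup Γ.toAddSubgroup)
  haveI : FirstCountableTopology Γ := inferInstanceAs (FirstCountableTopology (Γ : Set (X × Y)))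
  haveI : CompleteSpace Γ := hgraph.completeSpace_coe
  let π : Γ →ₗ[ℂ] X := (LinearMap.fst ℂ X Y).comp Γ.subtype
  have hπc : Continuous π := continuous_fst.comp continuous_subtype_val
  have hπbij : Function.Bijective π := by
    constructor
    · intro a b hab
      have ha : ((a : X × Y)).2 = G (((a : X × Y)).1) := (LinearMap.mem_graph_iff _ _).1 a.2
      have hb : ((b : X × Y)).2 = G (((b : X × Y)).1) := (LinearMap.mem_graph_iff _ _).1 b.2
      have hab1 : ((a : X × Y)).1 = ((b : X × Y)).1 := hab
      apply Subtype.ext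
      exact Prod.ext hab1 (by rw [ha, hb, hab1])
    · intro x
      exact ⟨⟨(x, G x), (LinearMap.mem_graph_iff _ _).2 rfl⟩, rfl⟩
  let e : Γ ≃ₗ[ℂ] X := LinearEquiv.ofBijective π hπbij
  have hesymm : ∀ x : X, ((e.symm x : X × Y)) = (x, G x) := by
    intro x
    have hmem : (x, G x) ∈ Γ := (LinearMap.mem_graph_iff _ _).2 rfl
    have h1 : e (e.symm x) = x := e.apply_symm_apply x
    have h2 : e ⟨(x, G x), hmem⟩ = x := rfl
    have h3 : e.symm x = ⟨(x, G x), hmem⟩ := e.injective (h1.trans h2.symm)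
    rw [h3]
  have hcont : Continuous (e.symm : X → Γ) := by
    apply continuous_of_continuousAt_zero (e.symm : X ≃ₗ[ℂ] Γ)
    show Tendsto (e.symm : X → Γ) (𝓝 0) (𝓝 (e.symm 0))
    rw [map_zero, tendsto_def]
    intro S hS
    have himg : (e.symm : X → Γ) ⁻¹' S = (⇑e) '' S := (e.toEquiv.image_eq_preimage_symm S).symm
    rw [himg]
    exact aux_image_nhds π hπc hπbij.2 hS
  have hfinal : Continuous (fun x : X => ((e.symm x : X × Y)).2) :=
    (continuous_snd.comp continuous_subtype_val).comp hcont
  have hGfun : ⇑G = fun x : X => ((e.symm x : X × Y)).2 := by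
    funext x; rw [hesymm x]
  rw [show (⇑G : X → Y) = fun x : X => ((e.symm x : X × Y)).2 from hGfun]
  exact hfinal
end
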